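/- arXiv:2109.06338 — 11 statements merged into one kernel-verified Lean document; each statement's English description precedes it below -/
import Mathlib

section
/- Let X be an infinite Tychonoff space, E a Banach space, and T: C_p(X) → E a linear operator that is sequentially continuous from the topology of pointwise convergence to the weak topology of E. Then for every sequence (U_n) of pairwise disjoint nonempty open subsets of X there exists N such that T(f) = 0 for all n ≥ N and all continuous f: X → ℝ with support contained in U_n. -/
open Filter Topology

theorem stmt0 {X : Type*} [TopologicalSpace X] [T35Space X] [Infinite X]
    {E : Type*} [NormedAddCommGroup E] [NormedSpace ℝ E] [CompleteSpace E]
    (T : C(X, ℝ) →ₗ[ℝ] E)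
    (hT : ∀ (f : ℕ → C(X, ℝ)) (g : C(X, ℝ)),
      (∀ x, Tendsto (fun n => f n x) atTop (𝓝 (g x))) →
      ∀ φ : E →L[ℝ] ℝ, Tendsto (fun n => φ (T (f n))) atTop (𝓝 (φ (T g))))
    (U : ℕ → Set X) (hUopen : ∀ n, IsOpen (U n)) (hUne : ∀ n, (U n).Nonempty)
    (hUdisj : Pairwise (Function.onFun Disjoint U)) :
    ∃ N : ℕ, ∀ n ≥ N, ∀ f : C(X, ℝ), Function.support f ⊆ U n → T f = 0 := by
  by_contra hcon
  push_neg at hcon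
  -- extract for each N some n N ≥ N and f N supported in U (n N) with T (f N) ≠ 0
  choose n hn f hsupp hTf using hcon
  -- scale so that ‖c N • T (f N)‖ = N
  set c : ℕ → ℝ := fun N => N / ‖T (f N)‖ with hc
  set F : ℕ → C(X, ℝ) := fun N => c N • f N with hF
  -- F tends to 0 pointwise
  have hpt : ∀ x, Tendsto (fun N => F N x) atTop (𝓝 ((0 : C(X, ℝ)) x)) := by
    intro x
    have hev : ∀ᶠ N in atTop, F N x = 0 := by
      by_cases hx : ∃ N₀, f N₀ x ≠ 0
      · obtain ⟨N₀, hN₀⟩ := hx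
        filter_upwards [eventually_gt_atTop (n N₀)] with N hN
        have hfN : f N x = 0 := by
          by_contra h0
          have hx1 : x ∈ U (n N₀) := hsupp N₀ hN₀
          have hx2 : x ∈ U (n N) := hsupp N h0
          have : n N = n N₀ := by
            by_contra hne
            exact (hUdisj hne).le_bot ⟨hx2, hx1⟩
          have := hn N
          omega
        simp only [hF, ContinuousMap.smul_apply, hfN, smul_eq_mul, mul_zero]
      · push_neg at hx
        filter_upwards [] with N
        simp only [hF, ContinuousMap.smul_apply, hx N, smul_eq_mul, mul_zero]
    simp only [ContinuousMap.zero_apply]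
    exact Tendsto.congr' (by filter_upwards [hev] with N h using h.symm) tendsto_const_nhds
  -- hence for every φ, φ (T (F N)) → 0, so the doubles are pointwise bounded
  have hweak := hT F 0 hpt
  have hbdd : ∀ φ : E →L[ℝ] ℝ, ∃ C, ∀ N,
      ‖(NormedSpace.inclusionInDoubleDualLi ℝ (E := E) (T (F N))) φ‖ ≤ C := by
    intro φ
    have h := (hweak φ).norm
    have hb := h.bddAbove_range
    obtain ⟨C, hC⟩ := hb
    exact ⟨C, fun N => hC ⟨N, rfl⟩⟩
  obtain ⟨C', hC'⟩ := banach_steinhaus (g := fun N =>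
      (NormedSpace.inclusionInDoubleDualLi ℝ (E := E) (T (F N)) : StrongDual ℝ E →L[ℝ] ℝ))
    (fun φ => hbdd φ)
  -- but ‖T (F N)‖ = N, contradiction
  have hnorm : ∀ N : ℕ, (N : ℝ) ≤ C' := by
    intro N
    have h1 : ‖T (F N)‖ = (N : ℝ) := by
      have : T (F N) = c N • T (f N) := by simp [hF, map_smul]
      rw [this, norm_smul, hc]
      have hne : ‖T (f N)‖ ≠ 0 := norm_ne_zero_iff.mpr (hTf N)
      rw [Real.norm_eq_abs, abs_div, abs_norm]
      rw [div_mul_cancel₀ _ hne]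
      simp
    calc (N : ℝ) = ‖T (F N)‖ := h1.symm
      _ = ‖(NormedSpace.inclusionInDoubleDualLi ℝ (E := E) (T (F N)) :
            StrongDual ℝ E →L[ℝ] ℝ)‖ :=
        ((NormedSpace.inclusionInDoubleDualLi ℝ (E := E)).norm_map (T (F N))).symm
      _ ≤ C' := hC' N
  exact absurd (hnorm ⌈C' + 1⌉₊) (by push_cast; nlinarith [Nat.le_ceil (C' + 1)])
end

section
/- Let X be a compact Hausdorff space and E a Banach space. Suppose T: C(X) → E is a linear operator, sequentially continuous from the topology of pointwise convergence to the weak topology of E, such that every point t ∈ X has an open neighborhood U with T(f) = 0 for all continuous f supported in U. Then T = 0. -/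
open Filter Topology

theorem stmt1 {X : Type*} [TopologicalSpace X] [CompactSpace X] [T2Space X]
    {E : Type*} [NormedAddCommGroup E] [NormedSpace ℝ E] [CompleteSpace E]
    (T : C(X, ℝ) →ₗ[ℝ] E)
    (hT : ∀ (f : ℕ → C(X, ℝ)) (g : C(X, ℝ)),
      (∀ x, Tendsto (fun n => f n x) atTop (𝓝 (g x))) →
      ∀ φ : E →L[ℝ] ℝ, Tendsto (fun n => φ (T (f n))) atTop (𝓝 (φ (T g))))
    (hloc : ∀ t : X, ∃ U : Set X, IsOpen U ∧ t ∈ U ∧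
      ∀ f : C(X, ℝ), Function.support f ⊆ U → T f = 0) :
    T = 0 := by
  choose U hUo hUm hU0 using hloc
  obtain ⟨p, hp⟩ := PartitionOfUnity.exists_isSubordinate (s := (Set.univ : Set X))
    isClosed_univ U hUo (fun x _ => Set.mem_iUnion.2 ⟨x, hUm x⟩)
  have hfin : {i | (Function.support (p i)).Nonempty}.Finite :=
    p.locallyFinite.finite_nonempty_of_compact
  ext f
  have key : ∀ i : X, T ((p i : C(X, ℝ)) * f) = 0 := by
    intro i
    refine hU0 i _ ?_
    intro x hx
    apply hp i
    apply subset_tsupport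
    intro h0
    simp only [ContinuousMap.coe_mul, Function.mem_support, Pi.mul_apply] at hx
    exact hx (by simp [h0])
  have hsum : f = ∑ i ∈ hfin.toFinset, (p i : C(X, ℝ)) * f := by
    ext x
    have h1 : ∑ᶠ i, p i x = 1 := p.sum_eq_one (Set.mem_univ x)
    have h2 : ∑ i ∈ hfin.toFinset, p i x = 1 := by
      rw [← h1]
      refine (finsum_eq_finset_sum_of_support_subset _ ?_).symm
      intro i hi
      simp only [Set.Finite.coe_toFinset, Set.mem_setOf_eq]
      exact ⟨x, hi⟩
    simp only [ContinuousMap.coe_sum, Finset.sum_apply, ContinuousMap.coe_mul,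
      Pi.mul_apply]
    rw [← Finset.sum_mul, h2, one_mul]
  simp only [LinearMap.zero_apply]
  rw [hsum, map_sum]
  exact Finset.sum_eq_zero fun i _ => key i
end

section
/- Let X be any Tychonoff space and E a Banach space. Then every linear operator T: C_p(X) → E_w that is sequentially continuous has finite-dimensional range. -/
open Filter Topology Metric Set

set_option linter.unusedSectionVars false
set_option linter.unnecessarySimpa false
set_option maxHeartbeats 1000000
set_option synthInstance.maxHeartbeats 400000

section JNFree

variable {E : Type*} [NormedAddCommGroup E] [NormedSpace ℝ E] [CompleteSpace E]

lemma norm_bdd_of_weak_null (y : ℕ → E)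
    (h : ∀ φ : E →L[ℝ] ℝ, Tendsto (fun n => φ (y n)) atTop (𝓝 0)) :
    ∃ C, ∀ n, ‖y n‖ ≤ C := by
  have hb : ∀ φ : StrongDual ℝ E, ∃ C, ∀ n : ℕ,
      ‖(NormedSpace.inclusionInDoubleDual ℝ E (y n)) φ‖ ≤ C := by
    intro φ
    obtain ⟨C, hC⟩ := ((h φ).norm.bddAbove_range)
    exact ⟨C, fun n => hC ⟨n, rfl⟩⟩
  obtain ⟨C, hC⟩ := banach_steinhaus (fun φ => hb φ)
  refine ⟨C, fun n => ?_⟩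
  have hiso : ‖NormedSpace.inclusionInDoubleDual ℝ E (y n)‖ = ‖y n‖ :=
    (NormedSpace.inclusionInDoubleDualLi ℝ (E := E)).norm_map (y n)
  rw [← hiso]
  exact hC n

variable {Z : Type*} [TopologicalSpace Z]

/-- `T` kills every function supported inside `W`. -/
def NullOn (T : C(Z, ℝ) →ₗ[ℝ] E) (W : Set Z) : Prop :=
  ∀ g : C(Z, ℝ), (∀ x, x ∉ W → g x = 0) → T g = 0

/-- every open neighbourhood of `x` supports a function not killed by `T`. -/
def BadPt (T : C(Z, ℝ) →ₗ[ℝ] E) (x : Z) : Prop :=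
  ∀ U : Set Z, IsOpen U → x ∈ U → ¬ NullOn T U

omit [CompleteSpace E] in
lemma nullOn_mono {T : C(Z, ℝ) →ₗ[ℝ] E} {U V : Set Z} (h : U ⊆ V) (hV : NullOn T V) :
    NullOn T U :=
  fun g hg => hV g (fun x hx => hg x (fun hU => hx (h hU)))

lemma no_disjoint_active (T : C(Z, ℝ) →ₗ[ℝ] E)
    (hT : ∀ (f : ℕ → C(Z, ℝ)) (g : C(Z, ℝ)),
      (∀ x, Tendsto (fun n => f n x) atTop (𝓝 (g x))) →
      ∀ φ : E →L[ℝ] ℝ, Tendsto (fun n => φ (T (f n))) atTop (𝓝 (φ (T g))))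
    (U : ℕ → Set Z) (hd : ∀ m n, m ≠ n → Disjoint (U m) (U n))
    (hg : ∀ n, ∃ g : C(Z, ℝ), (∀ x, x ∉ U n → g x = 0) ∧ T g ≠ 0) : False := by
  choose g hg0 hg1 using hg
  set h : ℕ → C(Z, ℝ) := fun n => ((n : ℝ) / ‖T (g n)‖) • g n with hh
  have hnorm : ∀ n, ‖T (h n)‖ = n := by
    intro n
    have h1 : ‖T (g n)‖ ≠ 0 := norm_ne_zero_iff.2 (hg1 n)
    have h2 : (0 : ℝ) ≤ (n : ℝ) / ‖T (g n)‖ := by positivity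
    rw [hh]
    simp only [map_smul, norm_smul, Real.norm_eq_abs, abs_of_nonneg h2]
    field_simp
  have hnull : ∀ x : Z, Tendsto (fun n => h n x) atTop (𝓝 ((0 : C(Z, ℝ)) x)) := by
    intro x
    have hev : ∀ᶠ n in atTop, h n x = 0 := by
      rcases em (∃ m, x ∈ U m) with ⟨m, hm⟩ | hnone
      · filter_upwards [eventually_gt_atTop m] with n hn
        have hx : x ∉ U n := fun hx => (Set.disjoint_left.1 (hd m n hn.ne)) hm hx
        simp [hh, hg0 n x hx]
      · push_neg at hnone
        filter_upwards with n
        simp [hh, hg0 n x (hnone n)]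
    simpa using Tendsto.congr' (hev.mono fun n hn => hn.symm) tendsto_const_nhds
  obtain ⟨C, hC⟩ := norm_bdd_of_weak_null (fun n => T (h n)) (fun φ => by
    simpa using hT h 0 hnull φ)
  obtain ⟨n, hn⟩ := exists_nat_gt C
  exact absurd (hC n) (by rw [hnorm n]; exact not_le.2 hn)

lemma nullOn_empty (T : C(Z, ℝ) →ₗ[ℝ] E) : NullOn T ∅ := by
  intro g hg
  have : g = 0 := ContinuousMap.ext fun x => hg x (notMem_empty x)
  simp [this]

end JNFree

section MetricSection

variable {E : Type*} [NormedAddCommGroup E] [NormedSpace ℝ E] [CompleteSpace E]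
variable {Z : Type*} [MetricSpace Z]

lemma bad_finite (T : C(Z, ℝ) →ₗ[ℝ] E)
    (hT : ∀ (f : ℕ → C(Z, ℝ)) (g : C(Z, ℝ)),
      (∀ x, Tendsto (fun n => f n x) atTop (𝓝 (g x))) →
      ∀ φ : E →L[ℝ] ℝ, Tendsto (fun n => φ (T (f n))) atTop (𝓝 (φ (T g)))) :
    {x : Z | BadPt T x}.Finite := by
  by_contra hinf
  rw [← Set.not_infinite, not_not] at hinf
  set S := {x : Z | BadPt T x} with hS
  have step : ∀ O : Set Z, IsOpen O → (S ∩ O).Infinite →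
      ∃ p : Set Z × Set Z, IsOpen p.1 ∧ (S ∩ p.1).Nonempty ∧ p.1 ⊆ O ∧
        (IsOpen p.2 ∧ (S ∩ p.2).Infinite) ∧ p.2 ⊆ O ∧ Disjoint p.1 p.2 := by
    intro O hO hSO
    obtain ⟨a, haS, haO⟩ := hSO.nonempty
    obtain ⟨ε, hε, hball⟩ := Metric.isOpen_iff.1 hO a haO
    by_cases hacc : ∀ δ : ℝ, 0 < δ → (S ∩ O ∩ ball a δ).Infinite
    · obtain ⟨c, hc, hca⟩ := ((hacc (ε/2) (by positivity)).diff (Set.finite_singleton a)).nonempty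
      have hca' : c ≠ a := by simpa using hca
      set r := dist a c with hr
      have hrpos : 0 < r := dist_pos.2 (fun hac => hca' hac.symm)
      have hrlt : r < ε/2 := by
        have := hc.2
        rw [mem_ball] at this
        rw [hr, dist_comm]
        exact this
      refine ⟨⟨ball c (r/3), O ∩ ball a (r/3)⟩, isOpen_ball,
        ⟨c, hc.1.1, mem_ball_self (by positivity)⟩, ?_,
        ⟨hO.inter isOpen_ball, ?_⟩, inter_subset_left, ?_⟩
      · intro y hy
        apply hball
        rw [mem_ball] at hy ⊢
        have h3 : dist y a ≤ dist y c + dist c a := dist_triangle y c a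
        have h4 : dist c a = r := by rw [hr, dist_comm]
        nlinarith
      · have h5 := hacc (r/3) (by positivity)
        rwa [show S ∩ (O ∩ ball a (r/3)) = S ∩ O ∩ ball a (r/3) from (inter_assoc _ _ _).symm]
      · rw [Set.disjoint_left]
        rintro y hy1 ⟨-, hy2⟩
        rw [mem_ball] at hy1 hy2
        have h6 : dist a c ≤ dist a y + dist y c := dist_triangle a y c
        rw [dist_comm a y] at h6
        have hrr : r = dist a c := hr
        linarith
    · push_neg at hacc
      obtain ⟨δ, hδ, hfin⟩ := hacc
      set ρ := min δ ε with hρdef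
      have hρ : 0 < ρ := lt_min hδ hε
      refine ⟨⟨ball a (ρ/2), O ∩ (closedBall a (ρ/2))ᶜ⟩, isOpen_ball,
        ⟨a, haS, mem_ball_self (by positivity)⟩, ?_,
        ⟨hO.inter Metric.isClosed_closedBall.isOpen_compl, ?_⟩, inter_subset_left, ?_⟩
      · intro y hy
        apply hball
        rw [mem_ball] at hy ⊢
        have : ρ ≤ ε := min_le_right _ _
        linarith
      · have h1 : ((S ∩ O) \ ball a δ).Infinite := by
          intro h1fin
          apply hSO
          have : S ∩ O ⊆ ((S ∩ O) \ ball a δ) ∪ (S ∩ O ∩ ball a δ) := by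
            intro y hy
            by_cases hyb : y ∈ ball a δ
            · exact Or.inr ⟨hy, hyb⟩
            · exact Or.inl ⟨hy, hyb⟩
          exact (h1fin.union hfin).subset this
        apply h1.mono
        rintro y ⟨⟨hyS, hyO⟩, hyb⟩
        refine ⟨hyS, hyO, fun hy' => hyb ?_⟩
        rw [mem_closedBall] at hy'
        rw [mem_ball]
        have : ρ ≤ δ := min_le_left _ _
        linarith
      · rw [Set.disjoint_left]
        rintro y hy1 ⟨-, hy2⟩
        exact hy2 (ball_subset_closedBall hy1)
  have step' : ∀ O : {O : Set Z // IsOpen O ∧ (S ∩ O).Infinite},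
      ∃ p : Set Z × Set Z, IsOpen p.1 ∧ (S ∩ p.1).Nonempty ∧ p.1 ⊆ O.1 ∧
        (IsOpen p.2 ∧ (S ∩ p.2).Infinite) ∧ p.2 ⊆ O.1 ∧ Disjoint p.1 p.2 :=
    fun O => step O.1 O.2.1 O.2.2
  choose F h1 h2 h3 h4 h5 h6 using step'
  let nxt : {O : Set Z // IsOpen O ∧ (S ∩ O).Infinite} → {O : Set Z // IsOpen O ∧ (S ∩ O).Infinite} :=
    fun O => ⟨(F O).2, h4 O⟩
  let seq : ℕ → {O : Set Z // IsOpen O ∧ (S ∩ O).Infinite} :=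
    fun n => nxt^[n] ⟨univ, isOpen_univ, by simpa using hinf⟩
  have hseq : ∀ n, seq (n + 1) = nxt (seq n) := by
    intro n
    simp only [seq, Function.iterate_succ_apply']
  set B : ℕ → Set Z := fun n => (F (seq n)).1 with hB
  have hmono : ∀ n m, n ≤ m → (seq m).1 ⊆ (seq n).1 := by
    intro n m h
    induction m with
    | zero => simp_all
    | succ k ih =>
      rcases Nat.lt_or_ge n (k+1) with h' | h'
      · have hk : n ≤ k := Nat.lt_succ_iff.1 h'
        refine subset_trans ?_ (ih hk)
        rw [hseq k]
        exact h5 (seq k)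
      · have : n = k + 1 := le_antisymm h h'
        rw [this]
  have hBsub : ∀ n, B n ⊆ (seq n).1 := fun n => h3 (seq n)
  have hdisj : ∀ m n, m ≠ n → Disjoint (B m) (B n) := by
    have key : ∀ m n, m < n → Disjoint (B m) (B n) := by
      intro m n hmn
      have hsub : B n ⊆ (F (seq m)).2 := by
        refine (hBsub n).trans ?_
        have h7 : (seq (m+1)).1 = (F (seq m)).2 := by rw [hseq m]
        rw [← h7]
        exact hmono (m+1) n hmn
      exact (h6 (seq m)).mono_right hsub
    intro m n hmn
    rcases lt_or_gt_of_ne hmn with h | h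
    · exact key m n h
    · exact (key n m h).symm
  refine no_disjoint_active T hT B hdisj ?_
  intro n
  obtain ⟨x, hxS, hxB⟩ := h2 (seq n)
  have hnot := hxS (B n) (h1 (seq n)) hxB
  rw [NullOn] at hnot
  push_neg at hnot
  obtain ⟨g, hg0, hg1⟩ := hnot
  exact ⟨g, hg0, hg1⟩

lemma nullOn_union (T : C(Z, ℝ) →ₗ[ℝ] E) {U V : Set Z} (hUo : IsOpen U) (hVo : IsOpen V)
    (hU : NullOn T U) (hV : NullOn T V) : NullOn T (U ∪ V) := by
  by_cases hUc : Uᶜ = ∅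
  · intro g hg
    refine hU g (fun x hx => absurd ?_ hx)
    have : (U : Set Z) = univ := compl_empty_iff.1 hUc
    rw [this]; trivial
  by_cases hVc : Vᶜ = ∅
  · intro g hg
    refine hV g (fun x hx => absurd ?_ hx)
    have : (V : Set Z) = univ := compl_empty_iff.1 hVc
    rw [this]; trivial
  have hUne : Uᶜ.Nonempty := nonempty_iff_ne_empty.2 hUc
  have hVne : Vᶜ.Nonempty := nonempty_iff_ne_empty.2 hVc
  intro g hg
  set a : Z → ℝ := fun x => infDist x Uᶜ with hadef
  set b : Z → ℝ := fun x => infDist x Vᶜ with hbdef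
  have ha : Continuous a := continuous_infDist_pt _
  have hb : Continuous b := continuous_infDist_pt _
  have ha0 : ∀ x, 0 ≤ a x := fun x => infDist_nonneg
  have hb0 : ∀ x, 0 ≤ b x := fun x => infDist_nonneg
  have haU : ∀ x, x ∉ U → a x = 0 := fun x hx => infDist_zero_of_mem hx
  have hbV : ∀ x, x ∉ V → b x = 0 := fun x hx => infDist_zero_of_mem hx
  have haU' : ∀ x, a x = 0 → x ∉ U := by
    intro x hx hxU
    have := (hUo.isClosed_compl.notMem_iff_infDist_pos hUne).1 (fun h => h hxU)
    rw [hadef] at hx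
    simp only at hx
    linarith
  have hbV' : ∀ x, b x = 0 → x ∉ V := by
    intro x hx hxV
    have := (hVo.isClosed_compl.notMem_iff_infDist_pos hVne).1 (fun h => h hxV)
    rw [hbdef] at hx
    simp only at hx
    linarith
  have hzero : ∀ x, a x + b x = 0 → g x = 0 := by
    intro x h0
    have hax : a x = 0 := by nlinarith [ha0 x, hb0 x]
    have hbx : b x = 0 := by nlinarith [ha0 x, hb0 x]
    exact hg x (fun hx => hx.elim (haU' x hax) (hbV' x hbx))
  set q : Z → ℝ := fun x => g x * (a x / (a x + b x)) with hqdef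
  have hqle : ∀ x, |q x| ≤ |g x| := by
    intro x
    rcases eq_or_ne (a x + b x) 0 with h0 | h0
    · simp [hqdef, h0, abs_nonneg]
    · have hpos : 0 < a x + b x := lt_of_le_of_ne (by nlinarith [ha0 x, hb0 x]) (Ne.symm h0)
      have h01 : a x / (a x + b x) ≤ 1 := div_le_one_of_le₀ (by nlinarith [hb0 x]) hpos.le
      have h00 : 0 ≤ a x / (a x + b x) := div_nonneg (ha0 x) hpos.le
      calc |q x| = |g x| * |a x / (a x + b x)| := abs_mul _ _
        _ ≤ |g x| * 1 := by
            refine mul_le_mul_of_nonneg_left ?_ (abs_nonneg _)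
            rw [abs_of_nonneg h00]; exact h01
        _ = |g x| := mul_one _
  have hqc : Continuous q := by
    rw [continuous_iff_continuousAt]
    intro x
    rcases eq_or_ne (a x + b x) 0 with h0 | h0
    · have hq0 : q x = 0 := by simp [hqdef, hzero x h0]
      rw [ContinuousAt, hq0]
      rw [tendsto_zero_iff_norm_tendsto_zero]
      refine squeeze_zero' (Eventually.of_forall fun y => norm_nonneg _)
        (Eventually.of_forall fun y => by simpa [Real.norm_eq_abs] using hqle y) ?_
      have hgc : Tendsto (fun y => |g y|) (𝓝 x) (𝓝 (|g x|)) :=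
        (g.continuous.abs).continuousAt
      simpa [Real.norm_eq_abs, hzero x h0] using hgc
    · exact (g.continuous.continuousAt).mul
        ((ha.continuousAt).div ((ha.add hb).continuousAt) h0)
  set g₁ : C(Z, ℝ) := ⟨q, hqc⟩ with hg₁def
  have hTg₁ : T g₁ = 0 := by
    refine hU g₁ (fun x hx => ?_)
    have : a x = 0 := haU x hx
    simp [hg₁def, hqdef, this]
  have hTg₂ : T (g - g₁) = 0 := by
    refine hV (g - g₁) (fun x hx => ?_)
    have hbx : b x = 0 := hbV x hx
    rcases eq_or_ne (a x) 0 with h0 | h0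
    · have hg0 : g x = 0 := hzero x (by rw [h0, hbx, add_zero])
      simp [hg₁def, hqdef, hg0]
    · have : a x / (a x + b x) = 1 := by rw [hbx, add_zero, div_self h0]
      simp [hg₁def, hqdef, this]
  have := map_sub T g g₁
  have hfin : T g - T g₁ = 0 := by rw [← map_sub]; exact hTg₂
  rw [hTg₁, sub_zero] at hfin
  exact hfin

lemma vanish_on_bad [SecondCountableTopology Z] (T : C(Z, ℝ) →ₗ[ℝ] E)
    (hT : ∀ (f : ℕ → C(Z, ℝ)) (g : C(Z, ℝ)),
      (∀ x, Tendsto (fun n => f n x) atTop (𝓝 (g x))) →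
      ∀ φ : E →L[ℝ] ℝ, Tendsto (fun n => φ (T (f n))) atTop (𝓝 (φ (T g))))
    (f : C(Z, ℝ)) (hf : ∀ x, BadPt T x → f x = 0) : T f = 0 := by
  obtain ⟨β, hβc, hβne, hβb⟩ := TopologicalSpace.exists_countable_basis Z
  set 𝒩 : Set (Set Z) := {B ∈ β | NullOn T B} ∪ {∅} with h𝒩def
  have h𝒩c : 𝒩.Countable := ((hβc.mono (sep_subset _ _))).union (countable_singleton ∅)
  have h𝒩ne : 𝒩.Nonempty := ⟨∅, Or.inr rfl⟩
  obtain ⟨W, hW⟩ := h𝒩c.exists_eq_range h𝒩ne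
  have hWmem : ∀ n, W n ∈ 𝒩 := by
    intro n
    rw [hW]
    exact ⟨n, rfl⟩
  have hWopen : ∀ n, IsOpen (W n) := by
    intro n
    rcases hWmem n with h | h
    · exact hβb.isOpen h.1
    · rw [mem_singleton_iff] at h
      rw [h]; exact isOpen_empty
  have hWnull : ∀ n, NullOn T (W n) := by
    intro n
    rcases hWmem n with h | h
    · exact h.2
    · rw [mem_singleton_iff] at h
      rw [h]; exact nullOn_empty T
  have hcover : ∀ x, ¬ BadPt T x → ∃ n, x ∈ W n := by
    intro x hx
    rw [BadPt] at hx
    push_neg at hx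
    obtain ⟨U, hUo, hxU, hUnull⟩ := hx
    obtain ⟨B, hBβ, hxB, hBU⟩ := hβb.exists_subset_of_mem_open hxU hUo
    have hB𝒩 : B ∈ 𝒩 := Or.inl ⟨hBβ, nullOn_mono hBU hUnull⟩
    rw [hW] at hB𝒩
    obtain ⟨n, hn⟩ := hB𝒩
    exact ⟨n, hn ▸ hxB⟩
  set Ω : ℕ → Set Z := fun N => ⋃ i ∈ Finset.range (N + 1), W i with hΩdef
  have hΩo : ∀ N, IsOpen (Ω N) := fun N => isOpen_biUnion (fun i _ => hWopen i)
  have hΩsucc : ∀ N, Ω (N + 1) = W (N + 1) ∪ Ω N := by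
    intro N
    rw [hΩdef]
    simp only []
    rw [Finset.range_add_one, Finset.set_biUnion_insert]
  have hΩnull : ∀ N, NullOn T (Ω N) := by
    intro N
    induction N with
    | zero =>
      have : Ω 0 = W 0 := by simp [hΩdef]
      rw [this]
      exact hWnull 0
    | succ N ih =>
      rw [hΩsucc N]
      exact nullOn_union T (hWopen _) (hΩo N) (hWnull _) ih
  have hWΩ : ∀ m N, m ≤ N → W m ⊆ Ω N := by
    intro m N hm
    rw [hΩdef]
    exact subset_biUnion_of_mem (Finset.mem_range.2 (Nat.lt_succ_of_le hm))
  by_cases hful : ∃ N, (Ω N)ᶜ = ∅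
  · obtain ⟨N, hN⟩ := hful
    refine hΩnull N f (fun x hx => absurd ?_ hx)
    have : Ω N = univ := compl_empty_iff.1 hN
    rw [this]; trivial
  push_neg at hful
  have hfulne : ∀ N, ((Ω N)ᶜ).Nonempty := hful
  set θ : ℕ → Z → ℝ := fun N x => min 1 ((N : ℝ) * infDist x (Ω N)ᶜ) with hθdef
  have hθc : ∀ N, Continuous (θ N) :=
    fun N => continuous_const.min (continuous_const.mul (continuous_infDist_pt _))
  set gN : ℕ → C(Z, ℝ) := fun N => ⟨fun x => f x * θ N x, f.continuous.mul (hθc N)⟩ with hgNdef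
  have hgNnull : ∀ N, T (gN N) = 0 := by
    intro N
    refine hΩnull N (gN N) (fun x hx => ?_)
    have h0 : infDist x (Ω N)ᶜ = 0 := infDist_zero_of_mem hx
    simp [hgNdef, hθdef, h0]
  have hθub : ∀ N x, θ N x ≤ 1 := fun N x => min_le_left _ _
  have hconv : ∀ x, Tendsto (fun N => gN N x) atTop (𝓝 (f x)) := by
    intro x
    rcases eq_or_ne (f x) 0 with h0 | h0
    · have : ∀ N, gN N x = f x := by
        intro N
        simp [hgNdef, h0]
      simpa [this] using tendsto_const_nhds (α := ℝ) (f := atTop (α := ℕ))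
    · have hxbad : ¬ BadPt T x := fun hb => h0 (hf x hb)
      obtain ⟨m, hm⟩ := hcover x hxbad
      have hWmne : ((W m)ᶜ).Nonempty := by
        rcases eq_or_ne ((W m)ᶜ) ∅ with he | hne
        · exfalso
          refine (hfulne m).ne_empty ?_
          have h1 : W m = univ := compl_empty_iff.1 he
          have h2 : W m ⊆ Ω m := hWΩ m m le_rfl
          rw [h1] at h2
          rw [compl_empty_iff]
          exact univ_subset_iff.1 h2
        · exact nonempty_iff_ne_empty.2 hne
      have hδ : 0 < infDist x (W m)ᶜ :=
        ((hWopen m).isClosed_compl.notMem_iff_infDist_pos hWmne).1 (fun h => h hm)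
      set δ := infDist x (W m)ᶜ with hδdef
      have hev : ∀ᶠ N in atTop, gN N x = f x := by
        filter_upwards [eventually_ge_atTop (max m ⌈δ⁻¹⌉₊)] with N hN
        have hNm : m ≤ N := le_trans (le_max_left _ _) hN
        have hNδ : δ⁻¹ ≤ (N : ℝ) := by
          have h1 : (⌈δ⁻¹⌉₊ : ℝ) ≤ N := Nat.cast_le.2 (le_trans (le_max_right _ _) hN)
          exact le_trans (Nat.le_ceil _) h1
        have hsub : (Ω N)ᶜ ⊆ (W m)ᶜ := compl_subset_compl.2 (hWΩ m N hNm)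
        have hge : δ ≤ infDist x (Ω N)ᶜ := infDist_le_infDist_of_subset hsub (hfulne N)
        have h1 : (1 : ℝ) ≤ (N : ℝ) * infDist x (Ω N)ᶜ := by
          have h2 : (1 : ℝ) = δ⁻¹ * δ := (inv_mul_cancel₀ hδ.ne').symm
          rw [h2]
          have h3 : δ⁻¹ * δ ≤ (N : ℝ) * δ := mul_le_mul_of_nonneg_right hNδ hδ.le
          refine le_trans h3 ?_
          exact mul_le_mul_of_nonneg_left hge (by positivity)
        have hθ1 : θ N x = 1 := min_eq_left h1
        simp [hgNdef, hθ1]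
      exact Tendsto.congr' (hev.mono fun N hN => hN.symm) tendsto_const_nhds
  have hlim : ∀ φ : E →L[ℝ] ℝ, φ (T f) = 0 := by
    intro φ
    have h1 := hT gN f hconv φ
    have h2 : Tendsto (fun N => φ (T (gN N))) atTop (𝓝 0) := by
      have : ∀ N, φ (T (gN N)) = 0 := fun N => by rw [hgNnull N, map_zero]
      simpa [this] using tendsto_const_nhds (α := ℝ) (f := atTop (α := ℕ))
    exact (tendsto_nhds_unique h1 h2)
  exact NormedSpace.eq_zero_of_forall_dual_eq_zero ℝ hlim

lemma finite_rank_metric [SecondCountableTopology Z] (T : C(Z, ℝ) →ₗ[ℝ] E)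
    (hT : ∀ (f : ℕ → C(Z, ℝ)) (g : C(Z, ℝ)),
      (∀ x, Tendsto (fun n => f n x) atTop (𝓝 (g x))) →
      ∀ φ : E →L[ℝ] ℝ, Tendsto (fun n => φ (T (f n))) atTop (𝓝 (φ (T g)))) :
    FiniteDimensional ℝ (LinearMap.range T) := by
  classical
  have hSb : {x : Z | BadPt T x}.Finite := bad_finite T hT
  set s := hSb.toFinset with hsdef
  let Λ : C(Z, ℝ) →ₗ[ℝ] ({x // x ∈ s} → ℝ) :=
    { toFun := fun f => fun x => f x.1
      map_add' := by intros; ext; simp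
      map_smul' := by intros; ext; simp }
  have hker : LinearMap.ker Λ ≤ LinearMap.ker T := by
    intro f hfker
    rw [LinearMap.mem_ker] at hfker ⊢
    refine vanish_on_bad T hT f (fun x hx => ?_)
    have hxs : x ∈ s := hSb.mem_toFinset.2 hx
    exact congrFun hfker (⟨x, hxs⟩ : {x // x ∈ s})
  haveI hfd1 : FiniteDimensional ℝ (LinearMap.range Λ) := inferInstance
  haveI hfd2 : FiniteDimensional ℝ (C(Z, ℝ) ⧸ LinearMap.ker Λ) :=
    (Λ.quotKerEquivRange).symm.finiteDimensional
  let π : (C(Z, ℝ) ⧸ LinearMap.ker Λ) →ₗ[ℝ] (C(Z, ℝ) ⧸ LinearMap.ker T) :=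
    Submodule.liftQ _ (LinearMap.ker T).mkQ (by rwa [Submodule.ker_mkQ])
  have hπs : Function.Surjective π := by
    intro y
    obtain ⟨x, rfl⟩ := Submodule.mkQ_surjective _ y
    exact ⟨Submodule.Quotient.mk x, by simp [π]⟩
  haveI hfd3 : FiniteDimensional ℝ (C(Z, ℝ) ⧸ LinearMap.ker T) :=
    Module.Finite.of_surjective π hπs
  exact (T.quotKerEquivRange).finiteDimensional

end MetricSection

theorem stmt2 {X : Type*} [TopologicalSpace X] [T35Space X]
    {E : Type*} [NormedAddCommGroup E] [NormedSpace ℝ E] [CompleteSpace E]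
    (T : C(X, ℝ) →ₗ[ℝ] E)
    (hT : ∀ (f : ℕ → C(X, ℝ)) (g : C(X, ℝ)),
      (∀ x, Tendsto (fun n => f n x) atTop (𝓝 (g x))) →
      ∀ φ : E →L[ℝ] ℝ, Tendsto (fun n => φ (T (f n))) atTop (𝓝 (φ (T g)))) :
    FiniteDimensional ℝ (LinearMap.range T) := by
  classical
  by_contra hfin
  -- produce a linearly independent sequence in the range
  have hidx : (Module.Basis.ofVectorSpaceIndex ℝ (LinearMap.range T)).Infinite := by
    by_contra hfinidx
    rw [Set.not_infinite] at hfinidx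
    haveI := hfinidx.fintype
    exact hfin (Module.Finite.of_basis (Module.Basis.ofVectorSpace ℝ _))
  let e := hidx.natEmbedding
  let v : ℕ → LinearMap.range T := fun n => ((e n : _) : LinearMap.range T)
  have hv : LinearIndependent ℝ v := by
    have h0 := Module.Basis.ofVectorSpaceIndex.linearIndependent ℝ (↥(LinearMap.range T))
    exact h0.comp e e.injective
  have hvE : LinearIndependent ℝ (fun n => ((v n : LinearMap.range T) : E)) :=
    hv.map' (LinearMap.range T).subtype (Submodule.ker_subtype _)
  have hpre : ∀ n, ∃ f : C(X, ℝ), T f = ((v n : LinearMap.range T) : E) := fun n => (v n).2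
  choose f hf using hpre
  -- the reduction map to ℝ^ℕ
  have hΦc : Continuous (fun x : X => fun n : ℕ => f n x) :=
    continuous_pi (fun n => (f n).continuous)
  let Φ : C(X, ℕ → ℝ) := ⟨fun x => fun n => f n x, hΦc⟩
  let T' : C(ℕ → ℝ, ℝ) →ₗ[ℝ] E :=
    { toFun := fun h => T (h.comp Φ)
      map_add' := fun h₁ h₂ => by
        show T ((h₁ + h₂).comp Φ) = T (h₁.comp Φ) + T (h₂.comp Φ)
        rw [ContinuousMap.add_comp, map_add]
      map_smul' := fun c h => by
        show T ((c • h).comp Φ) = c • T (h.comp Φ)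
        rw [ContinuousMap.smul_comp, map_smul] }
  have hT' : ∀ (u : ℕ → C(ℕ → ℝ, ℝ)) (w : C(ℕ → ℝ, ℝ)),
      (∀ y, Tendsto (fun n => u n y) atTop (𝓝 (w y))) →
      ∀ φ : E →L[ℝ] ℝ, Tendsto (fun n => φ (T' (u n))) atTop (𝓝 (φ (T' w))) := by
    intro u w hu φ
    exact hT (fun n => (u n).comp Φ) (w.comp Φ) (fun x => hu (Φ x)) φ
  letI mZ : MetricSpace (ℕ → ℝ) := TopologicalSpace.metrizableSpaceMetric _
  haveI : FiniteDimensional ℝ (LinearMap.range T') := finite_rank_metric T' hT'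
  -- each v n is in the range of T'
  have hmem : ∀ n, ((v n : LinearMap.range T) : E) ∈ LinearMap.range T' := by
    intro n
    refine ⟨⟨fun y => y n, continuous_apply n⟩, ?_⟩
    rw [← hf n]
    congr 1
  let w : ℕ → LinearMap.range T' := fun n => ⟨((v n : LinearMap.range T) : E), hmem n⟩
  have hw : LinearIndependent ℝ w := by
    apply LinearIndependent.of_comp (LinearMap.range T').subtype
    exact hvE
  have hcard := hw.lt_aleph0_of_finite
  simp at hcard
end

section
/- Let E be a Banach space. There exists a continuous surjection T: C_p(S) → E_w, where S is the convergent sequence, if and only if E is separable. -/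
open Filter Topology

/-- The convergent sequence `S = {0} ∪ {1/(n+1) : n ∈ ℕ}` as a subspace of `ℝ`. -/
def convSeq : Set ℝ := {0} ∪ {x : ℝ | ∃ n : ℕ, x = 1 / (n + 1)}

/-- `C_p(X)`: continuous real-valued functions on `X` with the topology of
pointwise convergence (subspace topology of the product `X → ℝ`). -/
def Cp (X : Type*) [TopologicalSpace X] : Type _ := {f : X → ℝ // Continuous f}

instance (X : Type*) [TopologicalSpace X] : TopologicalSpace (Cp X) :=
  instTopologicalSpaceSubtype

open Set Function Metric

namespace Stmt5Aux

noncomputable section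

abbrev S := ↥convSeq

def pt (n : ℕ) : S := ⟨1 / (n + 1), Or.inr ⟨n, rfl⟩⟩

def zpt : S := ⟨0, Or.inl rfl⟩

lemma oneDiv_pos (n : ℕ) : (0:ℝ) < 1 / (n + 1) := by positivity

lemma oneDiv_inj {m n : ℕ} (h : (1:ℝ) / (m + 1) = 1 / (n + 1)) : m = n := by
  have h1 : ((m:ℝ) + 1) ≠ 0 := by positivity
  have h2 : ((n:ℝ) + 1) ≠ 0 := by positivity
  field_simp at h
  exact_mod_cast (by linarith : (m:ℝ) = n)

lemma pt_injective : Function.Injective pt := by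
  intro m n h
  have := congrArg Subtype.val h
  exact oneDiv_inj this

lemma zpt_ne (n : ℕ) : pt n ≠ zpt := by
  intro h
  have := congrArg Subtype.val h
  exact absurd this (by simp [pt, zpt]; positivity)

lemma zpt_not_range : ¬ ∃ n, pt n = zpt := by
  rintro ⟨n, h⟩; exact zpt_ne n h

lemma mem_cases (s : S) : s = zpt ∨ ∃ n, s = pt n := by
  rcases s with ⟨x, hx⟩
  rcases hx with h | ⟨n, hn⟩
  · left; exact Subtype.ext h
  · right; exact ⟨n, Subtype.ext hn⟩

lemma countable_convSeq : convSeq.Countable := by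
  apply Set.Countable.union (countable_singleton 0)
  have : {x : ℝ | ∃ n : ℕ, x = 1 / (n + 1)} = Set.range (fun n : ℕ => (1:ℝ) / (n + 1)) := by
    ext x; simp [eq_comm]
  rw [this]
  exact countable_range _

instance : Countable S := countable_convSeq.to_subtype

/-- separation of the points `1/(n+1)` -/
lemma gap_lemma {m n : ℕ} (h : m ≠ n) :
    1 / (((n:ℝ) + 1) * ((n:ℝ) + 2)) ≤ |(1:ℝ) / (m + 1) - 1 / (n + 1)| := by
  rcases lt_or_gt_of_ne h with hlt | hlt
  · -- m < n : 1/(m+1) - 1/(n+1) ≥ 1/n - 1/(n+1) ≥ gap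
    have hm : (m:ℝ) + 1 ≤ (n:ℝ) := by exact_mod_cast hlt
    refine le_abs.2 (Or.inl ?_)
    rw [div_sub_div _ _ (by positivity : ((m:ℝ)+1) ≠ 0) (by positivity : ((n:ℝ)+1) ≠ 0)]
    rw [div_le_div_iff₀ (by positivity) (by positivity)]
    ring_nf
    nlinarith [Nat.cast_nonneg (α := ℝ) m, Nat.cast_nonneg (α := ℝ) n]
  · -- n < m
    have hm : (n:ℝ) + 2 ≤ (m:ℝ) + 1 := by
      have : (n:ℝ) + 1 ≤ (m:ℝ) := by exact_mod_cast hlt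
      linarith
    refine le_abs.2 (Or.inr ?_)
    have : (1:ℝ)/(m+1) ≤ 1/((n:ℝ)+2) := one_div_le_one_div_of_le (by positivity) hm
    have hgap : (1:ℝ)/((n:ℝ)+1) - 1/((n:ℝ)+2) = 1 / (((n:ℝ) + 1) * ((n:ℝ) + 2)) := by
      field_simp
      norm_num
    linarith

lemma isolation {n : ℕ} {s : S} (h : |(s : ℝ) - 1 / (n + 1)| < 1 / (((n:ℝ) + 1) * ((n:ℝ) + 2))) :
    s = pt n := by
  rcases mem_cases s with rfl | ⟨m, rfl⟩
  · exfalso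
    have h1 : |(zpt : ℝ) - 1/(n+1)| = 1/((n:ℝ)+1) := by
      rw [show ((zpt:ℝ)) = 0 from rfl, zero_sub, abs_neg, abs_of_pos (oneDiv_pos n)]
    rw [h1] at h
    have : 1 / (((n:ℝ) + 1) * ((n:ℝ) + 2)) ≤ 1/((n:ℝ)+1) := by
      apply one_div_le_one_div_of_le (by positivity)
      nlinarith [Nat.cast_nonneg (α := ℝ) n]
    linarith
  · by_cases hmn : m = n
    · subst hmn; rfl
    · exact absurd h (not_lt.2 (gap_lemma hmn))

lemma tendsto_pt : Tendsto pt atTop (𝓝 zpt) := by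
  rw [tendsto_subtype_rng]
  simpa [pt, zpt] using (tendsto_one_div_add_atTop_nhds_zero_nat : Tendsto (fun n : ℕ => 1 / ((n : ℝ) + 1)) atTop (𝓝 0))

lemma cp_tendsto (f : Cp S) : Tendsto (fun n => f.1 (pt n)) atTop (𝓝 (f.1 zpt)) :=
  (f.2.tendsto zpt).comp tendsto_pt

/-- evaluation maps are continuous on `Cp S` -/
lemma continuous_eval (s : S) : Continuous (fun f : Cp S => f.1 s) :=
  (continuous_apply s).comp continuous_subtype_val

/-- build an element of `Cp S` from a convergent sequence of values -/
lemma exists_cp (c : ℕ → ℝ) (L : ℝ) (hc : Tendsto c atTop (𝓝 L)) :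
    ∃ f : Cp S, f.1 zpt = L ∧ ∀ n, f.1 (pt n) = c n := by
  classical
  set F : S → ℝ := Function.extend pt c (fun _ => L) with hF
  have hFz : F zpt = L := Function.extend_apply' _ _ _ zpt_not_range
  have hFp : ∀ n, F (pt n) = c n := fun n => pt_injective.extend_apply _ _ n
  have hcont : Continuous F := by
    rw [continuous_iff_continuousAt]
    intro s
    rcases mem_cases s with rfl | ⟨n, rfl⟩
    · -- continuity at 0
      rw [ContinuousAt, hFz, Metric.tendsto_nhds]
      intro ε hε
      obtain ⟨N, hN⟩ := (Metric.tendsto_atTop.1 hc) ε hε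
      have hop : IsOpen {t : S | (t : ℝ) < 1 / (N + 1)} :=
        isOpen_Iio.preimage continuous_subtype_val
      have hmem : {t : S | (t : ℝ) < 1 / (N + 1)} ∈ 𝓝 zpt :=
        hop.mem_nhds (by simpa [zpt] using oneDiv_pos N)
      filter_upwards [hmem] with t ht
      rcases mem_cases t with rfl | ⟨m, rfl⟩
      · simpa [hFz] using hε
      · rw [hFp]
        apply hN
        have : (1:ℝ)/(m+1) < 1/(N+1) := by simpa [pt] using ht
        have h2 : ((N:ℝ)+1) < (m:ℝ)+1 := lt_of_one_div_lt_one_div (by positivity) this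
        have h3 : (N:ℝ) < (m:ℝ) := by linarith
        exact (Nat.cast_lt.1 h3).le
    · -- continuity at an isolated point
      have hop : IsOpen {t : S | |(t : ℝ) - 1/(n+1)| < 1 / (((n:ℝ) + 1) * ((n:ℝ) + 2))} := by
        have : Continuous (fun t : S => |(t : ℝ) - 1/(n+1)|) := by
          continuity
        exact isOpen_Iio.preimage this
      have hmem : {t : S | |(t : ℝ) - 1/(n+1)| < 1 / (((n:ℝ) + 1) * ((n:ℝ) + 2))} ∈ 𝓝 (pt n) := by
        apply hop.mem_nhds
        simp [pt]
        positivity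
      have hev : F =ᶠ[𝓝 (pt n)] (fun _ => F (pt n)) := by
        filter_upwards [hmem] with t ht
        rw [isolation ht]
      exact hev.continuousAt
  exact ⟨⟨F, hcont⟩, hFz, hFp⟩

end
end Stmt5Aux
namespace Stmt5Aux
noncomputable section
open Filter Topology Set Function Metric

def Aset : Set (Cp S) :=
  {f | f.1 zpt = 0 ∧ f.1 (pt 0) = 1 ∧
    ∀ k, (f.1 (pt (k+1)) - f.1 (pt k)) *
      (f.1 (pt (k+1)) + f.1 (pt k) * f.1 (pt (k+1)) - f.1 (pt k)) = 0}

lemma isClosed_Aset : IsClosed Aset := by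
  have : Aset = {f : Cp S | f.1 zpt = 0} ∩ ({f : Cp S | f.1 (pt 0) = 1} ∩
      ⋂ k : ℕ, {f : Cp S | (f.1 (pt (k+1)) - f.1 (pt k)) *
        (f.1 (pt (k+1)) + f.1 (pt k) * f.1 (pt (k+1)) - f.1 (pt k)) = 0}) := by
    ext f
    simp only [Aset, Set.mem_setOf_eq, Set.mem_inter_iff, Set.mem_iInter]
  rw [this]
  refine (isClosed_eq (continuous_eval zpt) continuous_const).inter
    ((isClosed_eq (continuous_eval (pt 0)) continuous_const).inter
      (isClosed_iInter fun k => isClosed_eq ?_ continuous_const))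
  exact (((continuous_eval _).sub (continuous_eval _)).mul
    (((continuous_eval _).add ((continuous_eval _).mul (continuous_eval _))).sub
      (continuous_eval _)))

def hfun (f : Cp S) : ℕ → ℕ
  | 0 => 0
  | (k+1) => if f.1 (pt (k+1)) = f.1 (pt k) then hfun f k else hfun f k + 1

lemma hfun_step (f : Cp S) (k : ℕ) :
    hfun f (k+1) = hfun f k ∨ hfun f (k+1) = hfun f k + 1 := by
  by_cases h : f.1 (pt (k+1)) = f.1 (pt k) <;> simp [hfun, h]

lemma hfun_mono (f : Cp S) : Monotone (hfun f) := by
  apply monotone_nat_of_le_succ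
  intro k
  rcases hfun_step f k with h | h <;> omega

lemma hfun_val {f : Cp S} (hf : f ∈ Aset) : ∀ k, f.1 (pt k) = 1 / ((hfun f k : ℝ) + 1) := by
  intro k
  induction k with
  | zero => simpa [hfun] using hf.2.1
  | succ k ih =>
    by_cases h : f.1 (pt (k+1)) = f.1 (pt k)
    · rw [show hfun f (k+1) = hfun f k from by simp [hfun, h], h, ih]
    · have hrec := hf.2.2 k
      have h2 : f.1 (pt (k+1)) + f.1 (pt k) * f.1 (pt (k+1)) - f.1 (pt k) = 0 := by
        rcases mul_eq_zero.1 hrec with h1 | h1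
        · exact absurd (by linarith [h1] : f.1 (pt (k+1)) = f.1 (pt k)) h
        · exact h1
      rw [show hfun f (k+1) = hfun f k + 1 from by simp [hfun, h]]
      set m : ℕ := hfun f k with hm
      rw [ih] at h2
      have hne : ((m:ℝ) + 1) ≠ 0 := by positivity
      push_cast
      field_simp at h2 ⊢
      linarith
    
lemma hfun_unbounded {f : Cp S} (hf : f ∈ Aset) (j : ℕ) : ∃ k, j ≤ hfun f k := by
  by_contra hcon
  push_neg at hcon
  have hlow : ∀ k, 1 / ((j:ℝ) + 1) ≤ f.1 (pt k) := by
    intro k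
    rw [hfun_val hf k]
    apply one_div_le_one_div_of_le (by positivity)
    have : hfun f k + 1 ≤ j + 1 := by have := hcon k; omega
    exact_mod_cast this
  have ht := cp_tendsto f
  rw [hf.1] at ht
  obtain ⟨N, hN⟩ := Metric.tendsto_atTop.1 ht (1 / ((j:ℝ) + 1)) (by positivity)
  have := hN N le_rfl
  rw [Real.dist_eq, sub_zero] at this
  have habs : f.1 (pt N) ≤ |f.1 (pt N)| := le_abs_self _
  linarith [hlow N]

lemma hfun_ivt (f : Cp S) : ∀ k j, j ≤ hfun f k → ∃ k' ≤ k, hfun f k' = j := by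
  intro k
  induction k with
  | zero =>
    intro j hj
    refine ⟨0, le_rfl, ?_⟩
    have h0 : hfun f 0 = 0 := rfl
    have h0' : hfun f 0 = 0 := rfl
    omega
  | succ k ih =>
    intro j hj
    rcases hfun_step f k with h | h
    · obtain ⟨k', hk', hk''⟩ := ih j (by omega)
      exact ⟨k', by omega, hk''⟩
    · by_cases hle : j ≤ hfun f k
      · obtain ⟨k', hk', hk''⟩ := ih j hle
        exact ⟨k', by omega, hk''⟩
      · exact ⟨k+1, le_rfl, by omega⟩

lemma exists_hit (a : ↥Aset) (j : ℕ) : ∃ k, a.1.1 (pt k) = 1 / ((j:ℝ) + 1) := by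
  obtain ⟨k, hk⟩ := hfun_unbounded a.2 j
  obtain ⟨k', _, hk'⟩ := hfun_ivt a.1 k j hk
  exact ⟨k', by rw [hfun_val a.2, hk']⟩

def bA (a : ↥Aset) (j : ℕ) : ℕ := @Nat.find _ (Classical.decPred _) (exists_hit a j)

lemma bA_spec (a : ↥Aset) (j : ℕ) : a.1.1 (pt (bA a j)) = 1 / ((j:ℝ) + 1) :=
  @Nat.find_spec _ (Classical.decPred _) (exists_hit a j)

lemma bA_min' (a : ↥Aset) (j : ℕ) {k : ℕ} (h : a.1.1 (pt k) = 1 / ((j:ℝ) + 1)) :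
    bA a j ≤ k :=
  @Nat.find_min' _ (Classical.decPred _) (exists_hit a j) _ h

lemma bA_lt (a : ↥Aset) (j : ℕ) {k : ℕ} (h : k < bA a j) :
    a.1.1 (pt k) ≠ 1 / ((j:ℝ) + 1) :=
  @Nat.find_min _ (Classical.decPred _) (exists_hit a j) _ h

lemma hfun_bA (a : ↥Aset) (j : ℕ) : hfun a.1 (bA a j) = j := by
  have := bA_spec a j
  rw [hfun_val a.2] at this
  exact oneDiv_inj this

lemma bA_mono (a : ↥Aset) : Monotone (bA a) := by
  intro i j hij
  obtain ⟨k', hk'le, hk'⟩ := hfun_ivt a.1 (bA a j) i (by rw [hfun_bA]; exact hij)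
  have : bA a i ≤ k' := bA_min' a i (by rw [hfun_val a.2, hk'])
  omega

def rhoA (a : ↥Aset) : ℕ → ℕ := fun j => bA a (j+1) - bA a j - 1

lemma bA_congr {a b : ↥Aset} {J : ℕ}
    (hval : ∀ k ≤ bA a J, b.1.1 (pt k) = a.1.1 (pt k)) :
    ∀ i ≤ J, bA b i = bA a i := by
  intro i hi
  have h1 : bA b i ≤ bA a i :=
    bA_min' b i (by rw [hval _ (bA_mono a hi)]; exact bA_spec a i)
  have h2 : bA a i ≤ bA b i :=
    bA_min' a i (by rw [← hval _ (h1.trans (bA_mono a hi))]; exact bA_spec b i)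
  omega

lemma continuous_rhoA : Continuous rhoA := by
  apply continuous_pi
  intro j
  rw [continuous_iff_continuousAt]
  intro a
  apply Filter.EventuallyEq.continuousAt (y := rhoA a j)
  set N := bA a (j+1) with hN
  set ε : ℝ := 1 / (((j:ℝ) + 2) * ((j:ℝ) + 3)) with hε
  have hεpos : 0 < ε := by positivity
  have hopen : ∀ k : ℕ, IsOpen {b : ↥Aset | |b.1.1 (pt k) - a.1.1 (pt k)| < ε} := by
    intro k
    have hc : Continuous fun b : ↥Aset => |b.1.1 (pt k) - a.1.1 (pt k)| :=
      (((continuous_eval (pt k)).comp continuous_subtype_val).sub continuous_const).abs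
    exact isOpen_Iio.preimage hc
  have hmem : (⋂ k ∈ Finset.range (N+1), {b : ↥Aset | |b.1.1 (pt k) - a.1.1 (pt k)| < ε}) ∈ 𝓝 a := by
    refine (isOpen_biInter_finset fun k _ => hopen k).mem_nhds ?_
    simp only [Set.mem_iInter, Set.mem_setOf_eq]
    intro k _
    simpa using hεpos
  filter_upwards [hmem] with b hb
  simp only [Set.mem_iInter, Set.mem_setOf_eq, Finset.mem_range] at hb
  -- coordinates agree up to N
  have hval : ∀ k ≤ N, b.1.1 (pt k) = a.1.1 (pt k) := by
    intro k hk
    have hbd := hb k (by omega)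
    -- hfun of a is at most j+1 on [0, N]
    have hha : hfun a.1 k ≤ j + 1 := by
      have := hfun_mono a.1 hk
      rw [hfun_bA a (j+1)] at this
      exact this
    by_contra hne
    rw [hfun_val a.2, hfun_val b.2] at hbd hne
    have hneq : hfun b.1 k ≠ hfun a.1 k := fun hcc => hne (by rw [hcc])
    have := gap_lemma (n := hfun a.1 k) (m := hfun b.1 k) hneq
    have hmono : 1 / (((j:ℝ) + 2) * ((j:ℝ) + 3)) ≤
        1 / (((hfun a.1 k : ℝ) + 1) * ((hfun a.1 k : ℝ) + 2)) := by
      apply one_div_le_one_div_of_le (by positivity)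
      have h1 : ((hfun a.1 k : ℝ)) ≤ (j:ℝ) + 1 := by exact_mod_cast hha
      nlinarith [Nat.cast_nonneg (α := ℝ) (hfun a.1 k)]
    linarith
  have e1 : bA b (j+1) = bA a (j+1) := bA_congr hval (j+1) le_rfl
  have e0 : bA b j = bA a j := bA_congr hval j (by omega)
  simp only [rhoA, e0, e1]

lemma rhoA_surjective : Function.Surjective rhoA := by
  intro α
  -- jump positions
  set B : ℕ → ℕ := fun j => Nat.rec 0 (fun j Bj => Bj + α j + 1) j with hB
  have hBsucc : ∀ j, B (j+1) = B j + α j + 1 := fun j => rfl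
  have hBmono : StrictMono B := strictMono_nat_of_lt_succ (fun j => by rw [hBsucc]; omega)
  -- the counting function
  set h : ℕ → ℕ := fun k => Nat.rec 0 (fun k hk => if B (hk + 1) = k+1 then hk + 1 else hk) k with hh
  have hsucc : ∀ k, h (k+1) = if B (h k + 1) = k+1 then h k + 1 else h k := fun k => rfl
  have h0 : h 0 = 0 := rfl
  have hinv : ∀ k, B (h k) ≤ k ∧ k < B (h k + 1) := by
    intro k
    induction k with
    | zero =>
      have hB0 : B 0 = 0 := rfl
      have h1 := hBmono (lt_add_one 0)
      rw [h0]
      omega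
    | succ k ih =>
      rw [hsucc]
      by_cases hc : B (h k + 1) = k+1
      · rw [if_pos hc]
        have h2 := hBmono (lt_add_one (h k + 1))
        rw [hc] at h2
        exact ⟨hc.le, h2⟩
      · rw [if_neg hc]
        exact ⟨by omega, by omega⟩
  have hstep : ∀ k, h (k+1) = h k ∨ h (k+1) = h k + 1 := by
    intro k; rw [hsucc]; split <;> omega
  have hmono : Monotone h := monotone_nat_of_le_succ (fun k => by rcases hstep k with hc | hc <;> omega)
  have hlow : ∀ j k, k < B j → h k < j := by
    intro j k hk
    by_contra hcon
    push_neg at hcon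
    have := (hinv k).1
    have := hBmono.monotone hcon
    omega
  have hhit : ∀ j, h (B j) = j := by
    intro j
    have h1 := (hinv (B j)).1
    have h2 := (hinv (B j)).2
    have l1 : h (B j) ≤ j := hBmono.le_iff_le.1 h1
    have l2 : j < h (B j) + 1 := hBmono.lt_iff_lt.1 h2
    omega
  -- the sequence of values
  set c : ℕ → ℝ := fun k => 1 / ((h k : ℝ) + 1) with hc
  have hct : Tendsto c atTop (𝓝 0) := by
    rw [Metric.tendsto_atTop]
    intro ε hε
    obtain ⟨j, hj⟩ := exists_nat_one_div_lt hε
    refine ⟨B j, fun k hk => ?_⟩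
    rw [Real.dist_eq, sub_zero, abs_of_pos (by positivity)]
    have hjk : j ≤ h k := by
      have := hmono hk
      rw [hhit j] at this
      exact this
    have : c k ≤ 1 / ((j:ℝ) + 1) := by
      apply one_div_le_one_div_of_le (by positivity)
      exact_mod_cast Nat.succ_le_succ hjk
    exact lt_of_le_of_lt this hj
  obtain ⟨f, hfz, hfp⟩ := exists_cp c 0 hct
  -- f is in Aset
  have hmem : f ∈ Aset := by
    refine ⟨hfz, by rw [hfp]; simp [hc, h0], ?_⟩
    intro k
    rw [hfp, hfp]
    rcases hstep k with hcs | hcs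
    · have : c (k+1) = c k := by rw [hc]; simp only; rw [hcs]
      rw [this, sub_self, zero_mul]
    · apply mul_eq_zero.2
      right
      rw [hc]
      simp only
      rw [hcs]
      set m : ℕ := h k
      push_cast
      field_simp
      ring
  -- identify bA with B
  have hbA : ∀ j, bA ⟨f, hmem⟩ j = B j := by
    intro j
    have hv : ∀ k, f.1 (pt k) = 1 / ((h k : ℝ) + 1) := fun k => hfp k
    have l1 : bA ⟨f, hmem⟩ j ≤ B j := bA_min' _ j (by rw [hv, hhit j])
    have l2 : B j ≤ bA ⟨f, hmem⟩ j := by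
      by_contra hcon
      push_neg at hcon
      have hlt : h (bA ⟨f, hmem⟩ j) < j := hlow j _ (by omega)
      have := bA_spec ⟨f, hmem⟩ j
      rw [hv] at this
      have := oneDiv_inj this
      omega
    omega
  refine ⟨⟨f, hmem⟩, ?_⟩
  funext j
  simp only [rhoA, hbA, hBsucc]
  omega

end
end Stmt5Aux
section Dugundji
variable {X : Type*} [MetricSpace X] {E : Type*} [NormedAddCommGroup E] [NormedSpace ℝ E]

theorem dugundji_ext {A : Set X} (hA : IsClosed A) (hne : A.Nonempty) {g : A → E}
    (hg : Continuous g) : ∃ G : X → E, Continuous G ∧ ∀ a : A, G a = g a := by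
  classical
  set Ω := Aᶜ with hΩ
  have hΩo : IsOpen Ω := hA.isOpen_compl
  -- positive distance to A for points off A
  have dpos : ∀ y : Ω, 0 < infDist (y : X) A := fun y =>
    (hA.notMem_iff_infDist_pos hne).1 y.2
  -- the cover
  set U : Ω → Set Ω := fun y => (Subtype.val) ⁻¹' (ball (y : X) (infDist (y : X) A / 3)) with hU
  have hUo : ∀ y, IsOpen (U y) := fun y => (isOpen_ball).preimage continuous_subtype_val
  have hUc : (univ : Set Ω) ⊆ ⋃ y, U y := by
    intro z _
    exact mem_iUnion.2 ⟨z, by simp [U, dpos z]⟩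
  obtain ⟨φ, hφ⟩ := PartitionOfUnity.exists_isSubordinate isClosed_univ U hUo hUc
  -- nearest-ish points
  have hex : ∀ y : Ω, ∃ z ∈ A, dist (y : X) z < 2 * infDist (y : X) A := by
    intro y
    have : infDist (y : X) A < 2 * infDist (y : X) A := by linarith [dpos y]
    exact (infDist_lt_iff hne).1 this
  choose az hazA hazd using hex
  set vals : Ω → E := fun y => g ⟨az y, hazA y⟩ with hvals
  set H : Ω → E := fun z => ∑ᶠ y, φ y z • vals y with hH
  have Hcont : Continuous H :=
    φ.continuous_finsum_smul (fun i x _ => continuousAt_const)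
  set G : X → E := fun x => if hx : x ∈ A then g ⟨x, hx⟩ else H ⟨x, hx⟩ with hG
  have hGA : ∀ a : A, G a = g a := by
    intro a; simp only [G, dif_pos a.2]
  refine ⟨G, ?_, hGA⟩
  rw [continuous_iff_continuousAt]
  intro x
  by_cases hx : x ∈ A
  · -- boundary / interior of A: epsilon-delta
    rw [Metric.continuousAt_iff]
    intro ε hε
    -- continuity of g at x
    have hgx : ContinuousAt g ⟨x, hx⟩ := hg.continuousAt
    rw [Metric.continuousAt_iff] at hgx
    obtain ⟨δ, hδ, hδg⟩ := hgx (ε/2) (by linarith)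
    refine ⟨δ/5, by positivity, ?_⟩
    intro x' hx'
    have hGa : G x = g ⟨x, hx⟩ := hGA ⟨x, hx⟩
    by_cases hx'A : x' ∈ A
    · have : dist (G x') (G x) = dist (g ⟨x', hx'A⟩) (g ⟨x, hx⟩) := by
        rw [hGa, hGA ⟨x', hx'A⟩]
      rw [this]
      have : dist (⟨x', hx'A⟩ : A) ⟨x, hx⟩ < δ := by
        rw [Subtype.dist_eq]; simpa using lt_trans hx' (by linarith)
      exact lt_trans (hδg this) (by linarith)
    · -- off A: convex combination estimate
      set z : Ω := ⟨x', hx'A⟩ with hz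
      have hGx' : G x' = H z := by simp only [G, dif_neg hx'A]; rfl
      -- finite support
      have hfin : {i : Ω | φ i z ≠ 0}.Finite := by
        have := φ.locallyFinite.point_finite z
        simpa [Function.support] using this
      set T : Finset Ω := hfin.toFinset with hT
      have hsupp : (Function.support fun y => φ y z • vals y) ⊆ ↑T := by
        intro y hy
        rw [hT, Set.Finite.coe_toFinset]
        simp only [Set.mem_setOf_eq]
        intro h0
        exact hy (by simp [h0])
      have hsum1 : ∑ y ∈ T, φ y z = 1 := by
        have h1 := φ.sum_eq_one (mem_univ z)
        have hfe : (∑ᶠ y, φ y z) = ∑ y ∈ T, φ y z := by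
          refine finsum_eq_finset_sum_of_support_subset _ ?_
          intro y hy
          rw [hT, Set.Finite.coe_toFinset]
          exact hy
        rwa [hfe] at h1
      -- estimate for members of T
      have key : ∀ y ∈ T, dist (vals y) (g ⟨x, hx⟩) < ε/2 := by
        intro y hy
        have hyne : φ y z ≠ 0 := by simpa [T, Set.Finite.mem_toFinset] using hy
        have hzU : z ∈ U y := hφ y (subset_closure (by simpa [Function.support] using hyne))
        have hzy : dist (x' : X) (y : X) < infDist (y : X) A / 3 := by
          simpa [U, mem_ball, Subtype.dist_eq] using hzU
        have h1 : infDist (y : X) A ≤ infDist x' A + dist (y : X) x' :=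
          infDist_le_infDist_add_dist
        have h2 : infDist x' A ≤ dist x' x := infDist_le_dist_of_mem hx
        have hdyx : dist (y : X) x' = dist x' (y : X) := dist_comm _ _
        have hdy : infDist (y : X) A ≤ 3/2 * dist x' x := by
          nlinarith [hzy, h1, h2, hdyx]
        have h3 : dist (az y) x ≤ dist (az y) (y : X) + dist (y : X) x' + dist x' x :=
          dist_triangle4 _ _ _ _
        have h4 : dist (az y) (y : X) < 2 * infDist (y : X) A := by
          rw [dist_comm]; exact hazd y
        have h5 : dist (az y) x < δ := by nlinarith [hx', dist_nonneg (x := x') (y := x)]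
        have : dist (⟨az y, hazA y⟩ : A) ⟨x, hx⟩ < δ := by rwa [Subtype.dist_eq]
        exact hδg this
      -- put it together
      have hHz : H z = ∑ y ∈ T, φ y z • vals y :=
        finsum_eq_finset_sum_of_support_subset _ hsupp
      have : dist (G x') (G x) = ‖(∑ y ∈ T, φ y z • vals y) - g ⟨x, hx⟩‖ := by
        rw [hGx', hGa, hHz, dist_eq_norm]
      rw [this]
      have hrw : (∑ y ∈ T, φ y z • vals y) - g ⟨x, hx⟩
          = ∑ y ∈ T, φ y z • (vals y - g ⟨x, hx⟩) := by
        calc (∑ y ∈ T, φ y z • vals y) - g ⟨x, hx⟩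
            = (∑ y ∈ T, φ y z • vals y) - (∑ y ∈ T, φ y z) • g ⟨x, hx⟩ := by
              rw [hsum1, one_smul]
          _ = ∑ y ∈ T, (φ y z • vals y - φ y z • g ⟨x, hx⟩) := by
              rw [Finset.sum_smul, ← Finset.sum_sub_distrib]
          _ = ∑ y ∈ T, φ y z • (vals y - g ⟨x, hx⟩) := by
              simp [smul_sub]
      rw [hrw]
      calc ‖∑ y ∈ T, φ y z • (vals y - g ⟨x, hx⟩)‖
          ≤ ∑ y ∈ T, ‖φ y z • (vals y - g ⟨x, hx⟩)‖ := norm_sum_le _ _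
        _ = ∑ y ∈ T, φ y z * ‖vals y - g ⟨x, hx⟩‖ := by
            refine Finset.sum_congr rfl fun y _ => ?_
            rw [norm_smul, Real.norm_of_nonneg (φ.nonneg _ _)]
        _ ≤ ∑ y ∈ T, φ y z * (ε/2) := by
            refine Finset.sum_le_sum fun y hy => ?_
            refine mul_le_mul_of_nonneg_left ?_ (φ.nonneg _ _)
            have := key y hy
            rw [dist_eq_norm] at this
            exact this.le
        _ = ε/2 := by rw [← Finset.sum_mul, hsum1, one_mul]
        _ < ε := by linarith
  · -- off A: locally G = H ∘ inclusion
    have hmem : Ω ∈ 𝓝 x := hΩo.mem_nhds hx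
    have hco : ContinuousOn G Ω := by
      rw [continuousOn_iff_continuous_restrict]
      have : Set.restrict Ω G = H := by
        funext z
        simp only [Set.restrict, G]
        exact dif_neg z.2
      change Continuous (Set.restrict Ω G); rw [this]; exact Hcont
    exact hco.continuousAt hmem

end Dugundji
namespace Stmt5Aux
noncomputable section
open Filter Topology Set Function Metric TopologicalSpace

instance : SecondCountableTopology (Cp S) :=
  inferInstanceAs (SecondCountableTopology ↥{f : S → ℝ | Continuous f})

instance : MetrizableSpace (Cp S) :=
  inferInstanceAs (MetrizableSpace ↥{f : S → ℝ | Continuous f})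

end
end Stmt5Aux

open Filter Topology Function TopologicalSpace

theorem stmt5 (E : Type*) [NormedAddCommGroup E] [NormedSpace ℝ E] [CompleteSpace E] :
    (∃ T : Cp ↥convSeq → WeakSpace ℝ E, Continuous T ∧ Function.Surjective T) ↔
      TopologicalSpace.SeparableSpace E := by
  constructor
  · rintro ⟨T, hT, hTsurj⟩
    haveI : SeparableSpace (WeakSpace ℝ E) := hTsurj.denseRange.separableSpace hT
    obtain ⟨D, hDc, hDd⟩ := TopologicalSpace.exists_countable_dense (WeakSpace ℝ E)
    set D' : Set E := (toWeakSpace ℝ E).symm '' D with hD'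
    have hD'c : D'.Countable := hDc.image _
    have hspan : ∀ x : E, x ∈ closure (Submodule.span ℝ D' : Set E) := by
      intro x
      by_contra hx
      obtain ⟨φ, u, hu1, hu2⟩ := geometric_hahn_banach_closed_point
        ((Submodule.span ℝ D').convex.closure) isClosed_closure hx
      have hvan : ∀ m ∈ Submodule.span ℝ D', φ m = 0 := by
        intro m hm
        by_contra h0
        have hsm : φ (((u+1)/φ m) • m) < u :=
          hu1 _ (subset_closure (Submodule.smul_mem _ _ hm))
        rw [map_smul, smul_eq_mul, div_mul_cancel₀ _ h0] at hsm
        linarith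
      have hu0 : 0 < u := by
        have := hu1 0 (subset_closure (Submodule.zero_mem _))
        simpa using this
      have hc : Continuous fun w : WeakSpace ℝ E => φ ((toWeakSpace ℝ E).symm w) :=
        WeakBilin.eval_continuous ((topDualPairing ℝ E).flip) φ
      have hWopen : IsOpen {w : WeakSpace ℝ E | u < φ ((toWeakSpace ℝ E).symm w)} :=
        isOpen_Ioi.preimage hc
      have hWne : {w : WeakSpace ℝ E | u < φ ((toWeakSpace ℝ E).symm w)}.Nonempty :=
        ⟨toWeakSpace ℝ E x, by simpa using hu2⟩
      obtain ⟨d, hdD, hdW⟩ := hDd.exists_mem_open hWopen hWne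
      have hd0 : φ ((toWeakSpace ℝ E).symm d) = 0 :=
        hvan _ (Submodule.subset_span ⟨d, hdD, rfl⟩)
      rw [Set.mem_setOf_eq, hd0] at hdW
      linarith
    have hsepuniv : IsSeparable (Set.univ : Set E) := by
      have h1 : IsSeparable (closure (Submodule.span ℝ D' : Set E)) :=
        (hD'c.isSeparable.span).closure
      exact h1.mono fun x _ => hspan x
    exact (TopologicalSpace.isSeparable_univ_iff).1 hsepuniv
  · intro hsep
    haveI := hsep
    haveI : SecondCountableTopology E := UniformSpace.secondCountable_of_separable E
    obtain ⟨u, hu, husurj⟩ := PolishSpace.exists_nat_nat_continuous_surjective E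
    letI : MetricSpace (Cp ↥convSeq) := TopologicalSpace.metrizableSpaceMetric _
    have hAnon : Stmt5Aux.Aset.Nonempty := by
      obtain ⟨a, _⟩ := Stmt5Aux.rhoA_surjective (fun _ => 0)
      exact ⟨a.1, a.2⟩
    have hgc : Continuous (u ∘ Stmt5Aux.rhoA) := hu.comp Stmt5Aux.continuous_rhoA
    obtain ⟨G, hGc, hGA⟩ := dugundji_ext Stmt5Aux.isClosed_Aset hAnon hgc
    refine ⟨fun f => toWeakSpaceCLM ℝ E (G f), ((toWeakSpaceCLM ℝ E).continuous).comp hGc, ?_⟩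
    intro w
    obtain ⟨α, hα⟩ := husurj ((toWeakSpace ℝ E).symm w)
    obtain ⟨a, ha⟩ := Stmt5Aux.rhoA_surjective α
    refine ⟨a.1, ?_⟩
    have h1 : G a.1 = (u ∘ Stmt5Aux.rhoA) a := hGA a
    simp only [h1, Function.comp_apply, ha, hα]
    exact (toWeakSpace ℝ E).apply_symm_apply w
end

section
/- Let X be an infinite Tychonoff space, E a Banach space, and T: C_p(X) → E_w a sequentially continuous map. Define B(T) as the set of points t ∈ X having an open neighborhood U such that sup{‖T(f)‖ : f ∈ C(X), supp(f) ⊆ U} < ∞. Then X \ B(T) is finite. -/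
open Filter Topology

-- Step lemma: split an infinite set inside an open set
lemma my_step {X : Type*} [TopologicalSpace X] [T3Space X]
    {A G : Set X} (hG : IsOpen G) (hAG : A ⊆ G) (hA : A.Infinite) :
    ∃ x ∈ A, ∃ N A' G' : Set X, IsOpen N ∧ x ∈ N ∧ N ⊆ G ∧ IsOpen G' ∧ G' ⊆ G ∧
      Disjoint N G' ∧ A' ⊆ A ∧ A' ⊆ G' ∧ A'.Infinite := by
  obtain ⟨a, ha, b, hb, hab⟩ := hA.nontrivial
  obtain ⟨U, V, hU, hV, haU, hbV, hUV⟩ := t2_separation hab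
  obtain ⟨Ca, hCa_nhds, hCa_closed, hCaU⟩ :=
    exists_mem_nhds_isClosed_subset (((hU.inter hG).mem_nhds ⟨haU, hAG ha⟩))
  obtain ⟨Cb, hCb_nhds, hCb_closed, hCbV⟩ :=
    exists_mem_nhds_isClosed_subset (((hV.inter hG).mem_nhds ⟨hbV, hAG hb⟩))
  have hCaCb : Disjoint Ca Cb :=
    hUV.mono (hCaU.trans Set.inter_subset_left) (hCbV.trans Set.inter_subset_left)
  by_cases hcase : (A \ Ca).Infinite
  · refine ⟨a, ha, interior Ca, A \ Ca, G ∩ Caᶜ, isOpen_interior,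
      mem_interior_iff_mem_nhds.2 hCa_nhds,
      (interior_subset.trans hCaU).trans Set.inter_subset_right,
      hG.inter hCa_closed.isOpen_compl, Set.inter_subset_left, ?_, Set.diff_subset, ?_, hcase⟩
    · exact Set.disjoint_left.2 fun x hx ⟨_, hx2⟩ => hx2 (interior_subset hx)
    · exact fun x hx => ⟨hAG hx.1, hx.2⟩
  · have hACa : (A ∩ Ca).Infinite := by
      have : A \ (A \ Ca) = A ∩ Ca := by ext x; simp (config := {contextual := true})
      simpa [this] using hA.diff (Set.not_infinite.mp hcase)
    refine ⟨b, hb, interior Cb, A ∩ Ca, G ∩ Cbᶜ, isOpen_interior,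
      mem_interior_iff_mem_nhds.2 hCb_nhds,
      (interior_subset.trans hCbV).trans Set.inter_subset_right,
      hG.inter hCb_closed.isOpen_compl, Set.inter_subset_left, ?_, Set.inter_subset_left,
      ?_, hACa⟩
    · exact Set.disjoint_left.2 fun x hx ⟨_, hx2⟩ => hx2 (interior_subset hx)
    · exact fun x hx => ⟨hAG hx.1, fun hxb => (hCaCb.le_bot ⟨hx.2, hxb⟩)⟩

lemma my_seq {X : Type*} [TopologicalSpace X] [T3Space X]
    {A : Set X} (hA : A.Infinite) :
    ∃ (t : ℕ → X) (N : ℕ → Set X), (∀ n, t n ∈ A) ∧ (∀ n, IsOpen (N n)) ∧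
      (∀ n, t n ∈ N n) ∧ Pairwise (Function.onFun Disjoint N) := by
  set St := {p : Set X × Set X // IsOpen p.2 ∧ p.1 ⊆ p.2 ∧ p.1.Infinite} with hSt
  have key : ∀ s : St, ∃ (x : X) (N : Set X) (s' : St),
      x ∈ s.1.1 ∧ IsOpen N ∧ x ∈ N ∧ N ⊆ s.1.2 ∧ s'.1.2 ⊆ s.1.2 ∧ Disjoint N s'.1.2 ∧
        s'.1.1 ⊆ s.1.1 := by
    rintro ⟨⟨B, G⟩, hG, hBG, hB⟩
    obtain ⟨x, hx, N, A', G', hN, hxN, hNG, hG', hG'G, hdisj, hA'A, hA'G', hA'inf⟩ :=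
      my_step hG hBG hB
    exact ⟨x, N, ⟨(A', G'), hG', hA'G', hA'inf⟩, hx, hN, hxN, hNG, hG'G, hdisj, hA'A⟩
  choose x N nxt hx hN hxN hNG hGsub hdisj hAsub using key
  let s0 : St := ⟨(A, Set.univ), isOpen_univ, Set.subset_univ _, hA⟩
  let seq : ℕ → St := fun n => nxt^[n] s0
  have hseq_succ : ∀ n, seq (n + 1) = nxt (seq n) := fun n =>
    Function.iterate_succ_apply' nxt n s0
  -- A-invariant
  have hAinv : ∀ n, (seq n).1.1 ⊆ A := by
    intro n
    induction n with
    | zero => exact le_refl _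
    | succ k ih => rw [hseq_succ]; exact (hAsub (seq k)).trans ih
  -- G antitone
  have hGanti : ∀ m n, m ≤ n → (seq n).1.2 ⊆ (seq m).1.2 := by
    intro m n hmn
    induction n with
    | zero => simp_all
    | succ k ih =>
      rcases Nat.lt_or_ge m (k+1) with h | h
      · rw [hseq_succ]; exact (hGsub (seq k)).trans (ih (Nat.lt_succ_iff.mp h))
      · have : m = k + 1 := le_antisymm hmn h
        subst this; exact le_refl _
  refine ⟨fun n => x (seq n), fun n => N (seq n), fun n => hAinv n (hx (seq n)),
    fun n => hN _, fun n => hxN _, ?_⟩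
  have main : ∀ m n, m < n → Disjoint (N (seq m)) (N (seq n)) := by
    intro m n hmn
    have h1 : N (seq n) ⊆ (seq (m+1)).1.2 :=
      (hNG (seq n)).trans (hGanti (m+1) n hmn)
    have h2 : Disjoint (N (seq m)) (seq (m+1)).1.2 := by
      rw [hseq_succ]; exact hdisj (seq m)
    exact h2.mono_right h1
  intro m n hmn
  rcases Nat.lt_or_ge m n with h | h
  · exact main m n h
  · exact (main n m (lt_of_le_of_ne h (Ne.symm hmn))).symm

theorem stmt6 {X : Type*} [TopologicalSpace X] [T35Space X] [Infinite X]
    {E : Type*} [NormedAddCommGroup E] [NormedSpace ℝ E] [CompleteSpace E]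
    (T : C(X, ℝ) → E)
    (hT : ∀ (f : ℕ → C(X, ℝ)) (g : C(X, ℝ)),
      (∀ x, Tendsto (fun n => f n x) atTop (𝓝 (g x))) →
      ∀ φ : E →L[ℝ] ℝ, Tendsto (fun n => φ (T (f n))) atTop (𝓝 (φ (T g)))) :
    Set.Finite {t : X | ¬ ∃ U : Set X, IsOpen U ∧ t ∈ U ∧
      ∃ M : ℝ, ∀ f : C(X, ℝ), Function.support f ⊆ U → ‖T f‖ ≤ M} := by
  by_contra hfin
  obtain ⟨t, N, htA, hNopen, htN, hdisj⟩ := my_seq (X := X) hfin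
  have hf : ∀ n : ℕ, ∃ f : C(X, ℝ), Function.support f ⊆ N n ∧ (n : ℝ) < ‖T f‖ := by
    intro n
    by_contra h
    push_neg at h
    exact htA n ⟨N n, hNopen n, htN n, n, h⟩
  choose f hsupp hnorm using hf
  have hconv : ∀ x, Tendsto (fun n => f n x) atTop (𝓝 ((0 : C(X, ℝ)) x)) := by
    intro x
    have huniq : ∀ m n : ℕ, f m x ≠ 0 → f n x ≠ 0 → m = n := by
      intro m n hm hn
      by_contra hmn
      exact (hdisj hmn).le_bot ⟨hsupp m hm, hsupp n hn⟩
    have : ∀ᶠ n in atTop, f n x = 0 := by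
      by_cases hex : ∃ m, f m x ≠ 0
      · obtain ⟨m, hm⟩ := hex
        filter_upwards [eventually_gt_atTop m] with n hn
        by_contra h0
        exact absurd (huniq m n hm h0) hn.ne
      · push_neg at hex
        exact Eventually.of_forall hex
    simpa using Tendsto.congr' (this.mono fun n hn => hn.symm) tendsto_const_nhds
  -- Banach-Steinhaus via double dual
  set g : ℕ → StrongDual ℝ E →L[ℝ] ℝ :=
    fun n => NormedSpace.inclusionInDoubleDual ℝ E (T (f n)) with hg
  have hbdd : ∀ φ : StrongDual ℝ E, ∃ C, ∀ n, ‖g n φ‖ ≤ C := by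
    intro φ
    have := (hT f 0 hconv φ).norm
    obtain ⟨C, hC⟩ := this.bddAbove_range
    exact ⟨C, fun n => hC ⟨n, rfl⟩⟩
  obtain ⟨C', hC'⟩ := banach_steinhaus hbdd
  have hnormeq : ∀ n, ‖g n‖ = ‖T (f n)‖ := fun n =>
    (NormedSpace.inclusionInDoubleDualLi ℝ (E := E)).norm_map (T (f n))
  obtain ⟨n, hn⟩ := exists_nat_gt C'
  have h1 : (n : ℝ) < ‖T (f n)‖ := hnorm n
  have h2 : ‖T (f n)‖ ≤ C' := by rw [← hnormeq n]; exact hC' n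
  linarith
end

section
/- Let X be an infinite regular Hausdorff space and A an infinite subset of X. Then there exist a sequence (t_n) of points of A and a sequence (U_n) of pairwise disjoint open subsets of X with t_n ∈ U_n for every n. -/
open Filter Topology

lemma stmt7_key {X : Type*} [TopologicalSpace X] [RegularSpace X] [T2Space X]
    (A : Set X) (W : Set X) (hW : IsOpen W) (h : (A ∩ W).Infinite) :
    ∃ (t : X) (U V : Set X), t ∈ A ∧ IsOpen U ∧ IsOpen V ∧ t ∈ U ∧ U ⊆ W ∧ V ⊆ W ∧
      (A ∩ V).Infinite ∧ Disjoint U V := by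
  set B := A ∩ W with hB
  obtain ⟨a, ha, b, hb, hab⟩ := h.nontrivial
  obtain ⟨Wa, Wb, hWa, hWb, haWa, hbWb, hd⟩ := t2_separation hab
  by_cases hcase : (B ∩ Wa).Infinite
  · refine ⟨b, Wb ∩ W, Wa ∩ W, hb.1, hWb.inter hW, hWa.inter hW, ⟨hbWb, hb.2⟩,
      Set.inter_subset_right, Set.inter_subset_right, ?_, ?_⟩
    · have : A ∩ (Wa ∩ W) = B ∩ Wa := by
        rw [hB]; ext x; simp; tauto
      rw [this]; exact hcase
    · exact (hd.mono Set.inter_subset_left Set.inter_subset_left).symm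
  · -- B \ Wa is infinite
    have hinf : (B \ Wa).Infinite := by
      have : B ⊆ (B ∩ Wa) ∪ (B \ Wa) := by
        intro x hx; by_cases h' : x ∈ Wa
        · exact Or.inl ⟨hx, h'⟩
        · exact Or.inr ⟨hx, h'⟩
      rw [Set.not_infinite] at hcase
      by_contra hfin
      rw [Set.not_infinite] at hfin
      exact h ((hcase.union hfin).subset this)
    obtain ⟨t', ht'nhds, ht'closed, ht'sub⟩ :=
      exists_mem_nhds_isClosed_subset (hWa.mem_nhds haWa)
    refine ⟨a, interior t' ∩ W, t'ᶜ ∩ W, ha.1, isOpen_interior.inter hW,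
      ht'closed.isOpen_compl.inter hW, ⟨mem_interior_iff_mem_nhds.mpr ht'nhds, ha.2⟩,
      Set.inter_subset_right, Set.inter_subset_right, ?_, ?_⟩
    · apply hinf.mono
      intro x hx
      exact ⟨hx.1.1, fun h' => hx.2 (ht'sub h'), hx.1.2⟩
    · apply Disjoint.mono Set.inter_subset_left Set.inter_subset_left
      exact disjoint_compl_right.mono_left interior_subset

theorem stmt7 {X : Type*} [TopologicalSpace X] [RegularSpace X] [T2Space X] [Infinite X]
    (A : Set X) (hA : A.Infinite) :
    ∃ (t : ℕ → X) (U : ℕ → Set X), (∀ n, t n ∈ A) ∧ (∀ n, IsOpen (U n)) ∧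
      (∀ n, t n ∈ U n) ∧ Pairwise (Function.onFun Disjoint U) := by
  classical
  let T := {W : Set X // IsOpen W ∧ (A ∩ W).Infinite}
  have step : ∀ s : T, ∃ r : X × Set X × T, r.1 ∈ A ∧ IsOpen r.2.1 ∧ r.1 ∈ r.2.1 ∧
      r.2.1 ⊆ s.1 ∧ r.2.2.1 ⊆ s.1 ∧ Disjoint r.2.1 r.2.2.1 := by
    intro ⟨W, hWo, hWinf⟩
    obtain ⟨t, U, V, htA, hU, hV, htU, hUW, hVW, hVinf, hdis⟩ := stmt7_key A W hWo hWinf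
    exact ⟨⟨t, U, ⟨V, hV, hVinf⟩⟩, htA, hU, htU, hUW, hVW, hdis⟩
  choose F hF1 hF2 hF3 hF4 hF5 hF6 using step
  have h0 : IsOpen (Set.univ : Set X) ∧ (A ∩ Set.univ).Infinite :=
    ⟨isOpen_univ, by simpa using hA⟩
  let seq : ℕ → T := fun n => Nat.rec ⟨Set.univ, h0⟩ (fun _ s => (F s).2.2) n
  have hseq : ∀ n, seq (n + 1) = (F (seq n)).2.2 := fun n => rfl
  refine ⟨fun n => (F (seq n)).1, fun n => (F (seq n)).2.1,
    fun n => hF1 _, fun n => hF2 _, fun n => hF3 _, ?_⟩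
  have chain : ∀ m n, m ≤ n → (seq n).1 ⊆ (seq m).1 := by
    intro m n hmn
    induction n with
    | zero => simp at hmn; subst hmn; exact le_refl _
    | succ k ih =>
      rcases Nat.lt_or_ge m (k + 1) with h | h
      · exact Set.Subset.trans (by rw [hseq]; exact hF5 (seq k)) (ih (Nat.lt_succ_iff.mp h))
      · have : m = k + 1 := le_antisymm hmn h
        subst this; exact le_refl _
  have key : ∀ m n, m < n → Disjoint ((F (seq m)).2.1) ((F (seq n)).2.1) := by
    intro m n hmn
    have h1 : (F (seq n)).2.1 ⊆ (seq (m + 1)).1 :=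
      Set.Subset.trans (hF4 (seq n)) (chain (m + 1) n hmn)
    have h2 : (seq (m + 1)).1 = (F (seq m)).2.2.1 := by rw [hseq]
    exact (hF6 (seq m)).mono_right (h2 ▸ h1)
  intro m n hmn
  rcases Nat.lt_or_ge m n with h | h
  · exact key m n h
  · exact (key n m (lt_of_le_of_ne h (Ne.symm hmn))).symm
end

section
/- If a Tychonoff space X is a countable union of scattered compact subsets, then C_p(X) is a Fréchet–Urysohn space. -/
open Filter Topology

/-- A subset `S` of a topological space is scattered if every nonempty subset `T ⊆ S`
has a point isolated in the subspace topology of `T`. -/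
def IsScatteredSet {X : Type*} [TopologicalSpace X] (S : Set X) : Prop :=
  ∀ T ⊆ S, T.Nonempty → ∃ x ∈ T, ∃ U : Set X, IsOpen U ∧ U ∩ T = {x}

section Derived

variable {Z : Type*} [TopologicalSpace Z]

/-- The derived set of `S`. -/
def dset (S : Set Z) : Set Z := {x | x ∈ closure (S \ {x})}

lemma dset_mono {S T : Set Z} (h : S ⊆ T) : dset S ⊆ dset T := fun _x hx =>
  closure_mono (Set.diff_subset_diff_left h) hx

lemma dset_subset_of_isClosed {S : Set Z} (hS : IsClosed S) : dset S ⊆ S := fun _x hx =>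
  hS.closure_subset_iff.2 Set.diff_subset hx

lemma not_mem_dset {S : Set Z} {x : Z} (U : Set Z) (hU : IsOpen U) (hxU : x ∈ U)
    (h : U ∩ S ⊆ {x}) : x ∉ dset S := by
  intro hx
  obtain ⟨y, hyU, hyS, hyx⟩ := mem_closure_iff.1 hx U hU hxU
  exact hyx (h ⟨hyU, hyS⟩)

lemma isClosed_dset [T1Space Z] (S : Set Z) : IsClosed (dset S) := by
  rw [← isOpen_compl_iff, isOpen_iff_forall_mem_open]
  intro x hx
  have hx' : x ∉ closure (S \ {x}) := hx
  rw [mem_closure_iff] at hx'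
  push_neg at hx'
  obtain ⟨U, hUo, hxU, hUe⟩ := hx'
  refine ⟨U, ?_, hUo, hxU⟩
  intro y hyU
  by_cases hyx : y = x
  · subst hyx; exact hx
  · refine not_mem_dset (U \ {x}) (hUo.sdiff isClosed_singleton) ⟨hyU, hyx⟩ ?_
    intro a ⟨⟨haU, hax⟩, haS⟩
    exfalso
    have : a ∈ U ∩ (S \ {x}) := ⟨haU, haS, hax⟩
    rw [hUe] at this
    exact this

lemma finite_of_dset_empty {S : Set Z} (hc : IsCompact S) (hd : dset S = ∅) : S.Finite := by
  have h : ∀ x ∈ S, ∃ U : Set Z, IsOpen U ∧ x ∈ U ∧ U ∩ S ⊆ {x} := by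
    intro x hx
    have hxd : x ∉ dset S := by rw [hd]; exact Set.notMem_empty x
    have hx' : x ∉ closure (S \ {x}) := hxd
    rw [mem_closure_iff] at hx'
    push_neg at hx'
    obtain ⟨U, hUo, hxU, hUe⟩ := hx'
    refine ⟨U, hUo, hxU, ?_⟩
    intro a ⟨haU, haS⟩
    by_contra hax
    have : a ∈ U ∩ (S \ {x}) := ⟨haU, haS, hax⟩
    rw [hUe] at this
    exact this
  choose! U hUo hxU hUS using h
  obtain ⟨t, hts, hcov⟩ := hc.elim_nhds_subcover U (fun x hx => (hUo x hx).mem_nhds (hxU x hx))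
  refine Set.Finite.subset t.finite_toSet ?_
  intro y hyS
  obtain ⟨x, hxt, hyU⟩ := Set.mem_iUnion₂.1 (hcov hyS)
  have : y = x := hUS x (hts x hxt) ⟨hyU, hyS⟩
  rwa [this]

end Derived

section Iteration

universe u

variable {Z : Type u} [TopologicalSpace Z]

noncomputable def its (F : Set Z) (o : Ordinal.{u}) : Set Z :=
  Ordinal.limitRecOn o F (fun _ S => dset S) (fun o _ ih => ⋂ (β) (h : β < o), ih β h)

@[simp] lemma its_zero (F : Set Z) : its F 0 = F := Ordinal.limitRecOn_zero ..

@[simp] lemma its_succ (F : Set Z) (o : Ordinal) : its F (Order.succ o) = dset (its F o) :=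
  Ordinal.limitRecOn_succ ..

lemma its_limit (F : Set Z) {o : Ordinal} (h : Order.IsSuccLimit o) :
    its F o = ⋂ (β) (_ : β < o), its F β := Ordinal.limitRecOn_limit _ _ _ _ h

lemma its_isClosed_antitone {F : Set Z} [T1Space Z] (hF : IsClosed F) (o : Ordinal) :
    IsClosed (its F o) ∧ ∀ β ≤ o, its F o ⊆ its F β := by
  induction o using Ordinal.induction with
  | h o IH =>
  rcases Ordinal.zero_or_succ_or_isSuccLimit o with h0 | ⟨a, rfl⟩ | hlim
  · subst h0
    refine ⟨by simpa using hF, fun β hβ => ?_⟩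
    rw [nonpos_iff_eq_zero.1 hβ]
  · have ha := IH a (Order.lt_succ a)
    constructor
    · rw [its_succ]; exact isClosed_dset _
    · intro β hβ
      rcases (Order.le_succ_iff_eq_or_le.1 hβ) with rfl | hle
      · exact subset_rfl
      · rw [its_succ]
        exact (dset_subset_of_isClosed ha.1).trans (ha.2 β hle)
  · constructor
    · rw [its_limit _ hlim]
      exact isClosed_iInter fun β => isClosed_iInter fun hβ => (IH β hβ).1
    · intro β hβ
      rcases hβ.lt_or_eq with hlt | rfl
      · rw [its_limit _ hlim]
        exact fun x hx => by
          simp only [Set.mem_iInter] at hx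
          exact hx β hlt
      · exact subset_rfl

lemma its_isClosed {F : Set Z} [T1Space Z] (hF : IsClosed F) (o : Ordinal) :
    IsClosed (its F o) := (its_isClosed_antitone hF o).1

lemma its_antitone {F : Set Z} [T1Space Z] (hF : IsClosed F) {β o : Ordinal} (h : β ≤ o) :
    its F o ⊆ its F β := (its_isClosed_antitone hF o).2 β h

lemma its_subset {F : Set Z} [T1Space Z] (hF : IsClosed F) (o : Ordinal) : its F o ⊆ F := by
  have := its_antitone hF (zero_le : (0 : Ordinal) ≤ o)
  rwa [its_zero] at this

lemma its_mono_set {F G : Set Z} (h : F ⊆ G) (o : Ordinal) : its F o ⊆ its G o := by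
  induction o using Ordinal.induction with
  | h o IH =>
  rcases Ordinal.zero_or_succ_or_isSuccLimit o with h0 | ⟨a, rfl⟩ | hlim
  · subst h0; simpa using h
  · rw [its_succ, its_succ]
    exact dset_mono (IH a (Order.lt_succ a))
  · rw [its_limit _ hlim, its_limit _ hlim]
    exact Set.iInter₂_mono fun β hβ => IH β hβ

lemma exists_its_eq_empty {F : Set Z} [T1Space Z] (hF : IsClosed F)
    (hsc : IsScatteredSet F) : ∃ o : Ordinal.{u}, its F o = ∅ := by
  by_contra hcon
  push_neg at hcon
  have hstep : ∀ o : Ordinal, ∃ x, x ∈ its F o ∧ x ∉ its F (Order.succ o) := by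
    intro o
    obtain ⟨x, hxT, U, hUo, hU⟩ := hsc (its F o) (its_subset hF o) (hcon o)
    refine ⟨x, hxT, ?_⟩
    rw [its_succ]
    have hxU : x ∈ U := by
      have : x ∈ U ∩ its F o := hU ▸ rfl
      exact this.1
    exact not_mem_dset U hUo hxU (hU.le.trans (by simp))
  have key : ∀ a b : Ordinal, a < b → its F a ≠ its F b := by
    intro a b hab heq
    obtain ⟨x, hx1, hx2⟩ := hstep a
    exact hx2 (its_antitone hF (Order.succ_le_of_lt hab) (heq ▸ hx1))
  have hinj : Function.Injective (its F) := by
    intro a b hab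
    rcases lt_trichotomy a b with h | h | h
    · exact absurd hab (key a b h)
    · exact h
    · exact absurd hab.symm (key b a h)
  exact not_small_ordinal.{u, u} (small_of_injective hinj)

end Iteration

section Subcover

universe u

variable {Z : Type u} [TopologicalSpace Z] [T1Space Z]

lemma countable_subcover_aux {ι : Type*} (U : ι → Set Z) (hU : ∀ i, IsGδ (U i))
    (o : Ordinal.{u}) :
    ∀ F : Set Z, IsCompact F → IsClosed F → IsScatteredSet F → its F o = ∅ →
      F ⊆ ⋃ i, U i → ∃ s : Set ι, s.Countable ∧ F ⊆ ⋃ i ∈ s, U i := by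
  induction o using Ordinal.induction with
  | h o IH =>
  intro F hFc hFcl hFsc hits hcov
  rcases F.eq_empty_or_nonempty with rfl | hFne
  · exact ⟨∅, Set.countable_empty, by simp⟩
  rcases Ordinal.zero_or_succ_or_isSuccLimit o with rfl | ⟨a, rfl⟩ | hlim
  · rw [its_zero] at hits
    exact absurd hits hFne.ne_empty
  · -- successor case
    rcases (its F a).eq_empty_or_nonempty with hSe | hSne
    · exact IH a (Order.lt_succ a) F hFc hFcl hFsc hSe hcov
    set S := its F a with hSdef
    have hScl : IsClosed S := its_isClosed hFcl a
    have hSsub : S ⊆ F := its_subset hFcl a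
    have hSco : IsCompact S := hFc.of_isClosed_subset hScl hSsub
    have hdS : dset S = ∅ := by rw [its_succ] at hits; exact hits
    have hSfin : S.Finite := finite_of_dset_empty hSco hdS
    have hpick : ∀ p ∈ S, ∃ i, p ∈ U i := fun p hp => Set.mem_iUnion.1 (hcov (hSsub hp))
    have hi : Nonempty ι := ⟨(hpick _ hSne.some_mem).choose⟩
    choose! ip hip using hpick
    have hW : ∀ p ∈ S, ∃ w : ℕ → Set Z, (∀ n, IsOpen (w n)) ∧ U (ip p) = ⋂ n, w n := by
      intro p hp
      obtain ⟨w, hw1, hw2⟩ := (hU (ip p)).eq_iInter_nat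
      exact ⟨w, hw1, hw2⟩
    choose! W hWo hWeq using hW
    haveI := hSfin.to_subtype
    set Fc : (↥S → ℕ) → Set Z := fun c => F ∩ ⋂ p : ↥S, (W p.1 (c p))ᶜ with hFcdef
    have hFcCl : ∀ c, IsClosed (Fc c) := fun c =>
      hFcl.inter (isClosed_iInter fun p => (hWo p.1 p.2 (c p)).isClosed_compl)
    have hFcCo : ∀ c, IsCompact (Fc c) :=
      fun c => hFc.of_isClosed_subset (hFcCl c) Set.inter_subset_left
    have hFcsc : ∀ c, IsScatteredSet (Fc c) :=
      fun c T hT => hFsc T (hT.trans Set.inter_subset_left)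
    have hFcits : ∀ c, its (Fc c) a = ∅ := by
      intro c
      have h1 : its (Fc c) a ⊆ S := its_mono_set Set.inter_subset_left a
      have h2 : its (Fc c) a ⊆ Fc c := its_subset (hFcCl c) a
      rw [Set.eq_empty_iff_forall_notMem]
      intro x hx
      have hxS : x ∈ S := h1 hx
      have hxFc : x ∈ Fc c := h2 hx
      have hxU : x ∈ U (ip x) := hip x hxS
      rw [hWeq x hxS] at hxU
      have hxW : x ∈ W x (c ⟨x, hxS⟩) := Set.mem_iInter.1 hxU _
      have := Set.mem_iInter.1 hxFc.2 ⟨x, hxS⟩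
      exact this hxW
    have hIH := fun c => IH a (Order.lt_succ a) (Fc c) (hFcCo c) (hFcCl c) (hFcsc c)
      (hFcits c) (Set.inter_subset_left.trans hcov)
    choose sc hscC hscCov using hIH
    refine ⟨(ip '' S) ∪ ⋃ c, sc c, ?_, ?_⟩
    · exact ((hSfin.image ip).countable).union (Set.countable_iUnion hscC)
    · intro x hxF
      by_cases hx : ∃ p ∈ S, x ∈ U (ip p)
      · obtain ⟨p, hpS, hxU⟩ := hx
        exact Set.mem_biUnion (Set.mem_union_left _ (Set.mem_image_of_mem _ hpS)) hxU
      · push_neg at hx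
        have hc : ∀ p : ↥S, ∃ n, x ∉ W p.1 n := by
          intro p
          have h1 := hx p.1 p.2
          rw [hWeq p.1 p.2] at h1
          simpa [Set.mem_iInter] using h1
        choose c hcpr using hc
        have hxFc : x ∈ Fc c := ⟨hxF, Set.mem_iInter.2 fun p => hcpr p⟩
        obtain ⟨i, his, hxi⟩ := Set.mem_iUnion₂.1 (hscCov c hxFc)
        exact Set.mem_biUnion (Set.mem_union_right _ (Set.mem_iUnion.2 ⟨c, his⟩)) hxi
  · -- limit case
    by_cases hall : ∀ β < o, (its F β).Nonempty
    · exfalso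
      haveI : Nonempty {β : Ordinal.{u} // β < o} := ⟨⟨0, hlim.pos⟩⟩
      have hne := IsCompact.nonempty_iInter_of_directed_nonempty_isCompact_isClosed
        (fun β : {β : Ordinal.{u} // β < o} => its F β.1)
        (fun β γ => ⟨⟨max β.1 γ.1, max_lt β.2 γ.2⟩,
          its_antitone hFcl (le_max_left _ _), its_antitone hFcl (le_max_right _ _)⟩)
        (fun β => hall β.1 β.2)
        (fun β => hFc.of_isClosed_subset (its_isClosed hFcl _) (its_subset hFcl _))
        (fun β => its_isClosed hFcl _)
      obtain ⟨x, hx⟩ := hne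
      have hx2 : x ∈ its F o := by
        rw [its_limit _ hlim]
        simp only [Set.mem_iInter] at hx ⊢
        exact fun β hβ => hx ⟨β, hβ⟩
      rw [hits] at hx2
      exact hx2
    · push_neg at hall
      obtain ⟨β, hβ, hem⟩ := hall
      exact IH β hβ F hFc hFcl hFsc hem hcov

lemma countable_subcover {ι : Type*} (U : ι → Set Z) (hU : ∀ i, IsGδ (U i))
    (F : Set Z) (hFc : IsCompact F) (hFcl : IsClosed F) (hFsc : IsScatteredSet F)
    (hcov : F ⊆ ⋃ i, U i) : ∃ s : Set ι, s.Countable ∧ F ⊆ ⋃ i ∈ s, U i := by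
  obtain ⟨o, ho⟩ := exists_its_eq_empty hFcl hFsc
  exact countable_subcover_aux U hU o F hFc hFcl hFsc ho hcov

end Subcover

section Pi

variable {X : Type*} [TopologicalSpace X]

lemma isScatteredSet_pi :
    ∀ (m : ℕ) (A : Fin m → Set X), (∀ i, IsScatteredSet (A i)) →
      IsScatteredSet (Set.univ.pi A)
  | 0 => by
    intro A _ T _ hTne
    obtain ⟨z, hz⟩ := hTne
    refine ⟨z, hz, Set.univ, isOpen_univ, ?_⟩
    rw [Set.univ_inter, Set.eq_singleton_iff_unique_mem]
    exact ⟨hz, fun w _ => funext fun i => i.elim0⟩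
  | (m + 1) => by
    intro A hA T hTsub hTne
    obtain ⟨x0, hx0T, U0, hU0o, hU0⟩ := hA 0 ((fun z => z 0) '' T)
      (by rintro _ ⟨z, hzT, rfl⟩; exact hTsub hzT 0 (Set.mem_univ 0)) (hTne.image _)
    set T' : Set (Fin m → X) := {w | Fin.cons x0 w ∈ T} with hT'
    have hT'sub : T' ⊆ Set.univ.pi (fun i : Fin m => A i.succ) := by
      intro w hw i _
      have := hTsub hw i.succ (Set.mem_univ _)
      rwa [Fin.cons_succ] at this
    have hT'ne : T'.Nonempty := by
      obtain ⟨z0, hz0T, hz0e⟩ := hx0T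
      refine ⟨Fin.tail z0, ?_⟩
      show Fin.cons x0 (Fin.tail z0) ∈ T
      rw [← hz0e, Fin.cons_self_tail]
      exact hz0T
    obtain ⟨w0, hw0T, U', hU'o, hU'⟩ :=
      isScatteredSet_pi m (fun i : Fin m => A i.succ) (fun i => hA i.succ) T' hT'sub hT'ne
    have hcont : Continuous (fun z : Fin (m+1) → X => Fin.tail z) :=
      continuous_pi fun i => continuous_apply i.succ
    refine ⟨Fin.cons x0 w0, hw0T, (fun z : Fin (m+1) → X => z 0) ⁻¹' U0 ∩
      (fun z : Fin (m+1) → X => Fin.tail z) ⁻¹' U',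
      (hU0o.preimage (continuous_apply 0)).inter (hU'o.preimage hcont), ?_⟩
    rw [Set.eq_singleton_iff_unique_mem]
    constructor
    · refine ⟨⟨?_, ?_⟩, hw0T⟩
      · have : x0 ∈ U0 ∩ ((fun z => z 0) '' T) := hU0 ▸ rfl
        simpa [Fin.cons_zero] using this.1
      · have : w0 ∈ U' ∩ T' := hU' ▸ rfl
        simpa [Fin.tail_cons] using this.1
    · rintro z ⟨⟨hz0, hzt⟩, hzT⟩
      have hz0' : z 0 = x0 := by
        have : z 0 ∈ U0 ∩ ((fun z => z 0) '' T) := ⟨hz0, ⟨z, hzT, rfl⟩⟩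
        rw [hU0] at this
        exact this
      have htail : Fin.tail z ∈ T' := by
        show Fin.cons x0 (Fin.tail z) ∈ T
        rw [← hz0', Fin.cons_self_tail]
        exact hzT
      have htl : Fin.tail z = w0 := by
        have : Fin.tail z ∈ U' ∩ T' := ⟨hzt, htail⟩
        rw [hU'] at this
        exact this
      rw [← Fin.cons_self_tail z, hz0', htl]

end Pi

theorem stmt8 {X : Type*} [TopologicalSpace X] [T35Space X]
    (K : ℕ → Set X) (hKcomp : ∀ n, IsCompact (K n)) (hKscat : ∀ n, IsScatteredSet (K n))
    (hcover : ⋃ n, K n = Set.univ) :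
    FrechetUrysohnSpace (Cp X) := by
  classical
  constructor
  intro A g hg
  have hAne : A.Nonempty := by
    rcases A.eq_empty_or_nonempty with rfl | h
    · simp at hg
    · exact h
  obtain ⟨f0, hf0⟩ := hAne
  rcases isEmpty_or_nonempty X with hX | hX
  · have hfg : f0 = g := Subtype.ext (funext fun x => hX.elim x)
    exact ⟨fun _ => f0, fun _ => hf0, by rw [hfg]; exact tendsto_const_nhds⟩
  obtain ⟨x0⟩ := hX
  have hgpos : ∀ k : ℕ, (0:ℝ) < 1/(k+1) := fun k => by positivity
  -- basic approximation property from closure membership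
  have H : ∀ (F : Finset X) (k : ℕ), ∃ f ∈ A, ∀ x ∈ F, |f.1 x - g.1 x| < 1/(k+1) := by
    intro F k
    set O : Set (Cp X) := {h | ∀ x ∈ F, |h.1 x - g.1 x| < 1/(k+1)} with hO
    have hOopen : IsOpen O := by
      have hOeq : O = Subtype.val ⁻¹'
          (⋂ x ∈ F, {u : X → ℝ | |u x - g.1 x| < 1/(k+1)}) := by
        ext h; simp [hO]
        exact ⟨fun H => (Set.mem_iInter₂.2 fun x hx => H x hx : (h.1 ∈ ⋂ x ∈ F, {u : X → ℝ | |u x - g.1 x| < ((k:ℝ) + 1)⁻¹})), fun H x hx => Set.mem_iInter₂.1 (H : (h.1 ∈ ⋂ x ∈ F, {u : X → ℝ | |u x - g.1 x| < ((k:ℝ) + 1)⁻¹})) x hx⟩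
      rw [hOeq]
      refine (isOpen_biInter_finset ?_).preimage continuous_subtype_val
      intro x _
      exact isOpen_lt (((continuous_apply x).sub continuous_const).abs) continuous_const
    have hgO : g ∈ O := fun x _ => by simpa using hgpos k
    obtain ⟨f, hfO, hfA⟩ := mem_closure_iff.1 hg O hOopen hgO
    exact ⟨f, hfA, hfO⟩
  -- choice of covering index
  have hKx : ∀ x : X, ∃ n, x ∈ K n := by
    intro x
    have hx := Set.mem_univ x
    rw [← hcover] at hx
    exact Set.mem_iUnion.1 hx
  choose κ hκ using hKx
  -- countable subcovers on finite powers
  have pow : ∀ (k m : ℕ) (v : Fin m → ℕ), ∃ s : Set ↥A, s.Countable ∧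
      (Set.univ.pi fun i => K (v i)) ⊆
        ⋃ f ∈ s, {z : Fin m → X | ∀ i, |(f : Cp X).1 (z i) - g.1 (z i)| < 1/(k+1)} := by
    intro k m v
    have hUo : ∀ f : ↥A, IsOpen
        {z : Fin m → X | ∀ i, |(f : Cp X).1 (z i) - g.1 (z i)| < 1/(k+1)} := by
      intro f
      have heq : {z : Fin m → X | ∀ i, |(f : Cp X).1 (z i) - g.1 (z i)| < 1/(k+1)} =
          ⋂ i, (fun z : Fin m → X => z i) ⁻¹'
            {x : X | |(f : Cp X).1 x - g.1 x| < 1/(k+1)} := by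
        ext z; simp
      rw [heq]
      exact isOpen_iInter_of_finite fun i =>
        (isOpen_lt (((f : Cp X).2.sub g.2).abs) continuous_const).preimage (continuous_apply i)
    refine countable_subcover (fun f : ↥A =>
        {z : Fin m → X | ∀ i, |(f : Cp X).1 (z i) - g.1 (z i)| < 1/(k+1)})
      (fun f => (hUo f).isGδ) _ (isCompact_univ_pi fun i => hKcomp (v i))
      (IsCompact.isClosed (isCompact_univ_pi fun i => hKcomp (v i)))
      (isScatteredSet_pi m _ fun i => hKscat (v i)) ?_
    intro z hz
    obtain ⟨f, hfA, hfp⟩ := H (Finset.image z Finset.univ) k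
    exact Set.mem_iUnion.2 ⟨⟨f, hfA⟩,
      fun i => hfp (z i) (Finset.mem_image_of_mem z (Finset.mem_univ i))⟩
  choose sc hscC hscCov using pow
  set AA : Set (Cp X) := {f0} ∪ ⋃ (k) (m) (v : Fin m → ℕ), Subtype.val '' sc k m v with hAAdef
  have hAAc : AA.Countable :=
    (Set.countable_singleton f0).union <| Set.countable_iUnion fun k =>
      Set.countable_iUnion fun m => Set.countable_iUnion fun v => ((hscC k m v).image _)
  have hAAsub : AA ⊆ A := by
    rintro f (hf | hf)
    · rw [Set.mem_singleton_iff] at hf; subst hf; exact hf0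
    · simp only [Set.mem_iUnion] at hf
      obtain ⟨k, m, v, y, hy, rfl⟩ := hf
      exact y.2
  obtain ⟨e, he⟩ := hAAc.exists_eq_range ⟨f0, Set.mem_union_left _ rfl⟩
  have heA : ∀ a, e a ∈ A := fun a => hAAsub (he ▸ Set.mem_range_self a)
  have PA : ∀ (k : ℕ) (F : Finset X), ∃ a : ℕ, ∀ x ∈ F, |(e a).1 x - g.1 x| < 1/(k+1) := by
    intro k F
    set m := F.card with hm
    set z : Fin m → X := fun i => (F.equivFin.symm i).1 with hz
    have hzmem : z ∈ Set.univ.pi fun i => K (κ (z i)) := fun i _ => hκ _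
    obtain ⟨f, hfs, hfz⟩ := Set.mem_iUnion₂.1 (hscCov k m (fun i => κ (z i)) hzmem)
    have hmem : (f : Cp X) ∈ AA := Set.mem_union_right _
      (Set.mem_iUnion.2 ⟨k, Set.mem_iUnion.2 ⟨m, Set.mem_iUnion.2
        ⟨_, Set.mem_image_of_mem _ hfs⟩⟩⟩)
    rw [he] at hmem
    obtain ⟨a, ha⟩ := hmem
    refine ⟨a, fun x hx => ?_⟩
    have hx' : x = z (F.equivFin ⟨x, hx⟩) := by simp [hz]
    rw [ha, hx']
    exact hfz _
  -- the key sequence of open sets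
  set V : ℕ → Set X := fun t => {x | |(e t.unpair.1).1 x - g.1 x| < 1/(t.unpair.2+1)} with hVdef
  have hVo : ∀ t, IsOpen (V t) := fun t =>
    isOpen_lt (((e t.unpair.1).2.sub g.2).abs) continuous_const
  have PA' : ∀ (k : ℕ) (F : Finset X), ∃ t : ℕ, t.unpair.2 = k ∧ ∀ x ∈ F, x ∈ V t := by
    intro k F
    obtain ⟨a, ha⟩ := PA k F
    refine ⟨Nat.pair a k, by simp, fun x hx => ?_⟩
    show |(e (Nat.pair a k).unpair.1).1 x - g.1 x| < 1/(((Nat.pair a k).unpair.2 : ℝ)+1)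
    rw [Nat.unpair_pair]
    exact ha x hx
  -- Lindelöf-type selection on each K n
  have covn : ∀ n : ℕ, ∃ s : Set ↥(K n), s.Countable ∧
      K n ⊆ ⋃ y ∈ s, ⋂ t ∈ {t : ℕ | (y : X) ∈ V t}, V t := by
    intro n
    refine countable_subcover (fun y : ↥(K n) => ⋂ t ∈ {t : ℕ | (y : X) ∈ V t}, V t)
      (fun y => IsGδ.biInter_of_isOpen (Set.to_countable _) fun t _ => hVo t)
      (K n) (hKcomp n) (hKcomp n).isClosed (hKscat n) ?_
    intro x hx
    exact Set.mem_iUnion.2 ⟨⟨x, hx⟩, Set.mem_iInter₂.2 fun t ht => ht⟩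
  choose cn hcnC hcnCov using covn
  set CY : Set X := insert x0 (⋃ n, Subtype.val '' cn n) with hCYdef
  have hCYc : CY.Countable :=
    (Set.countable_iUnion fun n => (hcnC n).image _).insert x0
  obtain ⟨xe, hxe⟩ := hCYc.exists_eq_range ⟨x0, Set.mem_insert _ _⟩
  have key : ∀ x : X, ∃ j : ℕ, ∀ t, xe j ∈ V t → x ∈ V t := by
    intro x
    obtain ⟨y, hys, hyx⟩ := Set.mem_iUnion₂.1 (hcnCov (κ x) (hκ x))
    have hyCY : (y : X) ∈ CY :=
      Set.mem_insert_iff.2 (Or.inr (Set.mem_iUnion.2 ⟨κ x, Set.mem_image_of_mem _ hys⟩))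
    rw [hxe] at hyCY
    obtain ⟨j, hj⟩ := hyCY
    refine ⟨j, fun t ht => ?_⟩
    rw [hj] at ht
    exact Set.mem_iInter₂.1 hyx t ht
  -- select the final sequence
  have pick : ∀ n : ℕ, ∃ t : ℕ, t.unpair.2 = n ∧ ∀ j ≤ n, xe j ∈ V t := by
    intro n
    obtain ⟨t, ht1, ht2⟩ := PA' n ((Finset.range (n+1)).image xe)
    exact ⟨t, ht1, fun j hj =>
      ht2 _ (Finset.mem_image_of_mem _ (Finset.mem_range.2 (Nat.lt_succ_of_le hj)))⟩
  choose tt htt1 htt2 using pick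
  refine ⟨fun n => e (tt n).unpair.1, fun n => heA _, ?_⟩
  have hiff : Tendsto (fun n => e (tt n).unpair.1) atTop (𝓝 g) ↔
      Tendsto (fun n => (e (tt n).unpair.1).1) atTop (𝓝 g.1) := tendsto_subtype_rng
  rw [hiff, tendsto_pi_nhds]
  intro x
  obtain ⟨j, hj⟩ := key x
  rw [Metric.tendsto_atTop]
  intro ε hε
  obtain ⟨N0, hN0⟩ := exists_nat_one_div_lt hε
  refine ⟨max j N0, fun n hn => ?_⟩
  have h2 : x ∈ V (tt n) := hj _ (htt2 n j (le_trans (le_max_left _ _) hn))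
  have h3 : |(e (tt n).unpair.1).1 x - g.1 x| < 1/(((tt n).unpair.2 : ℝ)+1) := h2
  rw [Real.dist_eq]
  have hn2 : (N0:ℝ) + 1 ≤ (n:ℝ) + 1 := by
    have hcast : (N0:ℝ) ≤ (n:ℝ) := Nat.cast_le.2 (le_trans (le_max_right _ _) hn)
    linarith
  calc |(e (tt n).unpair.1).1 x - g.1 x| < 1/(((tt n).unpair.2 : ℝ)+1) := h3
    _ = 1/((n:ℝ)+1) := by rw [htt1 n]
    _ ≤ 1/((N0:ℝ)+1) := one_div_le_one_div_of_le (by positivity) hn2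
    _ < ε := hN0
end

section
/- A compact Hausdorff space X is scattered if and only if there is no continuous surjection from X onto the interval [0,1]. -/
open Filter Topology

open Set in
theorem binary_expansion (y : ℝ) (h0 : 0 ≤ y) (h1 : y ≤ 1) :
    ∃ σ : ℕ → Bool, HasSum (fun n => (Bool.rec 0 1 (σ n) : ℝ) * (1/2)^(n+1)) y := by
  -- greedy partial sums
  let p : ℕ → ℝ := fun n => Nat.rec 0 (fun k pk => pk + (if pk + (1/2)^(k+1) ≤ y then (1/2)^(k+1) else 0)) n
  have hp0 : p 0 = 0 := rfl
  have hpsucc : ∀ n, p (n+1) = p n + (if p n + (1/2)^(n+1) ≤ y then ((1/2:ℝ))^(n+1) else 0) := fun n => rfl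
  set σ : ℕ → Bool := fun n => decide (p n + (1/2)^(n+1) ≤ y) with hσ
  have hterm : ∀ n, (Bool.rec 0 1 (σ n) : ℝ) * (1/2)^(n+1) =
      (if p n + (1/2)^(n+1) ≤ y then ((1/2:ℝ))^(n+1) else 0) := by
    intro n
    by_cases hc : p n + (1/2)^(n+1) ≤ y
    · rw [hσ]
      simp only [decide_eq_true hc, if_pos hc]
      norm_num
    · rw [hσ]
      simp only [decide_eq_false hc, if_neg hc]
      norm_num
  have hinv : ∀ n, p n ≤ y ∧ y ≤ p n + (1/2)^n := by
    intro n
    induction n with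
    | zero =>
      refine ⟨by simpa [hp0] using h0, ?_⟩
      rw [hp0]; norm_num; exact h1
    | succ k ih =>
      rw [hpsucc]
      by_cases hc : p k + (1/2)^(k+1) ≤ y
      · rw [if_pos hc]
        refine ⟨hc, ?_⟩
        have : ((1/2:ℝ))^k = (1/2)^(k+1) + (1/2)^(k+1) := by ring
        linarith [ih.2]
      · rw [if_neg hc]
        refine ⟨by simpa using ih.1, by push_neg at hc; linarith⟩
  have hpart : ∀ n, p n = ∑ i ∈ Finset.range n, (Bool.rec 0 1 (σ i) : ℝ) * (1/2)^(i+1) := by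
    intro n
    induction n with
    | zero => simp [hp0]
    | succ k ih => rw [Finset.sum_range_succ, ← ih, hpsucc, hterm]
  have hsummable : Summable (fun n => (Bool.rec 0 1 (σ n) : ℝ) * (1/2)^(n+1)) := by
    apply Summable.of_nonneg_of_le (fun n => ?_) (fun n => ?_)
      (summable_geometric_two.mul_right (1/2))
    · rw [hterm]; positivity
    · rw [hterm]
      have : ((1/2:ℝ))^(n+1) = (1/2)^n * (1/2) := by ring
      rw [this]
      split_ifs
      · exact le_rfl
      · positivity
  refine ⟨σ, ?_⟩
  have hnn : ∀ i, 0 ≤ (Bool.rec 0 1 (σ i) : ℝ) * (1/2)^(i+1) := by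
    intro i; rw [hterm]; positivity
  rw [hasSum_iff_tendsto_nat_of_nonneg hnn]
  have hcongr : (fun n => ∑ i ∈ Finset.range n, (Bool.rec 0 1 (σ i) : ℝ) * (1/2)^(i+1)) = p := by
    funext n; exact (hpart n).symm
  rw [hcongr]
  apply tendsto_of_tendsto_of_tendsto_of_le_of_le
    (g := fun n : ℕ => y - (1/2)^n) (h := fun _ : ℕ => y)
  · have : Tendsto (fun n : ℕ => ((1/2:ℝ))^n) atTop (𝓝 0) :=
      tendsto_pow_atTop_nhds_zero_of_lt_one (by norm_num) (by norm_num)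
    simpa using tendsto_const_nhds.sub this
  · exact tendsto_const_nhds
  · intro n; linarith [(hinv n).2]
  · intro n; exact (hinv n).1


open Set in
theorem no_surj_of_scattered {X : Type*} [TopologicalSpace X] [CompactSpace X] [T2Space X]
    (h : IsScatteredSet (Set.univ : Set X)) (f : X → Set.Icc (0 : ℝ) 1)
    (hf : Continuous f) (hsurj : Function.Surjective f) : False := by
  set S : Set (Set X) := {K | IsClosed K ∧ ∀ y, ∃ x ∈ K, f x = y} with hS
  have hzorn : ∃ m, m ⊆ Set.univ ∧ Minimal (· ∈ S) m := by
    apply zorn_superset_nonempty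
    · intro c hcS hchain hcne
      refine ⟨⋂₀ c, ⟨isClosed_sInter fun K hK => (hcS hK).1, ?_⟩, fun s hs => sInter_subset_of_mem hs⟩
      intro y
      have : Nonempty c := hcne.to_subtype
      have key : (⋂ K : c, ((K : Set X) ∩ f ⁻¹' {y})).Nonempty := by
        apply IsCompact.nonempty_iInter_of_directed_nonempty_isCompact_isClosed
        · intro i j
          rcases hchain.total i.2 j.2 with hij | hij
          · exact ⟨i, le_refl _, inter_subset_inter_left _ hij⟩
          · exact ⟨j, inter_subset_inter_left _ hij, le_refl _⟩
        · intro i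
          obtain ⟨x, hx, hfx⟩ := (hcS i.2).2 y
          exact ⟨x, hx, hfx⟩
        · intro i
          exact (((hcS i.2).1).inter (isClosed_singleton.preimage hf)).isCompact
        · intro i
          exact ((hcS i.2).1).inter (isClosed_singleton.preimage hf)
      obtain ⟨x, hx⟩ := key
      simp only [mem_iInter, mem_inter_iff, mem_preimage, mem_singleton_iff] at hx
      exact ⟨x, mem_sInter.2 fun K hK => (hx ⟨K, hK⟩).1, (hx (Classical.arbitrary c)).2⟩
    · exact ⟨isClosed_univ, fun y => by obtain ⟨x, hx⟩ := hsurj y; exact ⟨x, mem_univ x, hx⟩⟩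
  obtain ⟨m, -, hm⟩ := hzorn
  obtain ⟨hmcl, hmsurj⟩ := hm.prop
  have hmne : m.Nonempty := by
    obtain ⟨x, hx, -⟩ := hmsurj ⟨0, by norm_num⟩
    exact ⟨x, hx⟩
  obtain ⟨x, hxm, U, hU, hUm⟩ := h m (subset_univ m) hmne
  -- m \ U cannot be "surjective"
  have hnot : ¬ ∀ y, ∃ x' ∈ m \ U, f x' = y := by
    intro hall
    have hmem : m \ U ∈ S := ⟨hmcl.inter (isClosed_compl_iff.2 hU), hall⟩
    have := hm.le_of_le hmem (diff_subset)
    have hxU : x ∈ U := by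
      have : x ∈ U ∩ m := by rw [hUm]; exact rfl
      exact this.1
    exact (this hxm).2 hxU
  push_neg at hnot
  obtain ⟨y, hy⟩ := hnot
  -- y is isolated in Icc 0 1
  have himg : IsClosed (f '' (m \ U)) := by
    have : IsCompact (m \ U) := (hmcl.inter (isClosed_compl_iff.2 hU)).isCompact
    exact (this.image hf).isClosed
  have hyV : y ∈ (f '' (m \ U))ᶜ := by
    intro hmem
    obtain ⟨x', hx', hfx'⟩ := hmem
    exact hy x' hx' hfx'
  have hfx_eq : f x = y := by
    obtain ⟨x0, hx0, hfx0⟩ := hmsurj y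
    have : x0 ∉ m \ U := fun hc => hy x0 hc hfx0
    have hx0U : x0 ∈ U := by
      by_contra hc
      exact this ⟨hx0, hc⟩
    have : x0 ∈ U ∩ m := ⟨hx0U, hx0⟩
    rw [hUm] at this
    rw [← hfx0, this]
  have hVsub : (f '' (m \ U))ᶜ = {y} := by
    apply Subset.antisymm
    · intro z hz
      obtain ⟨x', hx'm, hfx'⟩ := hmsurj z
      have : x' ∉ m \ U := fun hc => hz ⟨x', hc, hfx'⟩
      have hx'U : x' ∈ U := by
        by_contra hc
        exact this ⟨hx'm, hc⟩
      have : x' ∈ U ∩ m := ⟨hx'U, hx'm⟩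
      rw [hUm] at this
      rw [mem_singleton_iff, ← hfx', this, hfx_eq]
    · intro z hz
      rw [mem_singleton_iff] at hz
      rw [hz]; exact hyV
  have hopen : IsOpen ({y} : Set (Set.Icc (0:ℝ) 1)) := by
    rw [← hVsub]; exact himg.isOpen_compl
  have : PreconnectedSpace (Set.Icc (0:ℝ) 1) := Subtype.preconnectedSpace isPreconnected_Icc
  have hclopen : IsClopen ({y} : Set (Set.Icc (0:ℝ) 1)) := ⟨isClosed_singleton, hopen⟩
  have huniv := hclopen.eq_univ ⟨y, rfl⟩
  have h0 : (⟨0, by norm_num⟩ : Set.Icc (0:ℝ) 1) = y := by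
    have : (⟨0, by norm_num⟩ : Set.Icc (0:ℝ) 1) ∈ ({y} : Set (Set.Icc (0:ℝ) 1)) := by
      rw [huniv]; trivial
    exact this
  have h1 : (⟨1, by norm_num⟩ : Set.Icc (0:ℝ) 1) = y := by
    have : (⟨1, by norm_num⟩ : Set.Icc (0:ℝ) 1) ∈ ({y} : Set (Set.Icc (0:ℝ) 1)) := by
      rw [huniv]; trivial
    exact this
  have : (0 : ℝ) = 1 := by
    have := h0.trans h1.symm
    exact congrArg Subtype.val this
  norm_num at this


open Set in
theorem exists_surj_of_not_scattered {X : Type*} [TopologicalSpace X] [CompactSpace X] [T2Space X]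
    (h : ¬ IsScatteredSet (Set.univ : Set X)) :
    ∃ f : X → Set.Icc (0 : ℝ) 1, Continuous f ∧ Function.Surjective f := by
  rw [IsScatteredSet] at h
  push_neg at h
  obtain ⟨T, -, hTne, hiso⟩ := h
  -- T has no isolated points, so its closure is perfect
  have hpre : Preperfect T := by
    intro x hx
    rw [accPt_iff_nhds]
    intro U hU
    by_contra hc
    push_neg at hc
    obtain ⟨V, hVU, hV, hxV⟩ := mem_nhds_iff.1 hU
    refine hiso x hx V hV ?_
    apply Subset.antisymm
    · intro z hz
      exact hc z ⟨hVU hz.1, hz.2⟩ |>.symm ▸ (hc z ⟨hVU hz.1, hz.2⟩)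
    · intro z hz
      rw [mem_singleton_iff] at hz
      exact hz ▸ ⟨hxV, hx⟩
  have hK : Perfect (closure T) := hpre.perfect_closure
  have hKne : (closure T).Nonempty := hTne.closure
  set K := closure T with hKdef
  -- splitting function
  have split : ∀ C : Set X, ∃ D : Bool → Set X,
      (Perfect C ∧ C.Nonempty) →
        (∀ b, Perfect (D b) ∧ (D b).Nonempty ∧ D b ⊆ C) ∧ Disjoint (D false) (D true) := by
    intro C
    by_cases hC : Perfect C ∧ C.Nonempty
    · obtain ⟨C₀, C₁, h₀, h₁, hd⟩ := hC.1.splitting hC.2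
      refine ⟨fun b => Bool.rec C₀ C₁ b, fun _ => ⟨fun b => ?_, hd⟩⟩
      cases b
      · exact h₀
      · exact h₁
    · exact ⟨fun _ => ∅, fun hc => absurd hc hC⟩
  choose D hD using split
  set F : List Bool → Set X := fun s => s.foldr (fun b C => D C b) K with hFdef
  have hFnil : F [] = K := rfl
  have hFcons : ∀ b s, F (b :: s) = D (F s) b := fun _ _ => rfl
  have hPF : ∀ s, Perfect (F s) ∧ (F s).Nonempty := by
    intro s
    induction s with
    | nil => exact ⟨hK, hKne⟩
    | cons b s ih =>
      obtain ⟨h1, h2⟩ := (hD (F s) ih).1 b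
      exact ⟨h1, h2.1⟩
  have hsub : ∀ b s, F (b :: s) ⊆ F s := by
    intro b s
    exact ((hD (F s) (hPF s)).1 b).2.2
  have hdisj : ∀ s t : List Bool, s.length = t.length → s ≠ t → Disjoint (F s) (F t) := by
    intro s
    induction s with
    | nil =>
      intro t hlen hne
      cases t with
      | nil => exact absurd rfl hne
      | cons c t => simp at hlen
    | cons b s ih =>
      intro t hlen hne
      cases t with
      | nil => simp at hlen
      | cons c t =>
        by_cases hst : s = t
        · subst hst
          have hbc : b ≠ c := fun hbceq => hne (by rw [hbceq])
          have hdft := (hD (F s) (hPF s)).2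
          rw [hFcons, hFcons]
          cases b <;> cases c
          · exact absurd rfl hbc
          · exact hdft
          · exact hdft.symm
          · exact absurd rfl hbc
        · have hlen' : s.length = t.length := by simpa using hlen
          exact Disjoint.mono (hsub b s) (hsub c t) (ih t hlen' hst)
  -- level sets
  set A : ℕ → Bool → Set X := fun n b => ⋃ s ∈ {l : List Bool | l.length = n}, F (b :: s) with hAdef
  have hAclosed : ∀ n b, IsClosed (A n b) := by
    intro n b
    exact (List.finite_length_eq Bool n).isClosed_biUnion fun s _ => (hPF (b :: s)).1.closed
  have hAdisj : ∀ n, Disjoint (A n false) (A n true) := by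
    intro n
    rw [Set.disjoint_left]
    intro x hx0 hx1
    simp only [hAdef, mem_iUnion, mem_setOf_eq] at hx0 hx1
    obtain ⟨s, hs, hxs⟩ := hx0
    obtain ⟨t, ht, hxt⟩ := hx1
    have : ((false :: s) : List Bool) ≠ true :: t := by simp
    have hd := hdisj (false :: s) (true :: t) (by simp [hs, ht]) this
    exact Set.disjoint_left.1 hd hxs hxt
  -- Urysohn functions
  have hury : ∀ n : ℕ, ∃ g : C(X, ℝ), EqOn g 0 (A n false) ∧ EqOn g 1 (A n true) ∧
      ∀ x, g x ∈ Icc (0:ℝ) 1 :=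
    fun n => exists_continuous_zero_one_of_isClosed (hAclosed n false) (hAclosed n true) (hAdisj n)
  choose g hg0 hg1 hg01 using hury
  -- the map
  set f0 : X → ℝ := fun x => ∑' n, g n x * (1/2)^(n+1) with hf0def
  have hbound : ∀ n x, ‖g n x * (1/2)^(n+1)‖ ≤ (1/2)^n * (1/2) := by
    intro n x
    rw [Real.norm_eq_abs, abs_mul]
    have h01 := hg01 n x
    have : |g n x| ≤ 1 := by
      rw [abs_le]; exact ⟨by linarith [h01.1], h01.2⟩
    calc |g n x| * |((1/2:ℝ))^(n+1)| ≤ 1 * |((1/2:ℝ))^(n+1)| := by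
          apply mul_le_mul_of_nonneg_right this (abs_nonneg _)
      _ = (1/2)^n * (1/2) := by rw [one_mul, abs_of_nonneg (by positivity)]; ring
  have husum : Summable (fun n : ℕ => ((1/2:ℝ))^n * (1/2)) := summable_geometric_two.mul_right _
  have hf0cont : Continuous f0 :=
    continuous_tsum (fun n => ((g n).continuous).mul continuous_const) husum hbound
  have hterm_nonneg : ∀ x n, 0 ≤ g n x * (1/2)^(n+1) := by
    intro x n
    have := (hg01 n x).1
    positivity
  have hsummf : ∀ x, Summable (fun n => g n x * (1/2)^(n+1)) := by
    intro x
    apply Summable.of_nonneg_of_le (hterm_nonneg x) (fun n => ?_) husum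
    have := hbound n x
    rwa [Real.norm_eq_abs, abs_of_nonneg (hterm_nonneg x n)] at this
  have hmem : ∀ x, f0 x ∈ Set.Icc (0:ℝ) 1 := by
    intro x
    constructor
    · exact tsum_nonneg (hterm_nonneg x)
    · have hle := Summable.tsum_le_tsum (fun n => by
        have := hbound n x
        rwa [Real.norm_eq_abs, abs_of_nonneg (hterm_nonneg x n)] at this) (hsummf x) husum
      have : ∑' n : ℕ, ((1/2:ℝ))^n * (1/2) = 1 := by
        rw [tsum_mul_right, tsum_geometric_two]; norm_num
      rw [this] at hle
      exact hle
  refine ⟨fun x => ⟨f0 x, hmem x⟩, hf0cont.subtype_mk _, ?_⟩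
  -- surjectivity
  rintro ⟨y, hy0, hy1⟩
  obtain ⟨σ, hsum⟩ := binary_expansion y hy0 hy1
  -- the branch
  set L : ℕ → List Bool := fun n => Nat.rec [] (fun k l => σ k :: l) n with hLdef
  have hL0 : L 0 = [] := rfl
  have hLs : ∀ n, L (n+1) = σ n :: L n := fun _ => rfl
  have hLlen : ∀ n, (L n).length = n := by
    intro n
    induction n with
    | zero => rfl
    | succ k ih => rw [hLs]; simp [ih]
  have hGsub : ∀ n, F (L (n+1)) ⊆ F (L n) := by
    intro n
    rw [hLs]
    exact hsub _ _
  obtain ⟨x, hx⟩ : (⋂ n, F (L n)).Nonempty := by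
    apply IsCompact.nonempty_iInter_of_sequence_nonempty_isCompact_isClosed
    · exact hGsub
    · exact fun n => (hPF (L n)).2
    · exact ((hPF (L 0)).1.closed).isCompact
    · exact fun n => (hPF (L n)).1.closed
  have hgx : ∀ n, g n x = (Bool.rec 0 1 (σ n) : ℝ) := by
    intro n
    have hxn : x ∈ F (σ n :: L n) := by
      have := mem_iInter.1 hx (n+1)
      rwa [hLs] at this
    have hmemA : x ∈ A n (σ n) := by
      simp only [hAdef, mem_iUnion, mem_setOf_eq]
      exact ⟨L n, hLlen n, hxn⟩
    cases hb : σ n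
    · rw [hb] at hmemA
      exact hg0 n hmemA
    · rw [hb] at hmemA
      exact hg1 n hmemA
  refine ⟨x, Subtype.ext ?_⟩
  show f0 x = y
  rw [hf0def]
  have : (fun n => g n x * (1/2)^(n+1)) = fun n => (Bool.rec 0 1 (σ n) : ℝ) * (1/2)^(n+1) := by
    funext n; rw [hgx n]
  simp only [this]
  exact hsum.tsum_eq


theorem stmt10 {X : Type*} [TopologicalSpace X] [CompactSpace X] [T2Space X] :
    IsScatteredSet (Set.univ : Set X) ↔
      ¬ ∃ f : X → Set.Icc (0 : ℝ) 1, Continuous f ∧ Function.Surjective f := by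
  constructor
  · rintro hsc ⟨f, hf, hs⟩
    exact no_surj_of_scattered hsc f hf hs
  · intro hne
    by_contra hsc
    exact hne (exists_surj_of_not_scattered hsc)
end

section
/- Let E be an infinite-dimensional Banach space. Then E equipped with the weak topology is not Fréchet–Urysohn. -/
open Filter Topology NormedSpace

section aux
variable {E : Type*} [NormedAddCommGroup E] [NormedSpace ℝ E]

lemma aux_inj12 : Function.Injective ((topDualPairing ℝ E).flip) := by
  intro x y hxy
  rw [← sub_eq_zero]
  apply NormedSpace.eq_zero_of_forall_dual_eq_zero ℝ
  intro f
  have h : (topDualPairing ℝ E).flip x f = (topDualPairing ℝ E).flip y f := by rw [hxy]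
  have h' : f x = f y := h
  rw [map_sub, h', sub_self]

lemma aux_bdd12 (u : ℕ → E)
    (hu : ∀ f : E →L[ℝ] ℝ, Tendsto (fun n => f (u n)) atTop (𝓝 0)) :
    ∃ C, ∀ n, ‖u n‖ ≤ C := by
  have hpt : ∀ f : StrongDual ℝ E, ∃ C, ∀ n, ‖inclusionInDoubleDual ℝ E (u n) f‖ ≤ C := by
    intro f
    obtain ⟨C, hC⟩ := ((hu f).norm).bddAbove_range
    exact ⟨C, fun n => hC ⟨n, rfl⟩⟩
  obtain ⟨C, hC⟩ := banach_steinhaus (g := fun n => inclusionInDoubleDual ℝ E (u n)) hpt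
  refine ⟨C, fun n => ?_⟩
  have := hC n
  rwa [show ‖inclusionInDoubleDual ℝ E (u n)‖ = ‖u n‖ from
    (inclusionInDoubleDualLi ℝ (E := E)).norm_map (u n)] at this

lemma aux_closure12 (h : ¬ FiniteDimensional ℝ E) (R : ℝ) :
    (0 : WeakSpace ℝ E) ∈ closure {w : WeakSpace ℝ E | R ≤ ‖(toWeakSpace ℝ E).symm w‖} := by
  classical
  rw [mem_closure_iff_nhds]
  intro U hU
  have hemb := WeakBilin.isEmbedding (B := (topDualPairing ℝ E).flip) aux_inj12
  rw [(show IsEmbedding (fun (x : WeakSpace ℝ E) y => ((topDualPairing ℝ E).flip x) y) from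
    hemb).isInducing.nhds_eq_comap (0 : WeakSpace ℝ E), Filter.mem_comap] at hU
  obtain ⟨V, hV, hVU⟩ := hU
  have h0 : (fun y => (topDualPairing ℝ E).flip (0 : WeakSpace ℝ E) y)
      = (0 : (E →L[ℝ] ℝ) → ℝ) := by
    funext y; exact map_zero y
  rw [h0, nhds_pi, Filter.mem_pi] at hV
  obtain ⟨I, hIfin, t, ht, htV⟩ := hV
  have hy : ∃ y : E, y ≠ 0 ∧ ∀ f ∈ I, f y = 0 := by
    by_contra hcon
    push_neg at hcon
    apply h
    have hinj : Function.Injective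
        (LinearMap.pi (fun i : hIfin.toFinset => ((i : E →L[ℝ] ℝ) : E →ₗ[ℝ] ℝ))) := by
      rw [← LinearMap.ker_eq_bot, LinearMap.ker_eq_bot']
      intro x hx
      by_contra hx0
      obtain ⟨f, hfI, hfx⟩ := hcon x hx0
      have : ((⟨f, hIfin.mem_toFinset.mpr hfI⟩ : hIfin.toFinset) : E →L[ℝ] ℝ) x = 0 :=
        congrFun hx ⟨f, hIfin.mem_toFinset.mpr hfI⟩
      exact hfx this
    exact Module.Finite.of_injective _ hinj
  obtain ⟨y, hy0, hyI⟩ := hy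
  have hyn : (0 : ℝ) < ‖y‖ := norm_pos_iff.mpr hy0
  set R' : ℝ := max R 1 with hR'
  set x : E := (R' / ‖y‖) • y with hxdef
  have hxnorm : ‖x‖ = R' := by
    rw [hxdef, norm_smul, Real.norm_eq_abs, abs_of_pos (by positivity), div_mul_cancel₀]
    exact ne_of_gt hyn
  refine ⟨toWeakSpace ℝ E x, hVU ?_, ?_⟩
  · refine htV ?_
    intro f hf
    have : (topDualPairing ℝ E).flip (toWeakSpace ℝ E x) f = 0 := by
      have : f x = 0 := by
        rw [hxdef, map_smul, hyI f hf, smul_zero]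
      exact this
    show (topDualPairing ℝ E).flip (toWeakSpace ℝ E x) f ∈ t f
    rw [this]
    exact mem_of_mem_nhds (ht f)
  · show R ≤ ‖(toWeakSpace ℝ E).symm (toWeakSpace ℝ E x)‖
    rw [LinearEquiv.symm_apply_apply, hxnorm]
    exact le_max_left _ _

end aux

theorem stmt12 (E : Type*) [NormedAddCommGroup E] [NormedSpace ℝ E] [CompleteSpace E]
    (h : ¬ FiniteDimensional ℝ E) :
    ¬ FrechetUrysohnSpace (WeakSpace ℝ E) := by
  intro hFU
  classical
  haveI : T2Space (WeakSpace ℝ E) :=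
    (WeakBilin.isEmbedding (B := (topDualPairing ℝ E).flip) aux_inj12).t2Space
  set ι := toWeakSpace ℝ E with hι
  -- rows: sequences of large norm converging weakly to 0
  have hcl : ∀ n : ℕ, (0 : WeakSpace ℝ E) ∈
      closure {w : WeakSpace ℝ E | ((n : ℝ) + 1) ≤ ‖ι.symm w‖} := fun n =>
    aux_closure12 h _
  choose σ hσmem hσtend using fun n => mem_closure_iff_seq_limit.mp (hcl n)
  -- a nonzero vector and the translator sequence
  haveI : Nontrivial E := by
    by_contra hnt
    rw [not_nontrivial_iff_subsingleton] at hnt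
    exact h (Module.finite_of_rank_eq_zero (by simp [rank_subsingleton']))
  obtain ⟨v, hv⟩ := exists_ne (0 : E)
  have hvn : (0 : ℝ) < ‖v‖ := norm_pos_iff.mpr hv
  set w : E := (2⁻¹ * ‖v‖⁻¹) • v with hwdef
  have hwnorm : ‖w‖ = 2⁻¹ := by
    rw [hwdef, norm_smul, Real.norm_eq_abs, abs_of_pos (by positivity), mul_assoc,
      inv_mul_cancel₀ (ne_of_gt hvn), mul_one]
  have hwne : w ≠ 0 := by
    intro hw0
    rw [hw0] at hwnorm
    simp at hwnorm
  set t : ℕ → E := fun m => ((m : ℝ) + 1)⁻¹ • w with htdef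
  have htne : ∀ m, t m ≠ 0 := by
    intro m
    simp only [htdef]
    exact smul_ne_zero (by positivity) hwne
  have htle : ∀ m, ‖t m‖ ≤ 2⁻¹ := by
    intro m
    rw [htdef]
    simp only
    rw [norm_smul, Real.norm_eq_abs, abs_of_pos (by positivity), hwnorm]
    have h1 : ((m : ℝ) + 1)⁻¹ ≤ 1 := by
      rw [inv_le_one_iff₀]
      right; exact le_add_of_nonneg_left (Nat.cast_nonneg m)
    nlinarith
  have httend : Tendsto t atTop (𝓝 (0 : E)) := by
    have h1 : Tendsto (fun m : ℕ => ((m : ℝ) + 1)⁻¹) atTop (𝓝 0) := by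
      simpa using tendsto_one_div_add_atTop_nhds_zero_nat (𝕜 := ℝ)
    simpa using h1.smul_const w
  have htw : Tendsto (fun m => ι (t m)) atTop (𝓝 (0 : WeakSpace ℝ E)) := by
    have h1 := ((toWeakSpaceCLM ℝ E).continuous.tendsto 0).comp httend
    simp only [Function.comp_def, map_zero] at h1
    have he : (fun m => ι (t m)) = fun m => toWeakSpaceCLM ℝ E (t m) := by
      funext m; rw [hι, ← toWeakSpaceCLM_eq_toWeakSpace]
    rw [he]
    exact h1
  -- the combined set C
  have hC0 : (0 : WeakSpace ℝ E) ∈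
      closure {z : WeakSpace ℝ E | ∃ m k, z = ι (t m) + σ m k} := by
    have hmem : ∀ m, ι (t m) ∈ closure {z : WeakSpace ℝ E | ∃ m k, z = ι (t m) + σ m k} := by
      intro m
      have h1 : Tendsto (fun k => ι (t m) + σ m k) atTop (𝓝 (ι (t m))) := by
        have := (hσtend m).const_add (ι (t m))
        simpa using this
      exact mem_closure_of_tendsto h1 (Eventually.of_forall fun k => ⟨m, k, rfl⟩)
    have h2 := mem_closure_of_tendsto htw (Eventually.of_forall fun m => hmem m)
    rwa [closure_closure] at h2
  obtain ⟨c, hcC, hc0⟩ := mem_closure_iff_seq_limit.mp hC0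
  choose m k hck using hcC
  -- the sequence c is norm bounded
  set u : ℕ → E := fun j => ι.symm (c j) with hudef
  have hu : ∀ f : E →L[ℝ] ℝ, Tendsto (fun j => f (u j)) atTop (𝓝 0) := by
    intro f
    have h1 := (WeakBilin.tendsto_iff_forall_eval_tendsto (B := (topDualPairing ℝ E).flip)
      aux_inj12).mp hc0 f
    exact (congrArg (fun a : ℝ => Tendsto (fun j => f (u j)) atTop (𝓝 a)) (map_zero f : f 0 = 0)).mp h1
  obtain ⟨C₀, hC₀⟩ := aux_bdd12 u hu
  -- consequently m is bounded
  have hueq : ∀ j, u j = t (m j) + ι.symm (σ (m j) (k j)) := by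
    intro j
    rw [hudef]
    simp only
    rw [hck j, map_add, LinearEquiv.symm_apply_apply]
  have hmb : ∀ j, (m j : ℝ) ≤ C₀ := by
    intro j
    have h1 : ((m j : ℝ)) + 1 ≤ ‖ι.symm (σ (m j) (k j))‖ := hσmem (m j) (k j)
    have h2 : ‖ι.symm (σ (m j) (k j))‖ ≤ ‖u j‖ + ‖t (m j)‖ := by
      have : ι.symm (σ (m j) (k j)) = u j - t (m j) := by
        rw [hueq j]; abel
      rw [this]
      exact norm_sub_le _ _
    have h3 := htle (m j)
    have h4 := hC₀ j
    linarith
  have hmbN : ∀ j, m j ≤ Nat.floor (max C₀ 0) := fun j =>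
    Nat.le_floor ((hmb j).trans (le_max_left _ _))
  -- pigeonhole: some fiber of m is infinite
  set M := Nat.floor (max C₀ 0) with hM
  set m' : ℕ → Fin (M + 1) := fun j => ⟨m j, Nat.lt_succ_of_le (hmbN j)⟩ with hm'
  obtain ⟨i₀, hfib⟩ := Finite.exists_infinite_fiber m'
  set m₀ : ℕ := (i₀ : ℕ) with hm₀
  have hfreq : ∃ᶠ j in atTop, m j = m₀ := by
    rw [Nat.frequently_atTop_iff_infinite]
    refine Set.Infinite.mono ?_ (Set.infinite_coe_iff.mp hfib)
    intro j hj
    rw [Set.mem_preimage, Set.mem_singleton_iff] at hj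
    show m j = (i₀ : ℕ)
    rw [← hj]
  obtain ⟨φ, hφmono, hφ⟩ := Filter.extraction_of_frequently_atTop hfreq
  have hcφ : Tendsto (fun i => c (φ i)) atTop (𝓝 0) := hc0.comp hφmono.tendsto_atTop
  have hL : Tendsto (fun i => σ m₀ (k (φ i))) atTop (𝓝 (-(ι (t m₀)))) := by
    have heq : (fun i => σ m₀ (k (φ i))) = fun i => c (φ i) - ι (t m₀) := by
      funext i
      rw [hck (φ i), hφ i]
      abel
    rw [heq]
    simpa using hcφ.sub_const (ι (t m₀))
  by_cases hKb : ∃ N, ∀ i, k (φ i) ≤ N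
  · -- bounded column indices: the limit is one of finitely many values
    obtain ⟨N, hN⟩ := hKb
    have hfin : (σ m₀ '' {l | l ≤ N}).Finite := Set.Finite.image _ (Set.finite_le_nat N)
    have hmemL : -(ι (t m₀)) ∈ closure (σ m₀ '' {l | l ≤ N}) :=
      mem_closure_of_tendsto hL (Eventually.of_forall fun i => ⟨k (φ i), hN i, rfl⟩)
    rw [hfin.isClosed.closure_eq] at hmemL
    obtain ⟨l, -, hl⟩ := hmemL
    have h1 : ((m₀ : ℝ)) + 1 ≤ ‖ι.symm (σ m₀ l)‖ := hσmem m₀ l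
    rw [hl, map_neg, LinearEquiv.symm_apply_apply, norm_neg] at h1
    have h2 := htle m₀
    have h3 : (0 : ℝ) ≤ (m₀ : ℝ) := Nat.cast_nonneg _
    linarith
  · -- unbounded column indices: extract a subsequence tending to 0, contradiction with t m₀ ≠ 0
    push_neg at hKb
    have hfreq2 : ∀ n, ∃ᶠ i in atTop, n ≤ k (φ i) := by
      intro n
      rw [Filter.frequently_atTop]
      intro a
      obtain ⟨i, hi⟩ := hKb ((Finset.range (a + 1)).sup (fun x => k (φ x)) + n)
      refine ⟨i, ?_, by omega⟩
      by_contra hia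
      push_neg at hia
      have hle : k (φ i) ≤ (Finset.range (a + 1)).sup (fun x => k (φ x)) :=
        Finset.le_sup (f := fun x => k (φ x)) (Finset.mem_range.mpr (by omega : i < a + 1))
      omega
    obtain ⟨ψ, hψmono, hψ⟩ := Filter.extraction_forall_of_frequently hfreq2
    have hKψ : Tendsto (fun n => k (φ (ψ n))) atTop atTop :=
      tendsto_atTop_mono hψ tendsto_id
    have h1 : Tendsto (fun n => σ m₀ (k (φ (ψ n)))) atTop (𝓝 0) := (hσtend m₀).comp hKψ
    have h2 : Tendsto (fun n => σ m₀ (k (φ (ψ n)))) atTop (𝓝 (-(ι (t m₀)))) :=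
      hL.comp hψmono.tendsto_atTop
    have h3 := tendsto_nhds_unique h1 h2
    have h4 : ι (t m₀) = 0 := by
      rw [← neg_eq_zero, ← h3]
    have h5 : t m₀ = 0 := by
      have := congrArg ι.symm h4
      rwa [LinearEquiv.symm_apply_apply, map_zero] at this
    exact htne m₀ h5
end

section
/- Let E be a reflexive Banach space and X an infinite Tychonoff space. Then C_p(X) and E_w are not homeomorphic. -/
open Filter Topology

instance (X : Type*) [TopologicalSpace X] : T2Space (Cp X) :=
  inferInstanceAs (T2Space {f : X → ℝ // Continuous f})

namespace CpProof

open Set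

variable {X : Type*} [TopologicalSpace X]

lemma continuous_eval (x : X) : Continuous fun f : Cp X => f.1 x :=
  (continuous_apply x).comp continuous_subtype_val

lemma exists_bump [T35Space X] {x : X} {U : Set X} (hU : IsOpen U) (hx : x ∈ U) :
    ∃ c : X → ℝ, Continuous c ∧ c x = 1 ∧ (∀ y, y ∉ U → c y = 0) ∧
      ∀ y, c y ∈ Set.Icc (0:ℝ) 1 := by
  obtain ⟨f, hf, hfx, hfK⟩ :=
    CompletelyRegularSpace.completely_regular x Uᶜ hU.isClosed_compl (by simpa using hx)
  refine ⟨fun y => 1 - (f y : ℝ), by fun_prop, by simp [hfx], fun y hy => ?_, fun y => ?_⟩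
  · have : f y = 1 := hfK (by simpa using hy)
    simp [this]
  · obtain ⟨h1, h2⟩ := (f y).2
    exact ⟨by simp; linarith, by simp; linarith⟩


lemma key [T35Space X] {W : Set X} (hW : IsOpen W) (hWi : W.Infinite) :
    ∃ (U W' : Set X) (a : X), IsOpen U ∧ a ∈ U ∧ U ⊆ W ∧ IsOpen W' ∧ W'.Infinite ∧
      W' ⊆ W ∧ Disjoint U W' := by
  obtain ⟨a, ha, b, hb, hab⟩ := hWi.nontrivial
  obtain ⟨U0, V0, hU0, hV0, haU0, hbV0, hdisj⟩ := t2_separation hab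
  obtain ⟨Ca, hCa_mem, hCa_closed, hCa_sub⟩ :=
    exists_mem_nhds_isClosed_subset ((hU0.inter hW).mem_nhds ⟨haU0, ha⟩)
  obtain ⟨Cb, hCb_mem, hCb_closed, hCb_sub⟩ :=
    exists_mem_nhds_isClosed_subset ((hV0.inter hW).mem_nhds ⟨hbV0, hb⟩)
  have main : ∀ (p : X) (C : Set X), C ∈ 𝓝 p → IsClosed C → C ⊆ W → (W \ C).Infinite →
      ∃ (U W' : Set X) (a : X), IsOpen U ∧ a ∈ U ∧ U ⊆ W ∧ IsOpen W' ∧ W'.Infinite ∧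
        W' ⊆ W ∧ Disjoint U W' := by
    intro p C hmem hcl hsub hinf
    refine ⟨interior C, W ∩ (closure (interior C))ᶜ, p, isOpen_interior,
      mem_interior_iff_mem_nhds.2 hmem, interior_subset.trans hsub,
      hW.inter isClosed_closure.isOpen_compl, ?_, inter_subset_left, ?_⟩
    · refine hinf.mono fun y hy => ⟨hy.1, fun hc => hy.2 ?_⟩
      exact closure_minimal interior_subset hcl hc
    · exact disjoint_left.2 fun y hy hy' => hy'.2 (subset_closure hy)
  have hsplit : W ⊆ (W \ Ca) ∪ (W \ Cb) := by
    intro y hy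
    by_cases h1 : y ∈ Ca
    · exact Or.inr ⟨hy, fun h2 => hdisj.le_bot ⟨(hCa_sub h1).1, (hCb_sub h2).1⟩⟩
    · exact Or.inl ⟨hy, h1⟩
  have : (W \ Ca).Infinite ∨ (W \ Cb).Infinite := by
    by_contra h
    push_neg at h
    exact hWi (((h.1.union h.2).subset hsplit))
  rcases this with h | h
  · exact main a Ca hCa_mem hCa_closed (fun y hy => (hCa_sub hy).2) h
  · exact main b Cb hCb_mem hCb_closed (fun y hy => (hCb_sub hy).2) h

lemma exists_disjoint_family [T35Space X] [Infinite X] :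
    ∃ (V : ℕ → Set X) (x : ℕ → X), (∀ n, IsOpen (V n)) ∧ (∀ n, x n ∈ V n) ∧
      ∀ m n, m ≠ n → Disjoint (V m) (V n) := by
  classical
  let St := {p : Set X // IsOpen p ∧ p.Infinite}
  have step : ∀ s : St, ∃ q : Set X × Set X × X,
      IsOpen q.1 ∧ q.2.2 ∈ q.1 ∧ q.1 ⊆ s.1 ∧ IsOpen q.2.1 ∧ q.2.1.Infinite ∧
      q.2.1 ⊆ s.1 ∧ Disjoint q.1 q.2.1 := by
    intro s
    obtain ⟨U, W', a, h1, h2, h3, h4, h5, h6, h7⟩ := key s.2.1 s.2.2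
    exact ⟨⟨U, W', a⟩, h1, h2, h3, h4, h5, h6, h7⟩
  choose q hq1 hq2 hq3 hq4 hq5 hq6 hq7 using step
  let nxt : St → St := fun s => ⟨(q s).2.1, hq4 s, hq5 s⟩
  let s : ℕ → St := fun n => Nat.rec ⟨univ, isOpen_univ, Set.infinite_univ⟩ (fun _ t => nxt t) n
  have hs_succ : ∀ n, s (n + 1) = nxt (s n) := fun n => rfl
  let V : ℕ → Set X := fun n => (q (s n)).1
  let x : ℕ → X := fun n => (q (s n)).2.2
  have hchain : ∀ m k, (s (m + k + 1)).1 ⊆ (nxt (s m)).1 := by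
    intro m k
    induction k with
    | zero => exact subset_rfl
    | succ k ih =>
      have : (s (m + (k+1) + 1)).1 = (q (s (m + k + 1))).2.1 := rfl
      rw [this]
      exact (hq6 (s (m + k + 1))).trans ih
  have hdisj : ∀ m n, m < n → Disjoint (V m) (V n) := by
    intro m n hmn
    have hVn : V n ⊆ (nxt (s m)).1 := by
      have : V n ⊆ (s n).1 := hq3 (s n)
      obtain ⟨k, rfl⟩ : ∃ k, n = m + k + 1 := ⟨n - m - 1, by omega⟩
      exact this.trans (hchain m k)
    exact ((hq7 (s m)).mono_right hVn)
  exact ⟨V, x, fun n => hq1 (s n), fun n => hq2 (s n), fun m n h => by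
    rcases lt_or_gt_of_ne h with h' | h'
    · exact hdisj m n h'
    · exact (hdisj n m h').symm⟩

lemma caseA (hsc : SigmaCompactSpace (Cp X))
    (f : X → ℝ) (hf : Continuous f) (hunb : ∀ M : ℝ, ∃ y, M < f y) : False := by
  classical
  set K : ℕ → Set (Cp X) := compactCovering (Cp X) with hK
  -- the points
  let x : ℕ → X := fun n => Nat.rec (Classical.choose (hunb 0))
    (fun _ p => Classical.choose (hunb (f p + 2))) n
  set t : ℕ → ℝ := fun n => f (x n) with ht
  have hgap : ∀ n, t n + 2 < t (n + 1) := fun n =>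
    Classical.choose_spec (hunb (f (x n) + 2))
  have hgrow : ∀ n : ℕ, t 0 + 2 * n ≤ t n := by
    intro n
    induction n with
    | zero => simp
    | succ n ih => have := hgap n; push_cast; push_cast at ih; linarith
  have hbig : ∀ T : ℝ, ∃ N : ℕ, ∀ k, N ≤ k → T ≤ t k := by
    intro T
    obtain ⟨N, hN⟩ := exists_nat_ge (T - t 0)
    refine ⟨N, fun k hk => ?_⟩
    have h1 : (N : ℝ) ≤ k := Nat.cast_le.2 hk
    have h2 := hgrow k
    have : (0:ℝ) ≤ k := Nat.cast_nonneg k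
    linarith
  -- pointwise bounds of the compact pieces
  set M : ℕ → ℝ := fun n => sSup ((fun u : Cp X => |u.1 (x n)|) '' K n) with hM
  have hMb : ∀ n, ∀ u ∈ K n, |u.1 (x n)| ≤ M n := by
    intro n u hu
    exact le_csSup (((isCompact_compactCovering _ n).image
      ((continuous_eval (x n)).abs)).bddAbove) (mem_image_of_mem _ hu)
  set a : ℕ → ℝ := fun n => max (M n) 0 + 1 with ha
  have ha_pos : ∀ n, 0 < a n := fun n => by positivity
  -- clamp
  set clamp : ℝ → ℝ := fun s => min 1 (max 0 s) with hclamp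
  have hclamp_cont : Continuous clamp := continuous_const.min (continuous_const.max continuous_id)
  have hclamp_nonneg : ∀ s, 0 ≤ clamp s := fun s => le_min zero_le_one (le_max_left 0 s)
  have hclamp_one : ∀ s, 1 ≤ s → clamp s = 1 := fun s hs =>
    min_eq_left (le_max_of_le_right hs)
  have hclamp_zero : ∀ s, s ≤ 0 → clamp s = 0 := fun s hs => by
    simp [hclamp, max_eq_left hs]
  set term : ℕ → ℝ → ℝ := fun k u => a k * clamp (u - t k + 1) with hterm
  have hterm_nonneg : ∀ k u, 0 ≤ term k u := fun k u =>
    mul_nonneg (ha_pos k).le (hclamp_nonneg _)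
  have hvanish : ∀ (u : ℝ) (k : ℕ), u + 1 ≤ t k → term k u = 0 := by
    intro u k h
    have : u - t k + 1 ≤ 0 := by linarith
    simp [hterm, hclamp_zero _ this]
  have hsum : ∀ u, Summable fun k => term k u := by
    intro u
    obtain ⟨N, hN⟩ := hbig (u + 1)
    exact summable_of_ne_finset_zero (s := Finset.range N) fun k hk =>
      hvanish u k (hN k (Nat.le_of_not_lt (by simpa [Finset.mem_range] using hk)))
  set h : ℝ → ℝ := fun u => ∑' k, term k u with hh
  have hcont : Continuous h := by
    rw [continuous_iff_continuousAt]
    intro u0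
    obtain ⟨N, hN⟩ := hbig (u0 + 3)
    have heq : ∀ u ∈ Iio (u0 + 1), h u = ∑ k ∈ Finset.range N, term k u := by
      intro u hu
      refine tsum_eq_sum fun k hk => ?_
      have hk' : N ≤ k := Nat.le_of_not_lt (by simpa [Finset.mem_range] using hk)
      have := hN k hk'
      exact hvanish u k (by simp at hu; linarith)
    have hfin : ContinuousAt (fun u => ∑ k ∈ Finset.range N, term k u) u0 := by
      refine (continuous_finset_sum _ fun k _ => ?_).continuousAt
      exact continuous_const.mul (hclamp_cont.comp (by fun_prop))
    refine hfin.congr ?_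
    filter_upwards [isOpen_Iio.mem_nhds (show u0 ∈ Iio (u0 + 1) by simp)] with u hu
    exact (heq u hu).symm
  have hge : ∀ n, a n ≤ h (t n) := by
    intro n
    have : term n (t n) = a n := by
      have e1 : t n - t n + 1 = (1:ℝ) := by ring
      simp [hterm, e1, hclamp_one 1 le_rfl]
    calc a n = term n (t n) := this.symm
    _ ≤ ∑' k, term k (t n) := Summable.le_tsum (hsum (t n)) n fun k _ => hterm_nonneg k _
  set g : Cp X := ⟨fun y => h (f y), hcont.comp hf⟩ with hg
  obtain ⟨n, hn⟩ := exists_mem_compactCovering g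
  have h1 : |g.1 (x n)| ≤ M n := hMb n g hn
  have h2 : a n ≤ g.1 (x n) := hge n
  have h3 : M n < a n := by
    have : M n ≤ max (M n) 0 := le_max_left _ _
    simp only [ha]; linarith
  have : g.1 (x n) ≤ |g.1 (x n)| := le_abs_self _
  linarith

-- Baire step: some compact piece absorbs a norm-ball of bounded continuous functions
lemma baire_step (hsc : SigmaCompactSpace (Cp X)) :
    ∃ (n0 : ℕ) (f0 : BoundedContinuousFunction X ℝ) (ε : ℝ), 0 < ε ∧
      ∀ g : BoundedContinuousFunction X ℝ, dist g f0 < ε →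
        (⟨g, g.continuous⟩ : Cp X) ∈ compactCovering (Cp X) n0 := by
  classical
  set Φ : BoundedContinuousFunction X ℝ → Cp X := fun g => ⟨g, g.continuous⟩ with hΦ
  have hΦc : Continuous Φ := by
    apply Continuous.subtype_mk
    exact continuous_pi fun y => ((continuous_apply y).comp BoundedContinuousFunction.continuous_coe)
  set A : ℕ → Set (BoundedContinuousFunction X ℝ) := fun n =>
    Φ ⁻¹' (compactCovering (Cp X) n) ∩ {g | ‖g‖ ≤ (n : ℝ)} with hA
  have hclosed : ∀ n, IsClosed (A n) :=
    fun n => (((isCompact_compactCovering _ n).isClosed).preimage hΦc).inter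
      (isClosed_le continuous_norm continuous_const)
  have hcover : ⋃ n, A n = univ := by
    refine eq_univ_of_forall fun g => ?_
    obtain ⟨m, hm⟩ := exists_mem_compactCovering (Φ g)
    obtain ⟨n', hn'⟩ := exists_nat_ge ‖g‖
    refine mem_iUnion.2 ⟨max m n', compactCovering_subset _ (le_max_left _ _) hm, ?_⟩
    exact hn'.trans (Nat.cast_le.2 (le_max_right _ _))
  obtain ⟨n0, hn0⟩ := nonempty_interior_of_iUnion_of_closed hclosed hcover
  obtain ⟨f0, hf0⟩ := hn0
  obtain ⟨ε, hε, hball⟩ := Metric.mem_nhds_iff.1 (mem_interior_iff_mem_nhds.1 hf0)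
  exact ⟨n0, f0, ε, hε, fun g hg => (hball hg).1⟩

lemma cluster_unique {α : Type*} [TopologicalSpace α] [T2Space α] {u : ℕ → α} {a b : α}
    (h : MapClusterPt a atTop u) (h' : Tendsto u atTop (𝓝 b)) : a = b := by
  have h1 : ClusterPt a (Filter.map u atTop) := h.clusterPt
  exact eq_of_nhds_neBot (h1.mono h' : ClusterPt a (𝓝 b))

lemma caseB [T35Space X] [Infinite X] (hsc : SigmaCompactSpace (Cp X))
    (hps : ∀ f : X → ℝ, Continuous f → ∃ M, ∀ y, f y ≤ M) : False := by
  classical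
  obtain ⟨V, x, hVopen, hxV, hVdisj⟩ := exists_disjoint_family (X := X)
  choose c hc_cont hc_one hc_zero hc_mem using fun k => exists_bump (hVopen k) (hxV k)
  have hsupp : ∀ k y, c k y ≠ 0 → y ∈ V k := fun k y h => by
    by_contra hy; exact h (hc_zero k y hy)
  have huniq : ∀ y k l, c k y ≠ 0 → c l y ≠ 0 → k = l := by
    intro y k l hk hl
    by_contra hne
    exact (hVdisj k l hne).le_bot ⟨hsupp k y hk, hsupp l y hl⟩
  have hfinsupp : ∀ y, {k | c k y ≠ 0}.Subsingleton := fun y k hk l hl => huniq y k l hk hl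
  set D : ℕ → Set X := fun k => {y | 1/2 < c k y} with hD
  have hxD : ∀ k, x k ∈ D k := fun k => by simp [hD, hc_one k]; norm_num
  have hDne : ∀ (k : ℕ) (y : X), y ∈ D k → c k y ≠ 0 := by
    intro k y hy
    have h : (1:ℝ)/2 < c k y := hy
    exact ne_of_gt (lt_trans (by norm_num) h)
  -- non-local-finiteness point
  have hNLF : ∃ p : X, ∀ N ∈ 𝓝 p, {k | (N ∩ D k).Nonempty}.Infinite := by
    by_contra hnot
    push_neg at hnot
    choose N hNmem hNfin using hnot
    set r : ℝ → ℝ := fun s => max 0 (2*s - 1) with hr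
    have hr_cont : Continuous r := continuous_const.max (by fun_prop)
    have hr_nonneg : ∀ s, 0 ≤ r s := fun s => le_max_left _ _
    have hr_supp : ∀ s, r s ≠ 0 → 1/2 < s := by
      intro s h
      by_contra h'
      push_neg at h'
      exact h (max_eq_left (by linarith))
    have hterm0 : ∀ (y : X) (k : ℕ), ((k:ℝ)+1) * r (c k y) ≠ 0 → y ∈ D k := by
      intro y k h
      have : r (c k y) ≠ 0 := fun h0 => h (by rw [h0, mul_zero])
      exact hr_supp _ this
    have hFsum : ∀ y : X, Summable fun k : ℕ => ((k:ℝ)+1) * r (c k y) := by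
      intro y
      have hfin : {k : ℕ | ((k:ℝ)+1) * r (c k y) ≠ 0}.Finite :=
        Set.Finite.subset (hfinsupp y).finite (fun k hk => hDne k y (hterm0 y k hk))
      refine summable_of_ne_finset_zero (s := hfin.toFinset) fun k hk => ?_
      by_contra hne
      exact hk (hfin.mem_toFinset.2 hne)
    set F : X → ℝ := fun y => ∑' (k : ℕ), ((k:ℝ)+1) * r (c k y) with hF
    have hFcont : Continuous F := by
      rw [continuous_iff_continuousAt]
      intro y
      have hGfin : {k | ((N y) ∩ D k).Nonempty}.Finite := hNfin y
      have heq : ∀ z ∈ N y, F z = ∑ k ∈ hGfin.toFinset, ((k:ℝ)+1) * r (c k z) := by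
        intro z hz
        simp only [hF]
        refine tsum_eq_sum fun k hk => ?_
        by_contra hne
        exact hk (hGfin.mem_toFinset.2 ⟨z, hz, hterm0 z k hne⟩)
      have hfin_cont : Continuous fun z => ∑ k ∈ hGfin.toFinset, ((k:ℝ)+1) * r (c k z) :=
        continuous_finset_sum _ fun k _ => continuous_const.mul (hr_cont.comp (hc_cont k))
      refine hfin_cont.continuousAt.congr ?_
      filter_upwards [hNmem y] with z hz
      exact (heq z hz).symm
    obtain ⟨M, hM⟩ := hps F hFcont
    obtain ⟨n, hn⟩ := exists_nat_gt M
    have hFx : ((n:ℝ)+1) ≤ F (x n) := by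
      have h1 : ((n:ℝ)+1) * r (c n (x n)) = (n:ℝ)+1 := by
        rw [hc_one n]
        norm_num [hr]
      calc ((n:ℝ)+1) = ((n:ℝ)+1) * r (c n (x n)) := h1.symm
      _ ≤ F (x n) := Summable.le_tsum (hFsum (x n)) n fun k _ =>
          mul_nonneg (by positivity) (hr_nonneg _)
    have := hM (x n)
    linarith
  obtain ⟨p, hp⟩ := hNLF
  set S : Set ℕ := {k | c k p = 0} with hS
  set Sind : ℕ → X → ℝ := fun k y => S.indicator (fun j => c j y) k with hSind
  have hSind_nonneg : ∀ k y, 0 ≤ Sind k y := by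
    intro k y
    by_cases h : k ∈ S
    · simp only [hSind, Set.indicator_of_mem h]; exact (hc_mem k y).1
    · simp [hSind, Set.indicator_of_notMem h]
  have hSind_ne : ∀ k y, Sind k y ≠ 0 → c k y ≠ 0 := by
    intro k y h
    by_cases hk : k ∈ S
    · simpa only [hSind, Set.indicator_of_mem hk] using h
    · simp [hSind, Set.indicator_of_notMem hk] at h
  have hSind_le : ∀ k y, Sind k y ≤ c k y := by
    intro k y
    by_cases h : k ∈ S
    · simp [hSind, Set.indicator_of_mem h]
    · simp only [hSind, Set.indicator_of_notMem h]; exact (hc_mem k y).1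
  have hSsum : ∀ y, Summable fun k => Sind k y := by
    intro y
    have hfin : {k | Sind k y ≠ 0}.Finite :=
      Set.Finite.subset (hfinsupp y).finite (fun k hk => hSind_ne k y hk)
    refine summable_of_ne_finset_zero (s := hfin.toFinset) fun k hk => ?_
    by_contra hne
    exact hk (hfin.mem_toFinset.2 hne)
  set hSf : X → ℝ := fun y => ∑' k, Sind k y with hhSf
  have hSp0 : hSf p = 0 := by
    have hz : (fun k => Sind k p) = fun _ => 0 := by
      funext k
      by_cases h : k ∈ S
      · simpa only [hSind, Set.indicator_of_mem h] using (show c k p = 0 from h)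
      · simp [hSind, Set.indicator_of_notMem h]
    simp only [hhSf, hz, tsum_zero]
  obtain ⟨n0, f0, ε, hε, hball⟩ := baire_step hsc
  set pm : ℕ → X → ℝ := fun m y => ∑ k ∈ Finset.range m, Sind k y with hpm
  have hpm_cont : ∀ m, Continuous (pm m) := by
    intro m
    apply continuous_finset_sum
    intro k _
    by_cases h : k ∈ S
    · simpa only [hSind, Set.indicator_of_mem h] using hc_cont k
    · simpa only [hSind, Set.indicator_of_notMem h] using continuous_const
  have hpm_nonneg : ∀ m y, 0 ≤ pm m y := fun m y =>
    Finset.sum_nonneg fun k _ => hSind_nonneg k y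
  have hpm_le_one : ∀ m y, pm m y ≤ 1 := by
    intro m y
    by_cases hex : ∃ k0 ∈ Finset.range m, Sind k0 y ≠ 0
    · obtain ⟨k0, hk0, hk0ne⟩ := hex
      have hsingle : ∑ k ∈ Finset.range m, Sind k y = Sind k0 y :=
        Finset.sum_eq_single_of_mem k0 hk0 (fun l hl hlne => by
          by_contra hne
          exact hlne (huniq y l k0 (hSind_ne _ _ hne) (hSind_ne _ _ hk0ne)))
      calc pm m y = Sind k0 y := hsingle
      _ ≤ c k0 y := hSind_le k0 y
      _ ≤ 1 := (hc_mem k0 y).2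
    · push_neg at hex
      have : pm m y = 0 := Finset.sum_eq_zero fun k hk => hex k hk
      simp [this]
  set Pb : ℕ → BoundedContinuousFunction X ℝ := fun m =>
    BoundedContinuousFunction.ofNormedAddCommGroup (pm m) (hpm_cont m) 1
      (fun y => by
        rw [Real.norm_eq_abs, abs_le]
        exact ⟨by linarith [hpm_nonneg m y], hpm_le_one m y⟩) with hPb
  have hPb_norm : ∀ m, ‖Pb m‖ ≤ 1 := fun m =>
    BoundedContinuousFunction.norm_ofNormedAddCommGroup_le _ zero_le_one _
  set fb : ℕ → BoundedContinuousFunction X ℝ := fun m => f0 + (ε/2) • Pb m with hfb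
  have hfb_apply : ∀ (m : ℕ) (y : X), (fb m) y = f0 y + (ε/2) * pm m y := by
    intro m y
    simp only [hfb, hPb, BoundedContinuousFunction.coe_add,
      BoundedContinuousFunction.coe_smul, Pi.add_apply, Pi.smul_apply, smul_eq_mul,
      BoundedContinuousFunction.coe_ofNormedAddCommGroup]
  have hfb_mem : ∀ m, (⟨fb m, (fb m).continuous⟩ : Cp X) ∈ compactCovering (Cp X) n0 := by
    intro m
    apply hball
    have hdle : dist (fb m) f0 ≤ ε/2 := by
      rw [BoundedContinuousFunction.dist_le (by linarith : (0:ℝ) ≤ ε/2)]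
      intro y
      rw [Real.dist_eq, hfb_apply m y]
      have h1 := hpm_nonneg m y
      have h2 := hpm_le_one m y
      have e : f0 y + ε/2 * pm m y - f0 y = ε/2 * pm m y := by ring
      rw [e, abs_of_nonneg (by positivity)]
      nlinarith
    linarith
  obtain ⟨q, hqK, hq⟩ := (isCompact_compactCovering (Cp X) n0).exists_mapClusterPt
    (f := atTop) (u := fun m => (⟨fb m, (fb m).continuous⟩ : Cp X))
    (le_principal_iff.2 (mem_map.2 (univ_mem' fun m => hfb_mem m)))
  have hq_eq : ∀ y, q.1 y = f0 y + (ε/2) * hSf y := by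
    intro y
    have hcl : MapClusterPt (q.1 y) atTop
        ((fun u : Cp X => u.1 y) ∘ fun m => (⟨fb m, (fb m).continuous⟩ : Cp X)) :=
      hq.continuousAt_comp ((continuous_apply y).comp continuous_subtype_val).continuousAt
    have hlim : Tendsto (fun m => (fb m) y) atTop (𝓝 (f0 y + (ε/2) * hSf y)) := by
      have h1 : Tendsto (fun m => pm m y) atTop (𝓝 (hSf y)) :=
        (hSsum y).hasSum.tendsto_sum_nat
      have h2 : ∀ m, (fb m) y = f0 y + (ε/2) * pm m y := fun m => hfb_apply m y
      have h3 : Tendsto (fun m => f0 y + (ε/2) * pm m y) atTop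
          (𝓝 (f0 y + (ε/2) * hSf y)) := ((h1.const_mul (ε/2)).const_add (f0 y))
      exact h3.congr fun m => (h2 m).symm
    exact cluster_unique hcl hlim
  have hSf_cont : Continuous hSf := by
    have heq : hSf = fun y => (q.1 y - f0 y) / (ε/2) := by
      funext y
      rw [hq_eq y]
      field_simp
      ring
    rw [heq]
    exact (q.2.sub f0.continuous).div_const _
  have hclosedset : IsClosed {y | 1/2 ≤ hSf y} := isClosed_le continuous_const hSf_cont
  have hpmem : p ∈ {y | 1/2 ≤ hSf y} := by
    rw [← hclosedset.closure_eq, mem_closure_iff_nhds]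
    intro N hN
    have hinf := hp N hN
    have hfin : {k | c k p ≠ 0}.Finite := (hfinsupp p).finite
    obtain ⟨k, hk⟩ := (hinf.diff hfin).nonempty
    obtain ⟨z, hzN, hzD⟩ := hk.1
    have hkS : k ∈ S := not_not.1 hk.2
    have h1 : Sind k z = c k z := Set.indicator_of_mem hkS _
    have h2 : (1:ℝ)/2 < c k z := hzD
    have h3 : Sind k z ≤ hSf z := Summable.le_tsum (hSsum z) k fun l _ => hSind_nonneg l z
    exact ⟨z, hzN, by simp only [mem_setOf_eq]; rw [h1] at h3; linarith⟩
  have hge : (1:ℝ)/2 ≤ hSf p := hpmem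
  rw [hSp0] at hge
  linarith

lemma weak_sigmaCompact (E : Type*) [NormedAddCommGroup E] [NormedSpace ℝ E]
    (hrefl : Function.Surjective (NormedSpace.inclusionInDoubleDual ℝ E)) :
    SigmaCompactSpace (WeakSpace ℝ E) := by
  classical
  set ι := NormedSpace.inclusionInDoubleDual ℝ E with hι
  have hinj : Function.Injective ι := by
    intro a b h
    exact (NormedSpace.inclusionInDoubleDualLi ℝ (E := E)).injective h
  haveI hWD : SigmaCompactSpace (WeakDual ℝ (StrongDual ℝ E)) := by
    refine ⟨⟨fun n => WeakDual.toStrongDual ⁻¹' Metric.closedBall 0 n,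
      fun n => WeakDual.isCompact_closedBall (𝕜 := ℝ) (E := StrongDual ℝ E) 0 n, ?_⟩⟩
    refine eq_univ_of_forall fun x => ?_
    obtain ⟨n, hn⟩ := exists_nat_ge ‖WeakDual.toStrongDual x‖
    exact mem_iUnion.2 ⟨n, (show dist (WeakDual.toStrongDual x) 0 ≤ n from (dist_zero_right (WeakDual.toStrongDual x : StrongDual ℝ (StrongDual ℝ E))).le.trans hn)⟩
  let eqv : WeakSpace ℝ E ≃ WeakDual ℝ (StrongDual ℝ E) :=
    Equiv.ofBijective (fun x => ι ((toWeakSpace ℝ E).symm x)) ⟨fun a b h => by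
      have := hinj h
      exact (toWeakSpace ℝ E).symm.injective this, fun z => by
      obtain ⟨x, hx⟩ := hrefl z
      exact ⟨toWeakSpace ℝ E x, hx⟩⟩
  have cont1 : Continuous eqv := by
    apply WeakDual.continuous_of_continuous_eval
    intro y
    exact WeakBilin.eval_continuous ((topDualPairing ℝ E).flip) y
  have cont2 : Continuous eqv.symm := by
    apply WeakBilin.continuous_of_continuous_eval
    intro y
    have : (fun x'' : WeakDual ℝ (StrongDual ℝ E) =>
        ((topDualPairing ℝ E).flip) (eqv.symm x'') y) = fun x'' => x'' y := by
      funext x''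
      have h1 : eqv (eqv.symm x'') = x'' := eqv.apply_symm_apply x''
      have h2 : ι ((toWeakSpace ℝ E).symm (eqv.symm x'')) = x'' := h1
      calc ((topDualPairing ℝ E).flip) (eqv.symm x'') y
          = y ((toWeakSpace ℝ E).symm (eqv.symm x'')) := rfl
        _ = ι ((toWeakSpace ℝ E).symm (eqv.symm x'')) y := rfl
        _ = x'' y := by rw [h2]; rfl
    rw [this]
    exact WeakDual.eval_continuous y
  let homeo : WeakSpace ℝ E ≃ₜ WeakDual ℝ (StrongDual ℝ E) :=
    { eqv with continuous_toFun := cont1, continuous_invFun := cont2 }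
  exact homeo.isClosedEmbedding.sigmaCompactSpace

end CpProof

theorem stmt14 {X : Type*} [TopologicalSpace X] [T35Space X] [Infinite X]
    (E : Type*) [NormedAddCommGroup E] [NormedSpace ℝ E] [CompleteSpace E]
    (hrefl : Function.Surjective (NormedSpace.inclusionInDoubleDual ℝ E)) :
    IsEmpty (Cp X ≃ₜ WeakSpace ℝ E) := by
  constructor
  intro e
  haveI hW : SigmaCompactSpace (WeakSpace ℝ E) := CpProof.weak_sigmaCompact E hrefl
  haveI hCp : SigmaCompactSpace (Cp X) := e.isClosedEmbedding.sigmaCompactSpace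
  by_cases hps : ∀ f : X → ℝ, Continuous f → ∃ M, ∀ y, f y ≤ M
  · exact CpProof.caseB hCp hps
  · push_neg at hps
    obtain ⟨f, hf, hunb⟩ := hps
    exact CpProof.caseA hCp f hf hunb
end

section
/- Let E be a separable Banach space with the Schur property. Then E with the weak topology is not homeomorphic to C_p(X) for any uncountable Tychonoff space X; indeed E_w is an ℵ₀-space while C_p(X) is an ℵ₀-space only if X is countable. -/
open Filter Topology

def HasCKN (α : Type*) [TopologicalSpace α] : Prop :=
  ∃ P : Set (Set α), P.Countable ∧
    ∀ K U : Set α, IsCompact K → IsOpen U → K ⊆ U → ∃ p ∈ P, K ⊆ p ∧ p ⊆ U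


noncomputable def hfun (n : ℕ) (t : ℝ) : ℝ :=
  max 0 (min 1 (min ((2:ℝ)^(n+2) * t - 1) (2 - 2^n * t)))

lemma hfun_cont (n : ℕ) : Continuous (hfun n) := by
  unfold hfun; fun_prop

lemma hfun_zero (n : ℕ) : hfun n 0 = 0 := by
  have h : ((2:ℝ)^(n+2) * 0 - 1) = -1 := by ring
  have h2 : (2 - (2:ℝ)^n * 0) = 2 := by ring
  rw [hfun, h, h2]
  norm_num

lemma hfun_one (n : ℕ) (t : ℝ) (h1 : 1 ≤ 2^(n+1) * t) (h2 : 2^n * t ≤ 1) : hfun n t = 1 := by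
  have key : (2:ℝ)^(n+2) * t = 2 * (2^(n+1) * t) := by ring
  have ha : (1:ℝ) ≤ 2^(n+2) * t - 1 := by rw [key]; linarith
  have hb : (1:ℝ) ≤ 2 - 2^n * t := by linarith
  rw [hfun, min_eq_left (le_min ha hb), max_eq_right zero_le_one]

lemma hfun_vanish (n : ℕ) (t : ℝ) (h : 2 ≤ 2^n * t) : hfun n t = 0 := by
  have hb : 2 - (2:ℝ)^n * t ≤ 0 := by linarith
  have hle : min 1 (min ((2:ℝ)^(n+2) * t - 1) (2 - 2^n * t)) ≤ 0 :=
    le_trans (min_le_right _ _) (le_trans (min_le_right _ _) hb)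
  rw [hfun, max_eq_left hle]

lemma hfun_tendsto {t : ℝ} (ht : 0 ≤ t) : Tendsto (fun n => hfun n t) atTop (𝓝 0) := by
  rcases eq_or_lt_of_le ht with h | h
  · have : (fun n => hfun n t) = fun _ => 0 := funext fun n => by rw [← h, hfun_zero]
    rw [this]; exact tendsto_const_nhds
  · have hev : ∀ᶠ n in atTop, hfun n t = 0 := by
      obtain ⟨N, hN⟩ := pow_unbounded_of_one_lt (2/t) (one_lt_two (α := ℝ))
      refine eventually_atTop.mpr ⟨N, fun n hn => hfun_vanish n t ?_⟩
      rw [div_lt_iff₀ h] at hN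
      have h3 : (2:ℝ)^N ≤ 2^n := pow_le_pow_right₀ one_le_two hn
      nlinarith
    exact tendsto_const_nhds.congr' (hev.mono fun n hn => hn.symm)

lemma exists_level {t : ℝ} (ht0 : 0 < t) (ht1 : t ≤ 1) :
    ∃ n : ℕ, 1 ≤ 2^(n+1) * t ∧ 2^n * t ≤ 1 := by
  have hex : ∃ n : ℕ, 1 < 2^(n+1) * t := by
    obtain ⟨m, hm⟩ := pow_unbounded_of_one_lt (1/t) (one_lt_two (α := ℝ))
    rw [div_lt_iff₀ ht0] at hm
    refine ⟨m, ?_⟩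
    have h3 : (2:ℝ)^m ≤ 2^(m+1) := pow_le_pow_right₀ one_le_two (Nat.le_succ m)
    nlinarith
  refine ⟨Nat.find hex, le_of_lt (Nat.find_spec hex), ?_⟩
  rcases Nat.eq_zero_or_pos (Nat.find hex) with h0 | hpos
  · rw [h0]; simpa using ht1
  · have hk := Nat.find_min hex (Nat.sub_lt hpos one_pos)
    have e : Nat.find hex - 1 + 1 = Nat.find hex := by omega
    rw [e] at hk
    exact not_lt.mp hk

section Eside
variable {E : Type*} [NormedAddCommGroup E] [NormedSpace ℝ E] [CompleteSpace E]
  [TopologicalSpace.SeparableSpace E]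

lemma exists_norming :
    ∃ φ : ℕ → (E →L[ℝ] ℝ), ∀ y : E, (∀ j, φ j y = 0) → y = 0 := by
  haveI : Nonempty E := ⟨0⟩
  obtain ⟨e, he⟩ := TopologicalSpace.exists_dense_seq E
  choose φ hφ1 hφ2 using fun j => exists_dual_vector'' ℝ (e j)
  refine ⟨φ, fun y hy => ?_⟩
  by_contra hy0
  have hpos : (0:ℝ) < ‖y‖ := norm_pos_iff.mpr hy0
  obtain ⟨j, hj⟩ := he.exists_dist_lt y (by positivity : (0:ℝ) < ‖y‖/3)
  have h2 : |φ j (e j - y)| ≤ ‖e j - y‖ := by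
    calc |φ j (e j - y)| ≤ ‖φ j‖ * ‖e j - y‖ := (φ j).le_opNorm _
    _ ≤ 1 * ‖e j - y‖ := by
        apply mul_le_mul_of_nonneg_right (hφ1 j) (norm_nonneg _)
    _ = ‖e j - y‖ := one_mul _
  have h4 : ‖e j - y‖ < ‖y‖/3 := by
    rw [norm_sub_rev, ← dist_eq_norm]
    exact hj
  have h5 : ‖y‖ - ‖y‖/3 ≤ ‖e j‖ := by
    have := norm_sub_norm_le y (e j)
    have h6 : ‖y - e j‖ < ‖y‖/3 := by rw [← dist_eq_norm]; exact hj
    linarith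
  have h6 : φ j y = φ j (e j) - φ j (e j - y) := by
    rw [map_sub]; ring
  rw [hy j, hφ2 j] at h6
  have h6' : (0:ℝ) = ‖e j‖ - φ j (e j - y) := by exact_mod_cast h6
  have h7 : φ j (e j - y) ≤ |φ j (e j - y)| := le_abs_self _
  linarith


lemma weak_compact_norm_compact
    (hschur : ∀ (x : ℕ → E) (y : E),
      (∀ φ : E →L[ℝ] ℝ, Tendsto (fun n => φ (x n)) atTop (𝓝 (φ y))) →
      Tendsto x atTop (𝓝 y))
    {K : Set (WeakSpace ℝ E)} (hK : IsCompact K) :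
    IsCompact (toWeakSpaceCLM ℝ E ⁻¹' K) := by
  obtain ⟨φ, hφ⟩ := exists_norming (E := E)
  have hseq : IsSeqCompact (toWeakSpaceCLM ℝ E ⁻¹' K) := by
    intro x hx
    haveI : CompactSpace K := isCompact_iff_compactSpace.mp hK
    set T : K → (ℕ → ℝ) := fun z => fun j => φ j ((toWeakSpace ℝ E).symm z.1) with hT
    have hTc : Continuous T := by
      refine continuous_pi fun j => ?_
      have h1 : Continuous fun z : WeakSpace ℝ E => φ j ((toWeakSpace ℝ E).symm z) :=
        WeakBilin.eval_continuous ((topDualPairing ℝ E).flip) (φ j)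
      exact h1.comp continuous_subtype_val
    have hTi : Function.Injective T := by
      intro z w hzw
      have hjj : ∀ j, φ j ((toWeakSpace ℝ E).symm z.1) = φ j ((toWeakSpace ℝ E).symm w.1) :=
        fun j => congrFun hzw j
      have h0 : ∀ j, φ j ((toWeakSpace ℝ E).symm z.1 - (toWeakSpace ℝ E).symm w.1) = 0 := by
        intro j; rw [map_sub, hjj j]; ring
      have hz := sub_eq_zero.mp (hφ _ h0)
      exact Subtype.ext ((toWeakSpace ℝ E).symm.injective hz)
    have hemb := hTc.isClosedEmbedding hTi
    haveI : TopologicalSpace.MetrizableSpace K := hemb.toIsEmbedding.metrizableSpace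
    set x' : ℕ → K := fun n => ⟨toWeakSpaceCLM ℝ E (x n), hx n⟩ with hx'
    obtain ⟨a, -, ψ, hψmono, hψtend⟩ :=
      IsCompact.tendsto_subseq (isCompact_univ : IsCompact (Set.univ : Set K))
        (fun n => Set.mem_univ (x' n))
    refine ⟨(toWeakSpace ℝ E).symm a.1, ?_, ψ, hψmono, ?_⟩
    · have : toWeakSpaceCLM ℝ E ((toWeakSpace ℝ E).symm a.1) = a.1 := by
        rw [toWeakSpaceCLM_eq_toWeakSpace]
        exact (toWeakSpace ℝ E).apply_symm_apply a.1
      show toWeakSpaceCLM ℝ E ((toWeakSpace ℝ E).symm a.1) ∈ K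
      rw [this]; exact a.2
    · apply hschur
      intro ψ'
      have hc : Continuous fun z : K => ψ' ((toWeakSpace ℝ E).symm z.1) :=
        (WeakBilin.eval_continuous ((topDualPairing ℝ E).flip) ψ').comp continuous_subtype_val
      have htt := (hc.tendsto a).comp hψtend
      exact htt
  exact hseq.isCompact



lemma hasCKN_weakSpace
    (hschur : ∀ (x : ℕ → E) (y : E),
      (∀ φ : E →L[ℝ] ℝ, Tendsto (fun n => φ (x n)) atTop (𝓝 (φ y))) →
      Tendsto x atTop (𝓝 y)) :
    HasCKN (WeakSpace ℝ E) := by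
  classical
  haveI : Nonempty E := ⟨0⟩
  obtain ⟨e, he⟩ := TopologicalSpace.exists_dense_seq E
  have key : ∀ z : WeakSpace ℝ E, toWeakSpaceCLM ℝ E ((toWeakSpace ℝ E).symm z) = z := by
    intro z
    rw [toWeakSpaceCLM_eq_toWeakSpace]
    exact (toWeakSpace ℝ E).apply_symm_apply z
  refine ⟨Set.range (fun S : Finset (ℕ × ℚ) =>
      {z : WeakSpace ℝ E | ∃ p ∈ S, dist ((toWeakSpace ℝ E).symm z) (e p.1) < (p.2 : ℝ)}),
      Set.countable_range _, ?_⟩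
  intro K U hK hU hKU
  set K' : Set E := toWeakSpaceCLM ℝ E ⁻¹' K with hK'def
  have hK' : IsCompact K' := weak_compact_norm_compact hschur hK
  set U' : Set E := toWeakSpaceCLM ℝ E ⁻¹' U with hU'def
  have hU' : IsOpen U' := hU.preimage (toWeakSpaceCLM ℝ E).continuous
  have hKU' : K' ⊆ U' := fun z hz => hKU hz
  set c : ℕ × ℚ → Set E := fun p =>
    if Metric.ball (e p.1) (p.2:ℝ) ⊆ U' then Metric.ball (e p.1) (p.2:ℝ) else ∅ with hc
  have hcopen : ∀ p, IsOpen (c p) := by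
    intro p
    by_cases h : Metric.ball (e p.1) (p.2:ℝ) ⊆ U'
    · rw [hc]; simp only [if_pos h]; exact Metric.isOpen_ball
    · rw [hc]; simp only [if_neg h]; exact isOpen_empty
  have hccover : K' ⊆ ⋃ p, c p := by
    intro k hk
    obtain ⟨ε, hε, hball⟩ := Metric.isOpen_iff.mp hU' k (hKU' hk)
    obtain ⟨q, hq1, hq2⟩ := exists_rat_btwn (by positivity : (0:ℝ) < ε/2)
    have hq0 : (0:ℝ) < q := hq1
    obtain ⟨n, hn⟩ := he.exists_dist_lt k hq0
    have hsub : Metric.ball (e n) (q:ℝ) ⊆ U' := by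
      intro w hw
      apply hball
      rw [Metric.mem_ball]
      have d1 : dist w (e n) < (q:ℝ) := Metric.mem_ball.mp hw
      have d2 : dist (e n) k < (q:ℝ) := by rw [dist_comm]; exact hn
      calc dist w k ≤ dist w (e n) + dist (e n) k := dist_triangle _ _ _
      _ < q + q := by linarith
      _ < ε := by linarith
    refine Set.mem_iUnion.mpr ⟨(n, q), ?_⟩
    rw [hc]; simp only [if_pos hsub]
    exact Metric.mem_ball.mpr hn
  obtain ⟨S, hS⟩ := hK'.elim_finite_subcover c hcopen hccover
  set S' : Finset (ℕ × ℚ) := S.filter (fun p => Metric.ball (e p.1) (p.2:ℝ) ⊆ U') with hS'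
  refine ⟨_, Set.mem_range_self S', ?_, ?_⟩
  · intro z hz
    have hzK' : (toWeakSpace ℝ E).symm z ∈ K' := by
      show toWeakSpaceCLM ℝ E ((toWeakSpace ℝ E).symm z) ∈ K
      rw [key z]; exact hz
    have := hS hzK'
    rw [Set.mem_iUnion₂] at this
    obtain ⟨p, hpS, hpz⟩ := this
    by_cases hcond : Metric.ball (e p.1) (p.2:ℝ) ⊆ U'
    · refine ⟨p, Finset.mem_filter.mpr ⟨hpS, hcond⟩, ?_⟩
      rw [hc] at hpz; simp only [if_pos hcond] at hpz
      exact Metric.mem_ball.mp hpz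
    · rw [hc] at hpz; simp only [if_neg hcond] at hpz; exact absurd hpz (Set.notMem_empty _)
  · rintro z ⟨p, hpS', hpz⟩
    have hcond := (Finset.mem_filter.mp hpS').2
    have hmem : (toWeakSpace ℝ E).symm z ∈ U' := hcond (Metric.mem_ball.mpr hpz)
    have : toWeakSpaceCLM ℝ E ((toWeakSpace ℝ E).symm z) ∈ U := hmem
    rw [key z] at this
    exact this

end Eside

section Cpside
variable {X : Type*} [TopologicalSpace X] [T35Space X]

lemma tycho (x : X) (V : Set X) (hV : IsOpen V) (hxV : x ∈ V) :
    ∃ f : X → ℝ, Continuous f ∧ f x = 1 ∧ (∀ y, y ∉ V → f y = 0) ∧ ∀ y, 0 ≤ f y ∧ f y ≤ 1 := by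
  obtain ⟨g, hgc, hgx, hgK⟩ :=
    CompletelyRegularSpace.completely_regular x Vᶜ hV.isClosed_compl (by simpa using hxV)
  refine ⟨fun y => 1 - (g y : ℝ), continuous_const.sub (continuous_subtype_val.comp hgc),
    ?_, ?_, ?_⟩
  · show 1 - ((g x : ℝ)) = 1
    rw [hgx]; norm_num
  · intro y hy
    have : g y = 1 := hgK (by simpa using hy)
    show 1 - ((g y : ℝ)) = 0
    rw [this]; norm_num
  · intro y
    have h1 := (g y).2.1
    have h2 := (g y).2.2
    constructor
    · show 0 ≤ 1 - ((g y : ℝ)); linarith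
    · show 1 - ((g y : ℝ)) ≤ 1; linarith


def goodf {X : Type*} [TopologicalSpace X] (f : X → ℝ) (N M : Set X) : Prop :=
  Continuous f ∧ (∀ z, 0 ≤ f z ∧ f z ≤ 1) ∧ (∀ z ∈ N, f z = 1) ∧ (∀ z ∈ M, f z = 0)

lemma not_hasCKN_Cp (hX : ¬ Countable X) : ¬ HasCKN (Cp X) := by
  classical
  rintro ⟨P, hPc, hP⟩
  have heval : ∀ x : X, Continuous fun g : Cp X => g.1 x := fun x =>
    (continuous_apply x).comp continuous_subtype_val
  -- countable network on X
  set Nfn : Set (Cp X) → Set X := fun p => {y | ∀ g ∈ p, (1:ℝ)/2 < g.1 y} with hNfn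
  have hnet : ∀ (x : X) (V : Set X), IsOpen V → x ∈ V →
      ∃ p ∈ P, x ∈ Nfn p ∧ Nfn p ⊆ V := by
    intro x V hV hxV
    obtain ⟨f, hfc, hfx, hfz, hfb⟩ := tycho x V hV hxV
    have hUo : IsOpen {g : Cp X | (1:ℝ)/2 < g.1 x} := isOpen_lt continuous_const (heval x)
    obtain ⟨p, hp, hfp, hpU⟩ := hP {(⟨f, hfc⟩ : Cp X)} _ isCompact_singleton hUo
      (by intro g hg
          replace hg : g = ⟨f, hfc⟩ := hg
          subst hg
          show (1:ℝ)/2 < f x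
          rw [hfx]; norm_num)
    refine ⟨p, hp, ?_, ?_⟩
    · intro g hg
      exact hpU hg
    · intro y hy
      by_contra hyV
      have h12 : (1:ℝ)/2 < f y := hy _ (hfp rfl)
      rw [hfz y hyV] at h12; norm_num at h12
  -- separating family
  set c : Set X × Set X → (X → ℝ) := fun q =>
    if h : ∃ f, goodf f q.1 q.2 then h.choose else fun _ => 0 with hcdef
  have hcprop : ∀ q, Continuous (c q) ∧ ∀ z, 0 ≤ c q z ∧ c q z ≤ 1 := by
    intro q
    by_cases h : ∃ f, goodf f q.1 q.2
    · rw [hcdef]; simp only [dif_pos h]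
      exact ⟨h.choose_spec.1, h.choose_spec.2.1⟩
    · rw [hcdef]; simp only [dif_neg h]
      exact ⟨continuous_const, fun z => by norm_num⟩
  set NN : Set (Set X) := Nfn '' P with hNN
  have hNNc : NN.Countable := hPc.image _
  set F : Set (X → ℝ) := insert (fun _ => (0:ℝ)) (c '' (NN ×ˢ NN)) with hF
  have hFc : F.Countable := ((hNNc.prod hNNc).image _).insert _
  obtain ⟨u, hu⟩ := hFc.exists_eq_range ⟨_, Set.mem_insert _ _⟩
  have huc : ∀ k, Continuous (u k) ∧ ∀ z, 0 ≤ u k z ∧ u k z ≤ 1 := by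
    intro k
    have hmem : u k ∈ F := hu ▸ Set.mem_range_self k
    rcases hmem with h0 | ⟨q, _, hq⟩
    · rw [h0]; exact ⟨continuous_const, fun z => by norm_num⟩
    · rw [← hq]; exact hcprop q
  have hsep : ∀ x y : X, x ≠ y → ∃ k, u k x = 1 ∧ u k y = 0 := by
    intro x y hxy
    obtain ⟨f₀, hf₀c, hf₀x, hf₀z, hf₀b⟩ := tycho x {y}ᶜ isOpen_compl_singleton (by simpa using hxy)
    have hf₀y : f₀ y = 0 := hf₀z y (by simp)
    obtain ⟨pN, hpN, hxN, hNs⟩ := hnet x (f₀ ⁻¹' Set.Ioi (2/3)) (isOpen_Ioi.preimage hf₀c)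
      (by simp only [Set.mem_preimage, Set.mem_Ioi, hf₀x]; norm_num)
    obtain ⟨pM, hpM, hyM, hMs⟩ := hnet y (f₀ ⁻¹' Set.Iio (1/3)) (isOpen_Iio.preimage hf₀c)
      (by simp only [Set.mem_preimage, Set.mem_Iio, hf₀y]; norm_num)
    have hgood : ∃ f, goodf f (Nfn pN) (Nfn pM) := by
      refine ⟨fun z => min 1 (max 0 (3 * f₀ z - 1)), ?_, ?_, ?_, ?_⟩
      · exact continuous_const.min (continuous_const.max
          ((continuous_const.mul hf₀c).sub continuous_const))
      · intro z
        exact ⟨le_min zero_le_one (le_max_left 0 _), min_le_left _ _⟩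
      · intro z hz
        have h23 : (2:ℝ)/3 < f₀ z := hNs hz
        have h1 : (1:ℝ) ≤ 3 * f₀ z - 1 := by linarith
        exact min_eq_left (le_trans h1 (le_max_right _ _))
      · intro z hz
        have h13 : f₀ z < 1/3 := hMs hz
        have h0 : 3 * f₀ z - 1 ≤ 0 := by linarith
        show min 1 (max 0 (3 * f₀ z - 1)) = 0
        rw [max_eq_left h0]
        exact min_eq_right zero_le_one
    have hmemF : c (Nfn pN, Nfn pM) ∈ F :=
      Set.mem_insert_of_mem _ (Set.mem_image_of_mem _
        (Set.mk_mem_prod (Set.mem_image_of_mem _ hpN) (Set.mem_image_of_mem _ hpM)))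
    rw [hu] at hmemF
    obtain ⟨k, hk⟩ := hmemF
    have hspec : goodf (c (Nfn pN, Nfn pM)) (Nfn pN) (Nfn pM) := by
      rw [hcdef]; simp only [dif_pos hgood]; exact hgood.choose_spec
    refine ⟨k, ?_, ?_⟩
    · rw [hk]; exact hspec.2.2.1 x hxN
    · rw [hk]; exact hspec.2.2.2 y hyM
  -- the bounded "metric"
  set w : ℕ → ℝ := fun k => 1/2/2^k with hw
  have hwsum : Summable w := summable_geometric_two' 1
  have hwpos : ∀ k, 0 < w k := fun k => by rw [hw]; positivity
  set d : X → X → ℝ := fun x y => ∑' k, w k * |u k x - u k y| with hd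
  have hterm_le : ∀ x y k, w k * |u k x - u k y| ≤ w k := by
    intro x y k
    obtain ⟨ha0, ha1⟩ := (huc k).2 x
    obtain ⟨hb0, hb1⟩ := (huc k).2 y
    have h1 : |u k x - u k y| ≤ 1 := abs_sub_le_iff.mpr ⟨by linarith, by linarith⟩
    exact mul_le_of_le_one_right (hwpos k).le h1
  have htermpos : ∀ x y k, 0 ≤ w k * |u k x - u k y| := fun x y k =>
    mul_nonneg (hwpos k).le (abs_nonneg _)
  have hdsum : ∀ x y, Summable fun k => w k * |u k x - u k y| := fun x y =>
    Summable.of_nonneg_of_le (htermpos x y) (hterm_le x y) hwsum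
  have hd0 : ∀ x y, 0 ≤ d x y := fun x y => tsum_nonneg (htermpos x y)
  have hd1 : ∀ x y, d x y ≤ 1 := by
    intro x y
    calc d x y ≤ ∑' k, w k := Summable.tsum_le_tsum (hterm_le x y) (hdsum x y) hwsum
    _ = 1 := tsum_geometric_two' 1
  have hdxx : ∀ x, d x x = 0 := by
    intro x
    rw [hd]
    simp
  have hdpos : ∀ x y, x ≠ y → 0 < d x y := by
    intro x y hxy
    obtain ⟨k, hk1, hk0⟩ := hsep x y hxy
    have hterm : w k * |u k x - u k y| = w k := by rw [hk1, hk0]; simp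
    have hle := Summable.le_tsum (hdsum x y) k (fun j _ => htermpos x y j)
    rw [hterm] at hle
    exact lt_of_lt_of_le (hwpos k) hle
  have hdc : ∀ x, Continuous fun y => d x y := by
    intro x
    apply continuous_tsum
    · intro k
      exact continuous_const.mul ((continuous_const.sub (huc k).1).abs)
    · exact hwsum
    · intro k y
      rw [Real.norm_eq_abs, abs_mul, abs_of_nonneg (hwpos k).le, abs_abs]
      exact hterm_le x y k
  -- the compact sequences
  set G : X → ℕ → Cp X := fun x n => ⟨fun y => hfun n (d x y), (hfun_cont n).comp (hdc x)⟩ with hG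
  set Cz : Cp X := ⟨fun _ => 0, continuous_const⟩ with hCz
  have hGt : ∀ x, Tendsto (G x) atTop (𝓝 Cz) := by
    intro x
    refine tendsto_subtype_rng.mpr ?_
    rw [tendsto_pi_nhds]
    intro y
    exact hfun_tendsto (hd0 x y)
  have hKcpt : ∀ x, IsCompact (insert Cz (Set.range (G x))) := fun x =>
    (hGt x).isCompact_insert_range
  have hUopen : ∀ y : X, IsOpen {g : Cp X | |g.1 y| < 1} := fun y =>
    isOpen_lt (heval y).abs continuous_const
  have hKsubU : ∀ x, insert Cz (Set.range (G x)) ⊆ {g : Cp X | |g.1 x| < 1} := by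
    intro x g hg
    rcases hg with rfl | ⟨n, rfl⟩
    · show |(0:ℝ)| < 1; norm_num
    · show |hfun n (d x x)| < 1
      rw [hdxx x, hfun_zero n]; norm_num
  have hex : ∀ x : X, ∃ p ∈ P, insert Cz (Set.range (G x)) ⊆ p ∧ p ⊆ {g : Cp X | |g.1 x| < 1} :=
    fun x => hP _ _ (hKcpt x) (hUopen x) (hKsubU x)
  choose Psel hP1 hP2 hP3 using hex
  have hpair : ∃ x y : X, x ≠ y ∧ Psel x = Psel y := by
    by_contra hcon
    push_neg at hcon
    have hinj : Function.Injective fun x => (⟨Psel x, hP1 x⟩ : P) := by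
      intro a b hab
      by_contra hne
      exact hcon a b hne (congrArg Subtype.val hab)
    haveI := hPc.to_subtype
    exact hX hinj.countable
  obtain ⟨x, y, hxy, hPP⟩ := hpair
  obtain ⟨n, hn1, hn2⟩ := exists_level (hdpos x y hxy) (hd1 x y)
  have hval : (G x n).1 y = 1 := hfun_one n (d x y) hn1 hn2
  have hmem : G x n ∈ Psel y := by
    rw [← hPP]
    exact hP2 x (Set.mem_insert_of_mem _ (Set.mem_range_self n))
  have hlt : |(G x n).1 y| < 1 := hP3 y hmem
  rw [hval] at hlt
  norm_num at hlt

end Cpside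


theorem stmt18 (E : Type*) [NormedAddCommGroup E] [NormedSpace ℝ E] [CompleteSpace E]
    [TopologicalSpace.SeparableSpace E]
    (hschur : ∀ (x : ℕ → E) (y : E),
      (∀ φ : E →L[ℝ] ℝ, Tendsto (fun n => φ (x n)) atTop (𝓝 (φ y))) →
      Tendsto x atTop (𝓝 y)) :
    ∀ (X : Type*) [TopologicalSpace X] [T35Space X], ¬ Countable X →
      IsEmpty (Cp X ≃ₜ WeakSpace ℝ E) := by
  intro X _ _ hX
  constructor
  intro h
  apply not_hasCKN_Cp hX
  obtain ⟨P, hPc, hPm⟩ := hasCKN_weakSpace hschur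
  refine ⟨(fun p => h ⁻¹' p) '' P, hPc.image _, ?_⟩
  intro K U hK hU hKU
  obtain ⟨p, hp, h1, h2⟩ := hPm (h '' K) (h '' U) (hK.image h.continuous)
    (h.isOpenMap U hU) (Set.image_mono hKU)
  refine ⟨h ⁻¹' p, Set.mem_image_of_mem _ hp, ?_, ?_⟩
  · intro z hz
    exact h1 ⟨z, hz, rfl⟩
  · intro z hz
    obtain ⟨w, hw, hwz⟩ := h2 hz
    rwa [← h.injective hwz]
end
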